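/- arXiv:1603.08752 — 13 statements merged into one kernel-verified Lean document; each statement's English description precedes it below -/
import Mathlib

section
/- Let α_1,...,α_n, β_1,...,β_n be complex numbers and define c_j = ∑_{ℓ=1}^n α_ℓ^j β_ℓ for j ≥ 0. Then every minor of order k > n of the infinite Hankel matrix [c_{i+j-2}]_{i,j} equals zero. -/
open Finset

/-- Any minor of order `k > n` of the Hankel matrix generated by
`c_j = ∑_{ℓ=1}^n α_ℓ^j β_ℓ` vanishes. -/
theorem hankel_minor_eq_zero (n k : ℕ) (hk : n < k)
    (α β : Fin n → ℂ) (c : ℕ → ℂ) (hc : ∀ j : ℕ, c j = ∑ ℓ, α ℓ ^ j * β ℓ)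
    (r s : Fin k → ℕ) (hr : StrictMono r) (hs : StrictMono s) :
    Matrix.det (Matrix.of fun i j : Fin k => c (r i + s j)) = 0 := by
  set A : Matrix (Fin k) (Fin n) ℂ := Matrix.of fun i ℓ => α ℓ ^ r i * β ℓ
  set B : Matrix (Fin n) (Fin k) ℂ := Matrix.of fun ℓ j => α ℓ ^ s j
  have hAB : (Matrix.of fun i j : Fin k => c (r i + s j)) = A * B := by
    ext i j
    simp [Matrix.mul_apply, A, B, hc, pow_add]
    exact Finset.sum_congr rfl fun x _ => by ring
  by_contra h
  have hu : IsUnit (Matrix.of fun i j : Fin k => c (r i + s j)) := by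
    apply (Matrix.isUnit_iff_isUnit_det _).2
    exact isUnit_iff_ne_zero.2 h
  have hrank := Matrix.rank_of_isUnit _ hu
  rw [hAB] at hrank
  have h1 : (A * B).rank ≤ A.rank := Matrix.rank_mul_le_left A B
  have h2 : A.rank ≤ Fintype.card (Fin n) := Matrix.rank_le_card_width A
  simp [hrank] at h1 h2
  omega
end

section
/- For a sequence c_0, c_1, ..., the Hankel determinants of three successive orders satisfy the Sylvester identity: H_{k-2}·H_k = H_{k-1}·M - L^2, where M is the determinant of the (k-1)×(k-1) matrix obtained from the Hankel matrix of order k-1 by replacing its last row and last column indices appropriately (entries c_{i+j-2} for i,j in {1,...,k-2} bordered by c_{k-1+i-1} and c_{k-1+j-1} with corner c_{2k-2}), and L is the analogous determinant with corner c_{2k-3}. -/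
open Finset

namespace HankelSylvester

open Matrix Polynomial

variable {n : ℕ}

/-- The index `n` inside `Fin (n+2)`. -/
def pmid (n : ℕ) : Fin (n + 2) := ⟨n, by omega⟩

/-- Desnanot–Jacobi identity, invertible case. -/
lemma dj_unit (A : Matrix (Fin (n + 2)) (Fin (n + 2)) ℂ) (hA : A.det ≠ 0) :
    A.det * (A.submatrix (Fin.castAdd 2) (Fin.castAdd 2)).det =
      (A.submatrix (pmid n).succAbove (pmid n).succAbove).det *
        (A.submatrix Fin.castSucc Fin.castSucc).det -
      (A.submatrix Fin.castSucc (pmid n).succAbove).det *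
        (A.submatrix (pmid n).succAbove Fin.castSucc).det := by
  classical
  set e : Fin n ⊕ Fin 2 ≃ Fin (n + 2) := finSumFinEquiv with he
  set A' : Matrix (Fin n ⊕ Fin 2) (Fin n ⊕ Fin 2) ℂ := A.submatrix e e with hA'
  set B' : Matrix (Fin n ⊕ Fin 2) (Fin n ⊕ Fin 2) ℂ := adjugate A' with hB'
  have hAB : A' * B' = A.det • 1 := by
    rw [hB', mul_adjugate, hA', det_submatrix_equiv_self]
  set C' : Matrix (Fin n ⊕ Fin 2) (Fin n ⊕ Fin 2) ℂ :=
    fun i j => Sum.casesOn j (fun j0 => if i = Sum.inl j0 then 1 else 0)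
      (fun j0 => B' i (Sum.inr j0)) with hC'
  have hmul : A' * C' =
      fromBlocks (A'.submatrix Sum.inl Sum.inl) 0 (A'.submatrix Sum.inr Sum.inl)
        (A.det • 1) := by
    ext i j
    rcases j with j | j
    · have : (A' * C') i (Sum.inl j) = A' i (Sum.inl j) := by
        rw [mul_apply]
        simp [hC', mul_ite]
      rcases i with i | i <;> simpa [fromBlocks] using this
    · have : (A' * C') i (Sum.inr j) = (A' * B') i (Sum.inr j) := by
        rw [mul_apply, mul_apply]
      rw [this, hAB]
      rcases i with i | i <;> simp [fromBlocks, one_apply]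
  have hCblocks : C' = fromBlocks 1 (B'.submatrix Sum.inl Sum.inr) 0
      (B'.submatrix Sum.inr Sum.inr) := by
    ext i j
    rcases i with i | i <;> rcases j with j | j <;>
      simp [hC', fromBlocks, one_apply]
  have hdetmul : A.det * C'.det = (A'.submatrix Sum.inl Sum.inl).det * A.det ^ 2 := by
    have h1 : (A' * C').det = A'.det * C'.det := det_mul _ _
    rw [hmul] at h1
    rw [det_fromBlocks_zero₁₂] at h1
    have h2 : (A.det • (1 : Matrix (Fin 2) (Fin 2) ℂ)).det = A.det ^ 2 := by
      rw [det_smul, det_one, mul_one, Fintype.card_fin]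
    have h3 : A'.det = A.det := by rw [hA', det_submatrix_equiv_self]
    rw [h2, h3] at h1
    exact h1.symm
  have hdetC : C'.det = (B'.submatrix Sum.inr Sum.inr).det := by
    rw [hCblocks, det_fromBlocks_zero₂₁, det_one, one_mul]
  have hcancel : (B'.submatrix Sum.inr Sum.inr).det =
      A.det * (A'.submatrix Sum.inl Sum.inl).det := by
    apply mul_left_cancel₀ hA
    rw [← hdetC, hdetmul]; ring
  -- Now identify the pieces.
  have hBe : B' = (adjugate A).submatrix e e := by
    rw [hB', hA', adjugate_submatrix_equiv_self]
  have he0 : e (Sum.inr 0) = pmid n := by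
    rw [he]
    apply Fin.ext
    simp [finSumFinEquiv, pmid]
  have he1 : e (Sum.inr 1) = Fin.last (n + 1) := by
    rw [he]
    apply Fin.ext
    simp [finSumFinEquiv, Fin.last]
  have hadj : ∀ i j : Fin (n + 2), adjugate A i j =
      (-1) ^ ((j : ℕ) + (i : ℕ)) * det (A.submatrix j.succAbove i.succAbove) :=
    fun i j => adjugate_fin_succ_eq_det_submatrix A i j
  have hdet2 : (B'.submatrix Sum.inr Sum.inr).det =
      (A.submatrix (pmid n).succAbove (pmid n).succAbove).det *
        (A.submatrix Fin.castSucc Fin.castSucc).det -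
      (A.submatrix Fin.castSucc (pmid n).succAbove).det *
        (A.submatrix (pmid n).succAbove Fin.castSucc).det := by
    rw [det_fin_two]
    simp only [submatrix_apply, hBe, submatrix_apply, he0, he1]
    rw [hadj, hadj, hadj, hadj]
    have hp : ((pmid n : Fin (n+2)) : ℕ) = n := rfl
    have hq : ((Fin.last (n+1) : Fin (n+2)) : ℕ) = n + 1 := rfl
    have hsl : (Fin.last (n+1)).succAbove = Fin.castSucc := Fin.succAbove_last
    rw [hp, hq, hsl]
    have e1 : ((-1 : ℂ)) ^ (n + n) = 1 := Even.neg_one_pow ⟨n, rfl⟩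
    have e2 : ((-1 : ℂ)) ^ (n + 1 + (n + 1)) = 1 := Even.neg_one_pow ⟨n + 1, rfl⟩
    have e3 : ((-1 : ℂ)) ^ (n + 1 + n) = -1 := Odd.neg_one_pow ⟨n, by ring⟩
    have e4 : ((-1 : ℂ)) ^ (n + (n + 1)) = -1 := Odd.neg_one_pow ⟨n, by ring⟩
    rw [e1, e2, e3, e4]
    ring
  have hsub : (A'.submatrix Sum.inl Sum.inl) = A.submatrix (Fin.castAdd 2) (Fin.castAdd 2) := by
    ext i j
    rw [hA']
    simp [he, finSumFinEquiv]
  rw [hdet2, hsub] at hcancel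
  rw [← hcancel]

/-- Desnanot–Jacobi identity, general case, via a genericity argument. -/
lemma dj (A : Matrix (Fin (n + 2)) (Fin (n + 2)) ℂ) :
    A.det * (A.submatrix (Fin.castAdd 2) (Fin.castAdd 2)).det =
      (A.submatrix (pmid n).succAbove (pmid n).succAbove).det *
        (A.submatrix Fin.castSucc Fin.castSucc).det -
      (A.submatrix Fin.castSucc (pmid n).succAbove).det *
        (A.submatrix (pmid n).succAbove Fin.castSucc).det := by
  classical
  set AP : Matrix (Fin (n + 2)) (Fin (n + 2)) ℂ[X] := charmatrix (-A) with hAP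
  have hmapt : ∀ t : ℂ, ∀ m : ℕ, ∀ f : Fin m → Fin (n + 2), ∀ g : Fin m → Fin (n + 2),
      eval t ((AP.submatrix f g).det) =
        (((AP.map (evalRingHom t)).submatrix f g)).det := by
    intro t m f g
    exact RingHom.map_det (evalRingHom t) (AP.submatrix f g)
  have hmap0 : ∀ t : ℂ, eval t AP.det = (AP.map (evalRingHom t)).det := by
    intro t
    exact RingHom.map_det (evalRingHom t) AP
  have hden : AP.det ≠ 0 := by
    have : AP.det = (-A).charpoly := rfl
    rw [this]
    exact (Matrix.charpoly_monic _).ne_zero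
  have hev : ∀ t : ℂ, AP.map (evalRingHom t) = Matrix.diagonal (fun _ => t) + A := by
    intro t
    ext i j
    by_cases h : i = j
    · subst h
      simp [hAP, charmatrix_apply_eq, Matrix.diagonal]
    · simp [hAP, charmatrix_apply_ne _ _ _ h, Matrix.diagonal, h]
  have key : (AP.det * ((AP.submatrix (Fin.castAdd 2) (Fin.castAdd 2)).det)) =
      ((AP.submatrix (pmid n).succAbove (pmid n).succAbove).det *
        (AP.submatrix Fin.castSucc Fin.castSucc).det -
      (AP.submatrix Fin.castSucc (pmid n).succAbove).det *
        (AP.submatrix (pmid n).succAbove Fin.castSucc).det) := by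
    apply eq_of_infinite_eval_eq
    apply Set.Infinite.mono (s := {t : ℂ | ¬ IsRoot AP.det t})
    swap
    · exact Set.Finite.infinite_compl (Polynomial.finite_setOf_isRoot hden)
    intro t ht
    simp only [Set.mem_setOf_eq, IsRoot] at ht ⊢
    have hdet : (AP.map (evalRingHom t)).det ≠ 0 := by
      rw [← hmap0 t]
      exact ht
    have := dj_unit (AP.map (evalRingHom t)) hdet
    simp only [eval_mul, eval_sub]
    rw [hmapt t, hmapt t, hmapt t, hmapt t, hmapt t, hmap0 t]
    exact this
  have h0 := congrArg (eval 0) key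
  simp only [eval_mul, eval_sub] at h0
  rw [hmapt 0, hmapt 0, hmapt 0, hmapt 0, hmapt 0, hmap0 0] at h0
  rw [hev 0] at h0
  simpa using h0


lemma succAbove_pmid_coe (i : Fin (n + 1)) :
    (((pmid n).succAbove i : Fin (n + 2)) : ℕ) =
      if (i : ℕ) < n then (i : ℕ) else n + 1 := by
  rw [Fin.succAbove]
  by_cases h : i.castSucc < pmid n
  · have hn : (i : ℕ) < n := by simpa [Fin.lt_def, pmid] using h
    rw [if_pos h, if_pos hn]
    simp
  · have hn : ¬ (i : ℕ) < n := by simpa [Fin.lt_def, pmid] using h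
    have hi : (i : ℕ) = n := by omega
    rw [if_neg h, if_neg hn]
    simp [Fin.val_succ, hi]

end HankelSylvester

/-- The `k`-th Hankel determinant of the sequence `{c_j}`. -/
noncomputable def Hdet (c : ℕ → ℂ) (k : ℕ) : ℂ :=
  Matrix.det (Matrix.of fun i j : Fin k => c ((i : ℕ) + (j : ℕ)))

/-- Sylvester's determinantal identity for Hankel determinants of three
successive orders.  Here the rows/columns of `M` are indexed by
`{0,…,k-3,k-1}` and those of `L` by `{0,…,k-3,k-1}` (rows) and
`{0,…,k-3,k-2}` (columns). -/
theorem hankel_sylvester (c : ℕ → ℂ) (k : ℕ) (hk : 2 ≤ k) :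
    Hdet c (k - 2) * Hdet c k =
      Hdet c (k - 1) *
        Matrix.det (Matrix.of fun i j : Fin (k - 1) =>
          c ((if (i : ℕ) < k - 2 then (i : ℕ) else k - 1) +
             (if (j : ℕ) < k - 2 then (j : ℕ) else k - 1))) -
      (Matrix.det (Matrix.of fun i j : Fin (k - 1) =>
          c ((if (i : ℕ) < k - 2 then (i : ℕ) else k - 1) +
             (if (j : ℕ) < k - 2 then (j : ℕ) else k - 2)))) ^ 2 := by
  classical
  obtain ⟨n, rfl⟩ : ∃ n, k = n + 2 := ⟨k - 2, by omega⟩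
  open HankelSylvester in
  set A : Matrix (Fin (n + 2)) (Fin (n + 2)) ℂ :=
    Matrix.of (fun i j : Fin (n + 2) => c ((i : ℕ) + (j : ℕ))) with hA
  have h2 : n + 2 - 2 = n := by omega
  have h1 : n + 2 - 1 = n + 1 := by omega
  have hDJ := HankelSylvester.dj A
  -- identify all six determinants
  have e0 : Hdet c (n + 2 - 2) =
      (A.submatrix (Fin.castAdd 2) (Fin.castAdd 2)).det := by
    rw [h2]
    unfold Hdet
    congr 1
  have e1 : Hdet c (n + 2) = A.det := rfl
  have e2 : Hdet c (n + 2 - 1) =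
      (A.submatrix Fin.castSucc Fin.castSucc).det := by
    rw [h1]
    unfold Hdet
    congr 1
  have e3 : Matrix.det (Matrix.of fun i j : Fin (n + 2 - 1) =>
        c ((if (i : ℕ) < n + 2 - 2 then (i : ℕ) else n + 2 - 1) +
           (if (j : ℕ) < n + 2 - 2 then (j : ℕ) else n + 2 - 1))) =
      (A.submatrix (HankelSylvester.pmid n).succAbove
        (HankelSylvester.pmid n).succAbove).det := by
    rw [h1, h2]
    congr 1
    ext i j
    simp only [Matrix.of_apply, Matrix.submatrix_apply, hA,
      HankelSylvester.succAbove_pmid_coe]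
  have e4 : Matrix.det (Matrix.of fun i j : Fin (n + 2 - 1) =>
        c ((if (i : ℕ) < n + 2 - 2 then (i : ℕ) else n + 2 - 1) +
           (if (j : ℕ) < n + 2 - 2 then (j : ℕ) else n + 2 - 2))) =
      (A.submatrix (HankelSylvester.pmid n).succAbove Fin.castSucc).det := by
    rw [h1, h2]
    congr 1
    ext i j
    simp only [Matrix.of_apply, Matrix.submatrix_apply, hA,
      HankelSylvester.succAbove_pmid_coe, Fin.coe_castSucc]
    congr 1
    have hj : (j : ℕ) < n + 1 := j.isLt
    by_cases h : (j : ℕ) < n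
    · rw [if_pos h]
    · rw [if_neg h]
      omega
  have e5 : (A.submatrix Fin.castSucc (HankelSylvester.pmid n).succAbove).det =
      (A.submatrix (HankelSylvester.pmid n).succAbove Fin.castSucc).det := by
    rw [← Matrix.det_transpose]
    congr 1
    ext i j
    simp [hA, Nat.add_comm]
  rw [e5] at hDJ
  rw [e0, e1, e2, e3, e4]
  linear_combination hDJ
end

section
/- Let {c_j} be a sequence of complex numbers, and define the k-th Hankel polynomial 𝓗_k(x) as the determinant of the (k+1)×(k+1) matrix whose first k rows are (c_{i-1}, c_i, ..., c_{i+k-1}) for i = 1,...,k and whose last row is (1, x, x^2, ..., x^k). Write 𝓗_k(x) = H_k x^k + h_{k,1} x^{k-1} + ... . Then the Jacobi–Joachimsthal identity holds: H_k^2 · 𝓗_{k-2}(x) + (H_k h_{k-1,1} − H_{k-1} h_{k,1} − H_k H_{k-1} x) · 𝓗_{k-1}(x) + H_{k-1}^2 · 𝓗_k(x) ≡ 0 as polynomials in x. -/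
open Finset Polynomial

namespace JJaux
variable {R : Type*} [CommRing R] {S : Type*} [CommRing S]

noncomputable def HdetR (c : ℕ → R) (k : ℕ) : R :=
  Matrix.det (Matrix.of fun i j : Fin k => c ((i : ℕ) + (j : ℕ)))

noncomputable def HpolyR (c : ℕ → R) (k : ℕ) : Polynomial R :=
  Matrix.det (Matrix.of fun i j : Fin (k + 1) =>
    if (i : ℕ) < k then Polynomial.C (c ((i : ℕ) + (j : ℕ))) else Polynomial.X ^ (j : ℕ))

noncomputable def dd (c : ℕ → R) (m : ℕ) (j : Fin (m+1)) : R :=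
  (-1)^(m+(j:ℕ)) * Matrix.det (Matrix.of fun p q : Fin m => c ((p:ℕ) + (j.succAbove q : ℕ)))

noncomputable def bd (c : ℕ → R) (m i : ℕ) : R :=
  Matrix.det (Matrix.of fun p q : Fin (m+1) => if (p:ℕ) < m then c ((p:ℕ)+(q:ℕ)) else c (i+(q:ℕ)))

lemma det_lastRow (c : ℕ → R) (m : ℕ) (v : Fin (m+1) → R) :
    Matrix.det (Matrix.of fun p q : Fin (m+1) => if (p:ℕ) < m then c ((p:ℕ)+(q:ℕ)) else v q)
      = ∑ j : Fin (m+1), v j *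
          ((-1)^(m+(j:ℕ)) * Matrix.det (Matrix.of fun p q : Fin m => c ((p:ℕ) + (j.succAbove q : ℕ)))) := by
  rw [Matrix.det_succ_row _ (Fin.last m)]
  refine Finset.sum_congr rfl fun j _ => ?_
  have h1 : ((Fin.last m : Fin (m+1)) : ℕ) = m := rfl
  have h2 : ¬ ((Fin.last m : Fin (m+1)) : ℕ) < m := by simp [h1]
  have hA : (Matrix.of fun p q : Fin (m+1) => if (p:ℕ) < m then c ((p:ℕ)+(q:ℕ)) else v q)
      (Fin.last m) j = v j := by simp [h2]
  have hdet : ((Matrix.of fun p q : Fin (m+1) => if (p:ℕ) < m then c ((p:ℕ)+(q:ℕ)) else v q).submatrix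
      (Fin.last m).succAbove j.succAbove) = Matrix.of fun p q : Fin m => c ((p:ℕ) + (j.succAbove q : ℕ)) := by
    ext p q
    simp [Fin.succAbove_last, Matrix.submatrix_apply, p.is_lt]
  rw [hA, hdet, h1]
  ring

lemma bd_rep (c : ℕ → R) (m i : ℕ) :
    bd c m i = ∑ j : Fin (m+1), dd c m j * c (i+(j:ℕ)) := by
  rw [bd, det_lastRow]
  exact Finset.sum_congr rfl fun j _ => by rw [dd]; ring

lemma hpoly_rep (c : ℕ → R) (m : ℕ) :
    HpolyR c m = ∑ j : Fin (m+1), Polynomial.C (dd c m j) * Polynomial.X ^ (j:ℕ) := by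
  have := det_lastRow (fun n => Polynomial.C (c n)) m (fun j => Polynomial.X ^ (j:ℕ))
  rw [HpolyR]
  rw [show (Matrix.of fun i j : Fin (m + 1) =>
      if (i : ℕ) < m then Polynomial.C (c ((i : ℕ) + (j : ℕ))) else Polynomial.X ^ (j : ℕ))
      = (Matrix.of fun p q : Fin (m+1) => if (p:ℕ) < m then (fun n => Polynomial.C (c n)) ((p:ℕ)+(q:ℕ))
          else Polynomial.X ^ (q:ℕ)) from rfl, this]
  refine Finset.sum_congr rfl fun j _ => ?_
  rw [dd]
  have : (Matrix.of fun p q : Fin m => Polynomial.C (c ((p:ℕ) + (j.succAbove q : ℕ))))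
      = (Matrix.of fun p q : Fin m => c ((p:ℕ) + (j.succAbove q : ℕ))).map Polynomial.C := by
    ext p q; simp
  rw [this, ← RingHom.mapMatrix_apply, ← RingHom.map_det]
  push_cast [map_mul, map_pow, map_neg, map_one]
  ring

lemma coeff_hpoly (c : ℕ → R) (m n : ℕ) :
    (HpolyR c m).coeff n = if h : n < m+1 then dd c m ⟨n, h⟩ else 0 := by
  rw [hpoly_rep]
  rw [Polynomial.finset_sum_coeff]
  simp only [Polynomial.coeff_C_mul, Polynomial.coeff_X_pow]
  by_cases h : n < m+1
  · rw [dif_pos h, Finset.sum_eq_single (⟨n, h⟩ : Fin (m+1))]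
    · simp
    · intro j _ hj
      have : ¬ n = (j:ℕ) := fun hh => hj (by ext; simp [hh.symm])
      simp [this]
    · simp
  · rw [dif_neg h]
    refine Finset.sum_eq_zero fun j _ => ?_
    have : ¬ n = (j:ℕ) := by omega
    simp [this]

lemma dd_last (c : ℕ → R) (m : ℕ) : dd c m (Fin.last m) = HdetR c m := by
  rw [dd, HdetR]
  have h : ∀ q : Fin m, ((Fin.last m).succAbove q : ℕ) = (q : ℕ) := by
    intro q; rw [Fin.succAbove_last]; simp
  rw [show (Matrix.of fun p q : Fin m => c ((p:ℕ) + ((Fin.last m).succAbove q : ℕ)))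
      = Matrix.of fun p q : Fin m => c ((p:ℕ) + (q:ℕ)) by ext p q; rw [Matrix.of_apply, Matrix.of_apply, h]]
  have : ((Fin.last m : Fin (m+1)) : ℕ) = m := rfl
  rw [this, ← two_mul]
  simp [pow_mul]

lemma coeff_hpoly_self (c : ℕ → R) (m : ℕ) : (HpolyR c m).coeff m = HdetR c m := by
  rw [coeff_hpoly, dif_pos (Nat.lt_succ_self m)]
  exact dd_last c m

lemma coeff_hpoly_zero (c : ℕ → R) (m n : ℕ) (h : m < n) : (HpolyR c m).coeff n = 0 := by
  rw [coeff_hpoly, dif_neg (by omega)]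

lemma bd_lt (c : ℕ → R) (m i : ℕ) (h : i < m) : bd c m i = 0 := by
  rw [bd]
  refine Matrix.det_zero_of_row_eq (i := (⟨i, by omega⟩ : Fin (m+1))) (j := Fin.last m) ?_ ?_
  · intro hh
    have : i = m := by simpa [Fin.ext_iff] using hh
    omega
  · funext q
    have h1 : ((Fin.last m : Fin (m+1)) : ℕ) = m := rfl
    simp [h, h1]

lemma bd_self (c : ℕ → R) (m : ℕ) : bd c m m = HdetR c (m+1) := by
  rw [bd, HdetR]
  congr 1
  ext p q
  by_cases h : (p:ℕ) < m
  · simp [h]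
  · have : (p:ℕ) = m := by omega
    simp [h, this]

lemma map_HdetR (f : R →+* S) (c : ℕ → R) (m : ℕ) :
    f (HdetR c m) = HdetR (fun n => f (c n)) m := by
  rw [HdetR, HdetR, RingHom.map_det]
  rfl

lemma map_HpolyR (f : R →+* S) (c : ℕ → R) (m : ℕ) :
    (HpolyR c m).map f = HpolyR (fun n => f (c n)) m := by
  rw [HpolyR, HpolyR, ← Polynomial.coe_mapRingHom, RingHom.map_det]
  congr 1
  ext i j
  by_cases h : (i:ℕ) < m <;> simp [h]

-- sum helper lemmas
lemma sum_coeff_full (c : ℕ → R) (l i : ℕ) :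
    ∑ j : Fin (l+1), c (i+(j:ℕ)) * (HpolyR c l).coeff (j:ℕ) = bd c l i := by
  rw [bd_rep]
  refine Finset.sum_congr rfl fun j _ => ?_
  rw [coeff_hpoly, dif_pos j.is_lt]
  rw [show (⟨(j:ℕ), j.is_lt⟩ : Fin (l+1)) = j from Fin.eta j j.is_lt]
  ring

lemma sum_coeff_one (c : ℕ → R) (l i : ℕ) :
    ∑ j : Fin (l+1), c (i+(j:ℕ)) * (HpolyR c (l+1)).coeff (j:ℕ)
      = bd c (l+1) i - HdetR c (l+1) * c (i+(l+1)) := by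
  have h := bd_rep c (l+1) i
  rw [Fin.sum_univ_castSucc] at h
  have hlast : ((Fin.last (l+1) : Fin (l+2)) : ℕ) = l+1 := rfl
  rw [dd_last, hlast] at h
  have : ∑ j : Fin (l+1), c (i+(j:ℕ)) * (HpolyR c (l+1)).coeff (j:ℕ)
      = ∑ j : Fin (l+1), dd c (l+1) j.castSucc * c (i+((j.castSucc : Fin (l+2)):ℕ)) := by
    refine Finset.sum_congr rfl fun j _ => ?_
    rw [coeff_hpoly, dif_pos (by omega : (j:ℕ) < l+2)]
    rw [show (⟨(j:ℕ), by omega⟩ : Fin (l+2)) = j.castSucc from by ext; simp]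
    rw [Fin.coe_castSucc]
    ring
  rw [this]
  rw [h]
  ring

lemma sum_coeff_two (c : ℕ → R) (l i : ℕ) :
    ∑ j : Fin (l+1), c (i+(j:ℕ)) * (HpolyR c (l+2)).coeff (j:ℕ)
      = bd c (l+2) i - (HpolyR c (l+2)).coeff (l+1) * c (i+(l+1))
        - HdetR c (l+2) * c (i+(l+2)) := by
  have h := bd_rep c (l+2) i
  rw [Fin.sum_univ_castSucc, Fin.sum_univ_castSucc] at h
  have hlast : ((Fin.last (l+2) : Fin (l+3)) : ℕ) = l+2 := rfl
  have hcl : (((Fin.last (l+1)).castSucc : Fin (l+3)) : ℕ) = l+1 := rfl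
  rw [dd_last, hlast, hcl] at h
  have hd2 : dd c (l+2) ((Fin.last (l+1)).castSucc) = (HpolyR c (l+2)).coeff (l+1) := by
    rw [coeff_hpoly, dif_pos (by omega : l+1 < l+3)]
    congr 1
  rw [hd2] at h
  have : ∑ j : Fin (l+1), c (i+(j:ℕ)) * (HpolyR c (l+2)).coeff (j:ℕ)
      = ∑ j : Fin (l+1), dd c (l+2) (j.castSucc.castSucc) * c (i+((j.castSucc.castSucc : Fin (l+3)):ℕ)) := by
    refine Finset.sum_congr rfl fun j _ => ?_
    rw [coeff_hpoly, dif_pos (by omega : (j:ℕ) < l+3)]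
    rw [show (⟨(j:ℕ), by omega⟩ : Fin (l+3)) = j.castSucc.castSucc from by ext; simp]
    rw [show ((j.castSucc.castSucc : Fin (l+3)) : ℕ) = (j:ℕ) from by simp]
    ring
  rw [this, h]
  ring

lemma sum_coeff_X (c : ℕ → R) (l i : ℕ) :
    ∑ j : Fin (l+1), c (i+(j:ℕ)) * (Polynomial.X * HpolyR c (l+1)).coeff (j:ℕ)
      = bd c (l+1) (i+1) - (HpolyR c (l+1)).coeff l * c (i+1+l)
        - HdetR c (l+1) * c (i+1+(l+1)) := by
  have h := bd_rep c (l+1) (i+1)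
  rw [Fin.sum_univ_castSucc] at h
  have hlast : ((Fin.last (l+1) : Fin (l+2)) : ℕ) = l+1 := rfl
  rw [dd_last, hlast] at h
  rw [Fin.sum_univ_succ]
  have h0 : (Polynomial.X * HpolyR c (l+1)).coeff ((0 : Fin (l+1)):ℕ) = 0 := by
    simp [Polynomial.mul_coeff_zero]
  rw [h0, mul_zero, zero_add]
  rw [Fin.sum_univ_castSucc] at h
  have hcl : (((Fin.last l).castSucc : Fin (l+2)) : ℕ) = l := rfl
  rw [hcl] at h
  have hd2 : dd c (l+1) ((Fin.last l).castSucc) = (HpolyR c (l+1)).coeff l := by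
    rw [coeff_hpoly, dif_pos (by omega : l < l+2)]
    congr 1
  rw [hd2] at h
  have : ∑ j : Fin l, c (i+((j.succ : Fin (l+1)):ℕ)) * (Polynomial.X * HpolyR c (l+1)).coeff ((j.succ : Fin (l+1)):ℕ)
      = ∑ j : Fin l, dd c (l+1) (j.castSucc.castSucc) * c (i+1+((j.castSucc.castSucc : Fin (l+2)):ℕ)) := by
    refine Finset.sum_congr rfl fun j _ => ?_
    rw [Fin.val_succ, Polynomial.coeff_X_mul]
    rw [coeff_hpoly, dif_pos (by omega : (j:ℕ) < l+2)]
    rw [show (⟨(j:ℕ), by omega⟩ : Fin (l+2)) = j.castSucc.castSucc from by ext; simp]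
    rw [show ((j.castSucc.castSucc : Fin (l+2)) : ℕ) = (j:ℕ) from by simp]
    rw [show i + ((j:ℕ)+1) = i+1+(j:ℕ) from by omega]
    ring
  rw [this, h]
  ring


lemma main_field {K : Type*} [Field K] (c : ℕ → K) (l : ℕ)
    (h1 : HdetR c (l+1) ≠ 0) :
    Polynomial.C (HdetR c (l+2)) ^ 2 * HpolyR c l +
      (Polynomial.C (HdetR c (l+2) * (HpolyR c (l+1)).coeff l) -
       Polynomial.C (HdetR c (l+1) * (HpolyR c (l+2)).coeff (l+1)) -
       Polynomial.C (HdetR c (l+2) * HdetR c (l+1)) * Polynomial.X) * HpolyR c (l+1) +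
      Polynomial.C (HdetR c (l+1)) ^ 2 * HpolyR c (l+2) = 0 := by
  set h₁ := (HpolyR c (l+1)).coeff l with hh1
  set h₂ := (HpolyR c (l+2)).coeff (l+1) with hh2
  set H1 := HdetR c (l+1) with hH1
  set H2 := HdetR c (l+2) with hH2
  set F := Polynomial.C H2 ^ 2 * HpolyR c l +
      (Polynomial.C (H2 * h₁) - Polynomial.C (H1 * h₂) -
        Polynomial.C (H2 * H1) * Polynomial.X) * HpolyR c (l+1) +
      Polynomial.C H1 ^ 2 * HpolyR c (l+2) with hFdef
  have hco : ∀ n : ℕ, F.coeff n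
      = H2^2 * (HpolyR c l).coeff n + (H2*h₁) * (HpolyR c (l+1)).coeff n
        - (H1*h₂) * (HpolyR c (l+1)).coeff n
        - (H2*H1) * (Polynomial.X * HpolyR c (l+1)).coeff n
        + H1^2 * (HpolyR c (l+2)).coeff n := by
    intro n
    rw [hFdef]
    rw [show Polynomial.C H2 ^ 2 * HpolyR c l +
      (Polynomial.C (H2 * h₁) - Polynomial.C (H1 * h₂) -
        Polynomial.C (H2 * H1) * Polynomial.X) * HpolyR c (l+1) +
      Polynomial.C H1 ^ 2 * HpolyR c (l+2)
      = Polynomial.C (H2^2) * HpolyR c l + Polynomial.C (H2*h₁) * HpolyR c (l+1)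
        - Polynomial.C (H1*h₂) * HpolyR c (l+1)
        - Polynomial.C (H2*H1) * (Polynomial.X * HpolyR c (l+1))
        + Polynomial.C (H1^2) * HpolyR c (l+2) from by rw [map_pow, map_pow]; ring]
    simp only [Polynomial.coeff_add, Polynomial.coeff_sub, Polynomial.coeff_C_mul]
  have hlow : ∀ i : Fin (l+1), ∑ j : Fin (l+1), c ((i:ℕ)+(j:ℕ)) * F.coeff (j:ℕ) = 0 := by
    intro i
    have split : ∑ j : Fin (l+1), c ((i:ℕ)+(j:ℕ)) * F.coeff (j:ℕ)
        = H2^2 * (∑ j : Fin (l+1), c ((i:ℕ)+(j:ℕ)) * (HpolyR c l).coeff (j:ℕ))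
        + (H2*h₁) * (∑ j : Fin (l+1), c ((i:ℕ)+(j:ℕ)) * (HpolyR c (l+1)).coeff (j:ℕ))
        - (H1*h₂) * (∑ j : Fin (l+1), c ((i:ℕ)+(j:ℕ)) * (HpolyR c (l+1)).coeff (j:ℕ))
        - (H2*H1) * (∑ j : Fin (l+1), c ((i:ℕ)+(j:ℕ)) * (Polynomial.X * HpolyR c (l+1)).coeff (j:ℕ))
        + H1^2 * (∑ j : Fin (l+1), c ((i:ℕ)+(j:ℕ)) * (HpolyR c (l+2)).coeff (j:ℕ)) := by
      rw [Finset.mul_sum, Finset.mul_sum, Finset.mul_sum, Finset.mul_sum, Finset.mul_sum,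
        ← Finset.sum_add_distrib, ← Finset.sum_sub_distrib, ← Finset.sum_sub_distrib,
        ← Finset.sum_add_distrib]
      refine Finset.sum_congr rfl fun j _ => ?_
      rw [hco]; ring
    rw [split, sum_coeff_full c l (i:ℕ), sum_coeff_one c l (i:ℕ), sum_coeff_two c l (i:ℕ),
      sum_coeff_X c l (i:ℕ)]
    rw [show (i:ℕ)+1+(l+1) = (i:ℕ)+(l+2) from by omega,
      show (i:ℕ)+1+l = (i:ℕ)+(l+1) from by omega]
    rcases lt_or_eq_of_le (Nat.lt_succ_iff.mp i.is_lt) with hi | hi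
    · rw [bd_lt c l _ hi, bd_lt c (l+1) _ (by omega), bd_lt c (l+1) ((i:ℕ)+1) (by omega),
        bd_lt c (l+2) _ (by omega)]
      rw [← hh1, ← hh2, ← hH1, ← hH2]
      ring
    · rw [hi]
      rw [bd_self c l, bd_lt c (l+1) l (by omega), bd_self c (l+1), bd_lt c (l+2) l (by omega)]
      rw [show l+1+1 = l+2 from rfl]
      rw [← hh1, ← hh2, ← hH1, ← hH2]
      ring
  have hcoeff_low : ∀ n, n ≤ l → F.coeff n = 0 := by
    intro n hn
    have hdet : (Matrix.of fun i j : Fin (l+1) => c ((i:ℕ)+(j:ℕ))).det ≠ 0 := by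
      rw [show (Matrix.of fun i j : Fin (l+1) => c ((i:ℕ)+(j:ℕ))).det = HdetR c (l+1) from rfl,
        ← hH1]
      exact h1
    have hv : (Matrix.of fun i j : Fin (l+1) => c ((i:ℕ)+(j:ℕ))).mulVec
        (fun j : Fin (l+1) => F.coeff (j:ℕ)) = 0 := by
      funext i
      simpa [Matrix.mulVec, dotProduct] using hlow i
    have hz := Matrix.eq_zero_of_mulVec_eq_zero hdet hv
    have h5 := congrFun hz ⟨n, by omega⟩
    simpa using h5
  refine Polynomial.ext fun n => ?_
  rw [Polynomial.coeff_zero]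
  rcases Nat.lt_or_ge n (l+1) with hn | hn
  · exact hcoeff_low n (by omega)
  rcases Nat.lt_or_ge n (l+2) with hn2 | hn2
  · have hn' : n = l+1 := by omega
    subst hn'
    rw [hco, coeff_hpoly_zero c l (l+1) (by omega), coeff_hpoly_self c (l+1),
      Polynomial.coeff_X_mul, ← hh1, ← hh2, ← hH1]
    ring
  rcases Nat.lt_or_ge n (l+3) with hn3 | hn3
  · have hn' : n = l+2 := by omega
    subst hn'
    have hX : (Polynomial.X * HpolyR c (l+1)).coeff (l+2) = (HpolyR c (l+1)).coeff (l+1) :=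
      Polynomial.coeff_X_mul (HpolyR c (l+1)) (l+1)
    rw [hco, coeff_hpoly_zero c l (l+2) (by omega), coeff_hpoly_zero c (l+1) (l+2) (by omega),
      hX, coeff_hpoly_self c (l+1), coeff_hpoly_self c (l+2), ← hH1, ← hH2]
    ring
  · obtain ⟨t, rfl⟩ : ∃ t, n = l+3+t := ⟨n - (l+3), by omega⟩
    rw [hco, show l+3+t = (l+2+t)+1 from by omega, Polynomial.coeff_X_mul,
      coeff_hpoly_zero c l ((l+2+t)+1) (by omega),
      coeff_hpoly_zero c (l+1) ((l+2+t)+1) (by omega),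
      coeff_hpoly_zero c (l+1) (l+2+t) (by omega),
      coeff_hpoly_zero c (l+2) ((l+2+t)+1) (by omega)]
    ring


lemma map_coeff_hpoly {S : Type*} [CommRing S] (f : R →+* S) (c : ℕ → R) (m n : ℕ) :
    f ((HpolyR c m).coeff n) = (HpolyR (fun i => f (c i)) m).coeff n := by
  rw [← map_HpolyR, Polynomial.coeff_map]

/-- the Jacobi–Joachimsthal expression -/
noncomputable def JJ (c : ℕ → R) (l : ℕ) : Polynomial R :=
  Polynomial.C (HdetR c (l+2)) ^ 2 * HpolyR c l +
      (Polynomial.C (HdetR c (l+2) * (HpolyR c (l+1)).coeff l) -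
       Polynomial.C (HdetR c (l+1) * (HpolyR c (l+2)).coeff (l+1)) -
       Polynomial.C (HdetR c (l+2) * HdetR c (l+1)) * Polynomial.X) * HpolyR c (l+1) +
      Polynomial.C (HdetR c (l+1)) ^ 2 * HpolyR c (l+2)

lemma map_JJ {S : Type*} [CommRing S] (f : R →+* S) (c : ℕ → R) (l : ℕ) :
    (JJ c l).map f = JJ (fun n => f (c n)) l := by
  simp only [JJ, Polynomial.map_add, Polynomial.map_mul, Polynomial.map_sub,
    Polynomial.map_pow, Polynomial.map_C, Polynomial.map_X, map_mul, map_HdetR f,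
    map_HpolyR f, map_coeff_hpoly f]

lemma generic_hdet_ne_zero (l : ℕ) :
    HdetR (fun n => (MvPolynomial.X n : MvPolynomial ℕ ℤ)) (l+1) ≠ 0 := by
  intro h0
  have := congrArg (MvPolynomial.eval (fun n => if n = l then (1:ℤ) else 0)) h0
  rw [map_HdetR, map_zero] at this
  simp only [MvPolynomial.eval_X] at this
  revert this
  show HdetR (fun n => if n = l then (1:ℤ) else 0) (l+1) ≠ 0
  rw [HdetR]
  have hE : (Matrix.of fun i j : Fin (l+1) =>
        (fun n => if n = l then (1:ℤ) else 0) ((i:ℕ)+(j:ℕ)))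
      = (1 : Matrix (Fin (l+1)) (Fin (l+1)) ℤ).submatrix Fin.revPerm id := by
    ext i j
    rw [Matrix.submatrix_apply, Matrix.of_apply, Matrix.one_apply, id]
    show (if (i:ℕ)+(j:ℕ) = l then (1:ℤ) else 0) = if Fin.revPerm i = j then 1 else 0
    have hiff : (Fin.revPerm i = j) ↔ ((i:ℕ)+(j:ℕ) = l) := by
      rw [Fin.ext_iff]
      simp only [Fin.revPerm_apply, Fin.val_rev]
      omega
    by_cases h : (i:ℕ)+(j:ℕ) = l
    · rw [if_pos h, if_pos (hiff.mpr h)]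
    · rw [if_neg h, if_neg (fun hh => h (hiff.mp hh))]
  rw [hE, Matrix.det_permute, Matrix.det_one, mul_one]
  exact (Units.isUnit (Equiv.Perm.sign Fin.revPerm)).ne_zero

lemma JJ_eq_zero_complex (c : ℕ → ℂ) (l : ℕ) : JJ c l = 0 := by
  set R0 := MvPolynomial ℕ ℤ
  set K := FractionRing R0
  set g : ℕ → K := fun n => algebraMap R0 K (MvPolynomial.X n) with hg
  have hinj : Function.Injective (algebraMap R0 K) := IsFractionRing.injective R0 K
  have h1 : HdetR g (l+1) ≠ 0 := by
    rw [hg]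
    rw [show (fun n => algebraMap R0 K (MvPolynomial.X n))
        = (fun n => (algebraMap R0 K : R0 →+* K) ((fun m => (MvPolynomial.X m : R0)) n)) from rfl,
      ← map_HdetR]
    intro h0
    exact generic_hdet_ne_zero l (hinj (by rw [h0, map_zero]))
  have hK : JJ g l = 0 := main_field g l h1
  have hmap : (JJ (fun n => (MvPolynomial.X n : R0)) l).map (algebraMap R0 K : R0 →+* K) = 0 := by
    rw [map_JJ]
    exact hK
  have hR0 : JJ (fun n => (MvPolynomial.X n : R0)) l = 0 := by
    have := Polynomial.map_injective (algebraMap R0 K : R0 →+* K) hinj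
    apply this
    rw [hmap, Polynomial.map_zero]
  have φ : R0 →+* ℂ := MvPolynomial.eval₂Hom (Int.castRingHom ℂ) c
  have hφX : ∀ n, (MvPolynomial.eval₂Hom (Int.castRingHom ℂ) c : R0 →+* ℂ) (MvPolynomial.X n) = c n := by
    intro n; simp
  have := congrArg (Polynomial.map (MvPolynomial.eval₂Hom (Int.castRingHom ℂ) c : R0 →+* ℂ)) hR0
  rw [Polynomial.map_zero, map_JJ] at this
  rw [show (fun n => (MvPolynomial.eval₂Hom (Int.castRingHom ℂ) c : R0 →+* ℂ)
      ((fun m => (MvPolynomial.X m : R0)) n)) = c from funext hφX] at this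
  exact this

end JJaux

/-- The `k`-th Hankel polynomial of the sequence `{c_j}`: the determinant of the
`(k+1)×(k+1)` matrix whose first `k` rows are `(c_{i}, …, c_{i+k})` and whose
last row is `(1, x, …, x^k)`. -/
noncomputable def Hpoly (c : ℕ → ℂ) (k : ℕ) : Polynomial ℂ :=
  Matrix.det (Matrix.of fun i j : Fin (k + 1) =>
    if (i : ℕ) < k then Polynomial.C (c ((i : ℕ) + (j : ℕ))) else Polynomial.X ^ (j : ℕ))

lemma Hdet_eq (c : ℕ → ℂ) (k : ℕ) : Hdet c k = JJaux.HdetR c k := rfl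
lemma Hpoly_eq (c : ℕ → ℂ) (k : ℕ) : Hpoly c k = JJaux.HpolyR c k := rfl

/-- The Jacobi–Joachimsthal identity. -/
theorem jacobi_joachimsthal (c : ℕ → ℂ) (k : ℕ) (hk : 2 ≤ k) :
    C (Hdet c k) ^ 2 * Hpoly c (k - 2) +
      (C (Hdet c k * (Hpoly c (k - 1)).coeff (k - 2)) -
       C (Hdet c (k - 1) * (Hpoly c k).coeff (k - 1)) -
       C (Hdet c k * Hdet c (k - 1)) * X) * Hpoly c (k - 1) +
      C (Hdet c (k - 1)) ^ 2 * Hpoly c k = 0 := by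
  obtain ⟨l, rfl⟩ : ∃ l, k = l + 2 := ⟨k - 2, by omega⟩
  have e1 : l + 2 - 2 = l := rfl
  have e2 : l + 2 - 1 = l + 1 := rfl
  rw [e1, e2]
  simp only [Hdet_eq, Hpoly_eq]
  exact JJaux.JJ_eq_zero_complex c l
end

section
/- Let {c_j} be a sequence with Hankel determinants H_k and Hankel polynomials 𝓗_k(x). Suppose H_{k-2} ≠ 0, H_{k-1} = 0, and h_{k-1,1} = 0 (the coefficient of x^{k-2} in 𝓗_{k-1}). Then 𝓗_{k-1}(x) is identically zero. -/
open Finset Polynomial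

open Matrix in
lemma coeff_Hpoly (c : ℕ → ℂ) (n : ℕ) (d : ℕ) :
    (Hpoly c n).coeff d
    = Matrix.det (Matrix.of fun i j : Fin (n+1) =>
       if (i:ℕ) < n then c ((i:ℕ)+(j:ℕ)) else if (j:ℕ) = d then (1:ℂ) else 0) := by
  rw [Hpoly, ← Matrix.det_transpose (Matrix.of fun i j : Fin (n+1) =>
       if (i:ℕ) < n then Polynomial.C (c ((i:ℕ)+(j:ℕ))) else Polynomial.X ^ (j:ℕ)),
      ← Matrix.det_transpose (Matrix.of fun i j : Fin (n+1) =>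
       if (i:ℕ) < n then c ((i:ℕ)+(j:ℕ)) else if (j:ℕ) = d then (1:ℂ) else 0)]
  rw [Matrix.det_apply', Matrix.det_apply', finset_sum_coeff]
  refine Finset.sum_congr rfl fun σ _ => ?_
  rw [coeff_intCast_mul]
  congr 1
  simp only [Matrix.transpose_apply, Matrix.of_apply]
  rw [Fin.prod_univ_castSucc, Fin.prod_univ_castSucc]
  simp only [Fin.coe_castSucc, Fin.val_last, Fin.is_lt, if_true, lt_irrefl, if_false]
  rw [← map_prod, coeff_C_mul, coeff_X_pow]
  congr 1
  simp [eq_comm]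

open Matrix in
lemma key (c : ℕ → ℂ) (m : ℕ)
    (h2 : Hdet c m ≠ 0) (h1 : Hdet c (m+1) = 0)
    (h11 : (Hpoly c (m+1)).coeff m = 0) :
    Hpoly c (m+1) = 0 := by
  set A₀ : Matrix (Fin m) (Fin m) ℂ := Matrix.of fun i j => c ((i:ℕ)+(j:ℕ)) with hA₀
  set A₁ : Matrix (Fin (m+1)) (Fin (m+1)) ℂ := Matrix.of fun i j => c ((i:ℕ)+(j:ℕ)) with hA₁
  have hdet0 : A₀.det ≠ 0 := h2
  have hdet1 : A₁.det = 0 := h1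
  obtain ⟨w, hw0, hw⟩ : ∃ v ≠ 0, v ᵥ* A₁ = 0 :=
    (Matrix.exists_vecMul_eq_zero_iff).2 hdet1
  have hcol : ∀ j : Fin (m+1), ∑ i : Fin (m+1), w i * c ((i:ℕ)+(j:ℕ)) = 0 := by
    intro j
    have := congrFun hw j
    simpa [Matrix.vecMul, dotProduct, hA₁] using this
  have hwlast : w (Fin.last m) ≠ 0 := by
    intro hlast
    have hker : (fun i : Fin m => w i.castSucc) ᵥ* A₀ = 0 := by
      funext j
      have := hcol j.castSucc
      rw [Fin.sum_univ_castSucc] at this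
      simp only [Matrix.vecMul, dotProduct, Pi.zero_apply, hA₀, Matrix.of_apply]
      simpa [hlast] using this
    have hz : (fun i : Fin m => w i.castSucc) = 0 := by
      by_contra hne
      exact hdet0 ((Matrix.exists_vecMul_eq_zero_iff).1 ⟨_, hne, hker⟩)
    apply hw0
    funext i
    refine Fin.lastCases hlast (fun i => ?_) i
    exact congrFun hz i
  -- the defect
  set s : ℂ := ∑ i : Fin (m+1), w i * c ((i:ℕ) + (m+1)) with hs_def
  set N : Matrix (Fin (m+2)) (Fin (m+2)) ℂ :=
    Matrix.of (fun i j : Fin (m+2) =>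
      if (i:ℕ) < m+1 then c ((i:ℕ)+(j:ℕ)) else if (j:ℕ) = m then (1:ℂ) else 0) with hN_def
  have hN : N.det = 0 := by
    have := coeff_Hpoly c (m+1) m
    rw [h11] at this
    exact this.symm
  set u : Fin (m+2) → ℂ := fun i => if h : (i:ℕ) < m+1 then w ⟨i, h⟩ else 0 with hu_def
  set e : Fin (m+2) → ℂ := fun j => if (j:ℕ) = m+1 then 1 else 0 with he_def
  set r : Fin (m+2) := ⟨m, by omega⟩ with hr_def
  have hur : u r = w (Fin.last m) := by
    simp [hu_def, hr_def, Fin.last]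
  have hrow : ∀ i : Fin (m+1), N i.castSucc = fun j : Fin (m+2) => c ((i:ℕ)+(j:ℕ)) := by
    intro i
    funext j
    simp [hN_def, i.is_lt, i.is_le, not_lt.mpr i.is_le]
  have hcomb : ∑ i : Fin (m+2), u i • N i = s • e := by
    funext j
    simp only [Finset.sum_apply, Pi.smul_apply, smul_eq_mul]
    rw [Fin.sum_univ_castSucc]
    have hulast : u (Fin.last (m+1)) = 0 := by simp [hu_def]
    rw [hulast, zero_mul, add_zero]
    have : ∀ i : Fin (m+1), u i.castSucc * N i.castSucc j = w i * c ((i:ℕ)+(j:ℕ)) := by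
      intro i
      rw [hrow i]
      simp [hu_def, i.is_lt, Fin.castSucc, i.is_le, not_lt.mpr i.is_le]
    rw [Finset.sum_congr rfl fun i _ => this i]
    rcases Fin.eq_castSucc_or_eq_last j with ⟨j', rfl⟩ | rfl
    · simp only [Fin.coe_castSucc]
      rw [hcol j']
      simp [he_def, j'.is_lt.ne]
    · simp [he_def, hs_def]
  have h5 : s * (N.updateRow r e).det = 0 := by
    have h6 := Matrix.det_updateRow_sum N r u
    rw [hcomb, Matrix.det_updateRow_smul, hN] at h6
    simpa using h6
  have hP : (N.updateRow r e).det ≠ 0 := by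
    intro hPdet
    obtain ⟨v, hv0, hvP⟩ := (Matrix.exists_vecMul_eq_zero_iff).2 hPdet
    have hvcol : ∀ j : Fin (m+2), ∑ i : Fin (m+2), v i * (N.updateRow r e) i j = 0 := by
      intro j
      have := congrFun hvP j
      simpa [Matrix.vecMul, dotProduct] using this
    -- entries of P
    have hPc : ∀ (i : Fin m) (j : Fin (m+2)),
        (N.updateRow r e) (i.castSucc.castSucc) j = c ((i:ℕ)+(j:ℕ)) := by
      intro i j
      rw [Matrix.updateRow_apply, if_neg, hN_def]
      · simp only [Matrix.of_apply]
        rw [if_pos]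
        · rfl
        · simp only [Fin.coe_castSucc]; omega
      · intro h
        have := congrArg Fin.val h
        simp [hr_def] at this
        omega
    have hPr : ∀ j : Fin (m+2), (N.updateRow r e) r j = e j := by
      intro j; rw [Matrix.updateRow_apply, if_pos rfl]
    have hPl : ∀ j : Fin (m+2), (N.updateRow r e) (Fin.last (m+1)) j
        = if (j:ℕ) = m then 1 else 0 := by
      intro j
      rw [Matrix.updateRow_apply, if_neg, hN_def]
      · simp
      · intro h
        have := congrArg Fin.val h
        simp [hr_def] at this
    have hrl : (Fin.last m).castSucc = r := by
      apply Fin.ext; simp [hr_def]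
    -- split each column equation
    have hsplit : ∀ j : Fin (m+2),
        (∑ i : Fin m, v (i.castSucc.castSucc) * c ((i:ℕ)+(j:ℕ)))
        + v r * e j + v (Fin.last (m+1)) * (if (j:ℕ) = m then 1 else 0) = 0 := by
      intro j
      have := hvcol j
      rw [Fin.sum_univ_castSucc, Fin.sum_univ_castSucc] at this
      rw [hrl, hPr, hPl] at this
      rw [Finset.sum_congr rfl fun i _ => by rw [hPc i j]] at this
      exact this
    -- columns with index < m kill the first block
    have hker : (fun i : Fin m => v (i.castSucc.castSucc)) ᵥ* A₀ = 0 := by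
      funext j
      have := hsplit (j.castSucc.castSucc)
      have hj1 : ((j.castSucc.castSucc : Fin (m+2)) : ℕ) = (j:ℕ) := by simp
      rw [hj1] at this
      have hj2 : e j.castSucc.castSucc = 0 := by simp [he_def, hj1]; omega
      rw [hj2, mul_zero, add_zero, if_neg (by omega : ¬ (j:ℕ) = m), mul_zero, add_zero] at this
      simpa [Matrix.vecMul, dotProduct, hA₀] using this
    have hz : (fun i : Fin m => v (i.castSucc.castSucc)) = 0 := by
      by_contra hne
      exact hdet0 ((Matrix.exists_vecMul_eq_zero_iff).1 ⟨_, hne, hker⟩)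
    have hz' : ∀ i : Fin m, v (i.castSucc.castSucc) = 0 := fun i => congrFun hz i
    -- column m gives v last = 0
    have hvlast : v (Fin.last (m+1)) = 0 := by
      have := hsplit r
      have her : e r = 0 := by simp [he_def, hr_def]
      rw [her, mul_zero, add_zero, if_pos (by simp [hr_def]), mul_one] at this
      simpa [hz'] using this
    -- column m+1 gives v r = 0
    have hvr : v r = 0 := by
      have := hsplit (Fin.last (m+1))
      have hel : e (Fin.last (m+1)) = 1 := by simp [he_def]
      rw [hel, mul_one, if_neg (by simp), mul_zero, add_zero] at this
      simpa [hz'] using this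
    apply hv0
    funext i
    have : (i:ℕ) < m ∨ (i:ℕ) = m ∨ (i:ℕ) = m+1 := by omega
    rcases this with h | h | h
    · have : i = (⟨i, h⟩ : Fin m).castSucc.castSucc := by apply Fin.ext; simp
      rw [this]; exact hz' _
    · have : i = r := by apply Fin.ext; simp [hr_def, h]
      rw [this]; exact hvr
    · have : i = Fin.last (m+1) := by apply Fin.ext; simp [h]
      rw [this]; exact hvlast
  have hs : s = 0 := by
    rcases mul_eq_zero.1 h5 with h | h
    · exact h
    · exact absurd h hP
  -- now the polynomial determinant vanishes
  set M : Matrix (Fin (m+2)) (Fin (m+2)) ℂ[X] :=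
    Matrix.of (fun i j : Fin (m+2) =>
      if (i:ℕ) < m+1 then Polynomial.C (c ((i:ℕ)+(j:ℕ))) else Polynomial.X ^ (j:ℕ)) with hM_def
  have hgoal : Hpoly c (m+1) = M.det := rfl
  rw [hgoal]
  by_contra hd
  set vp : Fin (m+2) → ℂ[X] := fun i => Polynomial.C (u i) with hvp_def
  have hvp0 : vp ≠ 0 := by
    intro h
    have := congrFun h r
    rw [hvp_def] at this
    simp only [Pi.zero_apply] at this
    rw [hur] at this
    exact hwlast (by simpa using this)
  have hvM : vp ᵥ* M = 0 := by
    funext j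
    simp only [Matrix.vecMul, dotProduct, Pi.zero_apply]
    rw [Fin.sum_univ_castSucc]
    have hulast : vp (Fin.last (m+1)) = 0 := by simp [hvp_def, hu_def]
    rw [hulast, zero_mul, add_zero]
    have step : ∀ i : Fin (m+1), vp i.castSucc * M i.castSucc j
        = Polynomial.C (w i * c ((i:ℕ)+(j:ℕ))) := by
      intro i
      rw [hvp_def, hM_def]
      simp only [Matrix.of_apply]
      rw [if_pos (by simpa using i.is_lt), ← C_mul]
      congr 1
      simp [hu_def, i.is_lt, not_lt.mpr i.is_le]
    rw [Finset.sum_congr rfl fun i _ => step i, ← map_sum]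
    rcases Fin.eq_castSucc_or_eq_last j with ⟨j', rfl⟩ | rfl
    · rw [show ((j'.castSucc : Fin (m+2)) : ℕ) = (j' : ℕ) by simp, hcol j', map_zero]
    · rw [show ((Fin.last (m+1) : Fin (m+2)) : ℕ) = m+1 by simp, ← hs_def, hs, map_zero]
  exact hd ((Matrix.exists_vecMul_eq_zero_iff).1 ⟨vp, hvp0, hvM⟩)

theorem hankel_poly_eq_zero_of_degenerate (c : ℕ → ℂ) (k : ℕ) (hk : 2 ≤ k)
    (h2 : Hdet c (k - 2) ≠ 0) (h1 : Hdet c (k - 1) = 0)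
    (h11 : (Hpoly c (k - 1)).coeff (k - 2) = 0) :
    Hpoly c (k - 1) = 0 := by
  obtain ⟨m, rfl⟩ : ∃ m, k = m + 2 := ⟨k - 2, by omega⟩
  exact key c m h2 h1 h11
end

section
/- Let {c_j} be a sequence with Hankel determinants H_k and Hankel polynomials 𝓗_k(x). Suppose H_{k-2} ≠ 0, H_{k-1} = 0, and h_{k-1,1} ≠ 0. Then H_k H_{k-2} = −h_{k-1,1}^2; in particular H_k ≠ 0, and 𝓗_{k-1}(x) ≡ (h_{k-1,1}/H_{k-2}) · 𝓗_{k-2}(x). -/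
open Finset Polynomial

/- ## Auxiliary lemmas -/

lemma det_row_single {R : Type*} [CommRing R] {n : ℕ}
    (A : Matrix (Fin (n + 1)) (Fin (n + 1)) R) (i j : Fin (n + 1))
    (h : ∀ j', j' ≠ j → A i j' = 0) :
    A.det = (-1) ^ ((i : ℕ) + (j : ℕ)) * A i j *
      (A.submatrix i.succAbove j.succAbove).det := by
  rw [Matrix.det_succ_row A i]
  exact Finset.sum_eq_single j (fun j' _ hne => by rw [h j' hne]; ring) (by simp)

lemma det_col_single {R : Type*} [CommRing R] {n : ℕ}
    (A : Matrix (Fin (n + 1)) (Fin (n + 1)) R) (i j : Fin (n + 1))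
    (h : ∀ i', i' ≠ i → A i' j = 0) :
    A.det = (-1) ^ ((i : ℕ) + (j : ℕ)) * A i j *
      (A.submatrix i.succAbove j.succAbove).det := by
  rw [Matrix.det_succ_column A j]
  exact Finset.sum_eq_single i (fun i' _ hne => by rw [h i' hne]; ring) (by simp)

lemma sum_split1 {M : Type*} [AddCommMonoid M] {n : ℕ} (f : Fin (n + 1) → M) :
    ∑ i, f i = (∑ i : Fin n, f ⟨(i : ℕ), by omega⟩) + f ⟨n, by omega⟩ := by
  rw [Fin.sum_univ_castSucc]
  exact congrArg₂ (· + ·)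
    (Finset.sum_congr rfl fun i _ => congrArg f (Fin.ext (by simp))) rfl

lemma sum_split2 {M : Type*} [AddCommMonoid M] {n : ℕ} (f : Fin (n + 2) → M) :
    ∑ i, f i = (∑ i : Fin n, f ⟨(i : ℕ), by omega⟩) + f ⟨n, by omega⟩ + f ⟨n + 1, by omega⟩ := by
  rw [sum_split1 f, sum_split1 (fun i : Fin (n + 1) => f ⟨(i : ℕ), by omega⟩)]

lemma combo_row {R : Type*} [CommRing R] {m : ℕ} (lam : Fin m → R) (v : Fin (m + 1) → R) :
    ∑ i : Fin (m + 1), (if h : (i : ℕ) < m then -lam ⟨(i : ℕ), h⟩ else 1) * v i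
      = v ⟨m, by omega⟩ - ∑ i : Fin m, lam i * v ⟨(i : ℕ), by omega⟩ := by
  rw [sum_split1 (f := fun i : Fin (m + 1) =>
      (if h : (i : ℕ) < m then -lam ⟨(i : ℕ), h⟩ else 1) * v i)]
  have h1 : ∀ i : Fin m,
      (if h : ((⟨(i : ℕ), by omega⟩ : Fin (m + 1)) : ℕ) < m then
        -lam ⟨((⟨(i : ℕ), by omega⟩ : Fin (m + 1)) : ℕ), h⟩ else 1) * v ⟨(i : ℕ), by omega⟩
      = -(lam i * v ⟨(i : ℕ), by omega⟩) := by
    intro i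
    rw [dif_pos i.isLt]
    simp
  rw [Finset.sum_congr rfl fun i _ => h1 i, dif_neg (lt_irrefl m)]
  rw [Finset.sum_neg_distrib]
  ring

lemma combo_row2 {R : Type*} [CommRing R] {m : ℕ} (lam : Fin m → R) (v : Fin (m + 2) → R) :
    ∑ i : Fin (m + 2), (if h : (i : ℕ) < m then -lam ⟨(i : ℕ), h⟩ else
        if (i : ℕ) = m then 1 else 0) * v i
      = v ⟨m, by omega⟩ - ∑ i : Fin m, lam i * v ⟨(i : ℕ), by omega⟩ := by
  rw [sum_split2 (f := fun i : Fin (m + 2) =>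
      (if h : (i : ℕ) < m then -lam ⟨(i : ℕ), h⟩ else if (i : ℕ) = m then 1 else 0) * v i)]
  have h1 : ∀ i : Fin m,
      (if h : ((⟨(i : ℕ), by omega⟩ : Fin (m + 2)) : ℕ) < m then
        -lam ⟨((⟨(i : ℕ), by omega⟩ : Fin (m + 2)) : ℕ), h⟩ else
        if ((⟨(i : ℕ), by omega⟩ : Fin (m + 2)) : ℕ) = m then 1 else 0) * v ⟨(i : ℕ), by omega⟩
      = -(lam i * v ⟨(i : ℕ), by omega⟩) := by
    intro i
    rw [dif_pos i.isLt]
    simp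
  rw [Finset.sum_congr rfl fun i _ => h1 i, dif_neg (lt_irrefl m), if_pos rfl,
    dif_neg (by omega : ¬ m + 1 < m), if_neg (by omega : ¬ m + 1 = m)]
  rw [Finset.sum_neg_distrib]
  ring

lemma Hpoly_coeff_top (c : ℕ → ℂ) (n : ℕ) : (Hpoly c n).coeff n = Hdet c n := by
  rw [Hpoly, Matrix.det_succ_row _ (Fin.last n), finset_sum_coeff]
  have hterm : ∀ j : Fin (n + 1),
      ((-1) ^ ((Fin.last n : ℕ) + (j : ℕ)) *
        (Matrix.of fun i j : Fin (n + 1) =>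
          if (i : ℕ) < n then Polynomial.C (c ((i : ℕ) + (j : ℕ))) else Polynomial.X ^ (j : ℕ))
          (Fin.last n) j *
        ((Matrix.of fun i j : Fin (n + 1) =>
          if (i : ℕ) < n then Polynomial.C (c ((i : ℕ) + (j : ℕ))) else Polynomial.X ^ (j : ℕ))
          |>.submatrix (Fin.last n).succAbove j.succAbove).det).coeff n =
      (-1) ^ (n + (j : ℕ)) *
        (Matrix.det (Matrix.of fun i j' : Fin n =>
          c ((i : ℕ) + ((j.succAbove j' : Fin (n + 1)) : ℕ)))) *
        (if n = (j : ℕ) then 1 else 0) := by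
    intro j
    have hsub : ((Matrix.of fun i j : Fin (n + 1) =>
          if (i : ℕ) < n then Polynomial.C (c ((i : ℕ) + (j : ℕ))) else Polynomial.X ^ (j : ℕ))
          |>.submatrix (Fin.last n).succAbove j.succAbove) =
        (Matrix.of fun i j' : Fin n =>
          c ((i : ℕ) + ((j.succAbove j' : Fin (n + 1)) : ℕ))).map Polynomial.C := by
      ext i j'
      simp [Fin.succAbove_last, Fin.is_lt]
    rw [hsub, ← RingHom.mapMatrix_apply, ← RingHom.map_det]
    have hlast : (Matrix.of fun i j : Fin (n + 1) =>
        if (i : ℕ) < n then Polynomial.C (c ((i : ℕ) + (j : ℕ))) else Polynomial.X ^ (j : ℕ))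
        (Fin.last n) j = Polynomial.X ^ (j : ℕ) := by
      simp
    rw [hlast, Fin.val_last]
    have : ((-1 : ℂ[X]) ^ (n + (j : ℕ)) * Polynomial.X ^ (j : ℕ) *
        Polynomial.C (Matrix.det (Matrix.of fun i j' : Fin n =>
          c ((i : ℕ) + ((j.succAbove j' : Fin (n + 1)) : ℕ))))) =
        Polynomial.C ((-1) ^ (n + (j : ℕ)) * Matrix.det (Matrix.of fun i j' : Fin n =>
          c ((i : ℕ) + ((j.succAbove j' : Fin (n + 1)) : ℕ)))) * Polynomial.X ^ (j : ℕ) := by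
      rw [map_mul, map_pow, map_neg, map_one]; ring
    rw [this, coeff_C_mul, coeff_X_pow]
  rw [Finset.sum_congr rfl fun j _ => hterm j]
  rw [Finset.sum_eq_single (Fin.last n)]
  · have h1 : ((Fin.last n : Fin (n+1)) : ℕ) = n := rfl
    rw [h1, if_pos rfl, mul_one]
    have : (-1 : ℂ) ^ (n + n) = 1 := Even.neg_one_pow ⟨n, rfl⟩
    rw [this, one_mul, Hdet]
    congr 1
    ext i j'
    simp [Fin.succAbove_last]
  · intro j _ hne
    have : n ≠ (j : ℕ) := by
      intro h
      exact hne (Fin.ext (by simp [← h]))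
    rw [if_neg this, mul_zero]
  · simp

theorem hankel_poly_degenerate_nonzero (c : ℕ → ℂ) (k : ℕ) (hk : 2 ≤ k)
    (h2 : Hdet c (k - 2) ≠ 0) (h1 : Hdet c (k - 1) = 0)
    (h11 : (Hpoly c (k - 1)).coeff (k - 2) ≠ 0) :
    Hdet c k * Hdet c (k - 2) = -((Hpoly c (k - 1)).coeff (k - 2)) ^ 2 ∧
    Hdet c k ≠ 0 ∧
    Hpoly c (k - 1) =
      C ((Hpoly c (k - 1)).coeff (k - 2) / Hdet c (k - 2)) * Hpoly c (k - 2) := by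
  obtain ⟨m, rfl⟩ : ∃ m, k = m + 2 := ⟨k - 2, by omega⟩
  have e1 : m + 2 - 1 = m + 1 := rfl
  have e2 : m + 2 - 2 = m := rfl
  simp only [e1, e2] at h1 h2 h11 ⊢
  clear hk e1 e2
  -- the small Hankel matrix
  set A2 : Matrix (Fin m) (Fin m) ℂ := Matrix.of (fun i j : Fin m => c ((i : ℕ) + (j : ℕ)))
    with hA2
  have hA2det : A2.det = Hdet c m := rfl
  have hDunit : IsUnit A2.det := by rw [hA2det]; exact isUnit_iff_ne_zero.mpr h2
  set lam : Fin m → ℂ := Matrix.mulVec A2⁻¹ (fun i : Fin m => c (m + (i : ℕ))) with hlam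
  have key0 : ∀ j : Fin m, ∑ i : Fin m, lam i * c ((i : ℕ) + (j : ℕ)) = c (m + (j : ℕ)) := by
    intro j
    have h := congrFun (by
      rw [hlam, Matrix.mulVec_mulVec, Matrix.mul_nonsing_inv A2 hDunit, Matrix.one_mulVec] :
      Matrix.mulVec A2 lam = fun i : Fin m => c (m + (i : ℕ))) j
    rw [Matrix.mulVec, dotProduct] at h
    rw [← h]
    exact Finset.sum_congr rfl fun i _ => by
      simp only [hA2, Matrix.of_apply]; rw [mul_comm, Nat.add_comm (j : ℕ)]
  have keym : ∑ i : Fin m, lam i * c ((i : ℕ) + m) = c (m + m) := by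
    set A1 : Matrix (Fin (m + 1)) (Fin (m + 1)) ℂ :=
      Matrix.of (fun i j : Fin (m + 1) => c ((i : ℕ) + (j : ℕ))) with hA1def
    have hA1 : A1.det = 0 := h1
    set d1 : Fin (m + 1) → ℂ := fun i => if h : (i : ℕ) < m then -lam ⟨(i : ℕ), h⟩ else 1
      with hd1
    set B1 : Matrix (Fin (m + 1)) (Fin (m + 1)) ℂ := A1.updateRow (Fin.last m) (∑ i, d1 i • A1 i)
      with hB1
    have hdetB1 : B1.det = 0 := by
      rw [hB1, Matrix.det_updateRow_sum, hA1, smul_zero]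
    have hrow : ∀ j : Fin (m + 1), B1 (Fin.last m) j
        = c (m + (j : ℕ)) - ∑ i : Fin m, lam i * c ((i : ℕ) + (j : ℕ)) := by
      intro j
      rw [hB1, Matrix.updateRow_self]
      have hs : (∑ i, d1 i • A1 i) j = ∑ i : Fin (m + 1), d1 i * A1 i j := by
        simp [Finset.sum_apply]
      rw [hs, hd1]
      rw [combo_row lam (fun i : Fin (m + 1) => A1 i j)]
      rfl
    have hzero : ∀ j' : Fin (m + 1), j' ≠ Fin.last m → B1 (Fin.last m) j' = 0 := by
      intro j' hne
      rw [hrow]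
      have hj : (j' : ℕ) < m := by
        have h1 := j'.isLt
        have h2 : (j' : ℕ) ≠ m := fun h => hne (Fin.ext (by simp [h]))
        omega
      rw [sub_eq_zero]
      exact (key0 ⟨(j' : ℕ), hj⟩).symm
    have hexp := det_row_single B1 (Fin.last m) (Fin.last m) hzero
    have hsub : B1.submatrix (Fin.last m).succAbove (Fin.last m).succAbove = A2 := by
      ext i j
      rw [Matrix.submatrix_apply, Fin.succAbove_last, hB1,
        Matrix.updateRow_ne (Fin.castSucc_lt_last i).ne]
      rfl
    rw [hdetB1, hsub, hA2det, hrow] at hexp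
    have heven : (-1 : ℂ) ^ ((Fin.last m : ℕ) + (Fin.last m : ℕ)) = 1 :=
      Even.neg_one_pow ⟨m, by simp⟩
    rw [heven, one_mul] at hexp
    have hfac : c (m + ((Fin.last m : ℕ))) - ∑ i : Fin m, lam i * c ((i : ℕ) + (Fin.last m : ℕ))
        = 0 := by
      rcases mul_eq_zero.mp hexp.symm with h | h
      · exact h
      · exact absurd h h2
    have := sub_eq_zero.mp hfac
    exact this.symm
  have key : ∀ j : ℕ, j ≤ m → ∑ i : Fin m, lam i * c ((i : ℕ) + j) = c (m + j) := by
    intro j hj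
    rcases lt_or_eq_of_le hj with h | h
    · exact key0 ⟨j, h⟩
    · subst h; exact keym
  have hg : ∀ j : ℕ, j ≤ m → c (m + j) - ∑ i : Fin m, lam i * c ((i : ℕ) + j) = 0 := by
    intro j hj; rw [key j hj, sub_self]
  set δ : ℂ := c (m + (m + 1)) - ∑ i : Fin m, lam i * c ((i : ℕ) + (m + 1)) with hδ
  set r2 : Fin (m + 2) := ⟨m, by omega⟩ with hr2
  have hsa : ∀ i : Fin (m + 1),
      ((r2.succAbove i : Fin (m + 2)) : ℕ) = if (i : ℕ) < m then (i : ℕ) else (i : ℕ) + 1 := by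
    intro i
    by_cases h : (i : ℕ) < m
    · rw [Fin.succAbove_of_castSucc_lt _ _ (by simp [Fin.lt_def, hr2, h]), if_pos h]
      simp
    · rw [Fin.succAbove_of_le_castSucc _ _ (by simp [Fin.le_def, hr2]; omega), if_neg h]
      simp
  -- ### Part 3: the Hankel polynomial identity
  set P : Matrix (Fin (m + 2)) (Fin (m + 2)) (Polynomial ℂ) := Matrix.of (fun i j : Fin (m + 2) =>
      if (i : ℕ) < m + 1 then Polynomial.C (c ((i : ℕ) + (j : ℕ)))
      else Polynomial.X ^ (j : ℕ)) with hPdef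
  have hPdet : Hpoly c (m + 1) = P.det := rfl
  set dP : Fin (m + 2) → Polynomial ℂ := fun i =>
      if h : (i : ℕ) < m then -(fun t : Fin m => Polynomial.C (lam t)) ⟨(i : ℕ), h⟩ else
        if (i : ℕ) = m then 1 else 0 with hdP
  set P2 : Matrix (Fin (m + 2)) (Fin (m + 2)) (Polynomial ℂ) :=
    P.updateRow r2 (∑ i, dP i • P i) with hP2
  have hdP2 : P2.det = P.det := by
    have hv : (r2 : ℕ) = m := by rw [hr2]
    rw [hP2, Matrix.det_updateRow_sum]
    simp [hdP, hv]
  have hProw : ∀ j : Fin (m + 2), P2 r2 j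
      = Polynomial.C (c (m + (j : ℕ)) - ∑ i : Fin m, lam i * c ((i : ℕ) + (j : ℕ))) := by
    intro j
    rw [hP2, Matrix.updateRow_self]
    have hs : (∑ i, dP i • P i) j = ∑ i : Fin (m + 2), dP i * P i j := by
      simp [Finset.sum_apply]
    rw [hs, hdP]
    rw [combo_row2 (fun t : Fin m => Polynomial.C (lam t)) (fun i : Fin (m + 2) => P i j)]
    have e1 : P ⟨m, by omega⟩ j = Polynomial.C (c (m + (j : ℕ))) := by
      rw [hPdef, Matrix.of_apply]; exact if_pos (show m < m + 1 by omega)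
    have e2 : ∀ i : Fin m, P ⟨(i : ℕ), by omega⟩ j = Polynomial.C (c ((i : ℕ) + (j : ℕ))) := by
      intro i; rw [hPdef, Matrix.of_apply]
      exact if_pos (show (i : ℕ) < m + 1 by have := i.isLt; omega)
    rw [e1, Finset.sum_congr rfl fun i _ => by rw [e2 i]]
    rw [map_sub, map_sum]
    rw [Finset.sum_congr rfl fun i (_ : i ∈ Finset.univ) =>
      (map_mul Polynomial.C (lam i) (c ((i : ℕ) + (j : ℕ))))]
  have hPzero : ∀ j' : Fin (m + 2), j' ≠ Fin.last (m + 1) → P2 r2 j' = 0 := by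
    intro j' hne
    rw [hProw]
    have hjv : (j' : ℕ) ≠ m + 1 := fun h => hne (Fin.ext (by simp [h]))
    have hj : (j' : ℕ) ≤ m := by have := j'.isLt; omega
    rw [hg (j' : ℕ) hj, map_zero]
  have hPpiv : P2 r2 (Fin.last (m + 1)) = Polynomial.C δ := by
    rw [hProw]; exact congrArg Polynomial.C hδ.symm
  have hexpP := det_row_single P2 r2 (Fin.last (m + 1)) hPzero
  have hSP : P2.submatrix r2.succAbove (Fin.last (m + 1)).succAbove
      = Matrix.of (fun i j : Fin (m + 1) =>
          if (i : ℕ) < m then Polynomial.C (c ((i : ℕ) + (j : ℕ)))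
          else Polynomial.X ^ (j : ℕ)) := by
    refine Matrix.ext fun i j => ?_
    rw [Matrix.submatrix_apply, Fin.succAbove_last, hP2,
      Matrix.updateRow_ne (Fin.succAbove_ne r2 i), hPdef, Matrix.of_apply, Matrix.of_apply,
      Fin.coe_castSucc]
    by_cases h : (i : ℕ) < m
    · rw [hsa i, if_pos h, if_pos (show (i : ℕ) < m + 1 by omega), if_pos h]
    · rw [hsa i, if_neg h, if_neg (show ¬ ((i : ℕ) + 1 < m + 1) by omega), if_neg h]
  have hSPdet : (P2.submatrix r2.succAbove (Fin.last (m + 1)).succAbove).det = Hpoly c m := by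
    rw [hSP]; rfl
  have hsignP : (-1 : Polynomial ℂ) ^ ((r2 : ℕ) + ((Fin.last (m + 1) : Fin (m + 2)) : ℕ)) = -1 :=
    Odd.neg_one_pow ⟨m, by show m + (m + 1) = 2 * m + 1; omega⟩
  have hP3 : Hpoly c (m + 1) = -(Polynomial.C δ) * Hpoly c m := by
    rw [hPdet, ← hdP2, hexpP, hPpiv, hSPdet, hsignP]
    ring
  have hcoeff : (Hpoly c (m + 1)).coeff m = -δ * Hdet c m := by
    rw [hP3, show -(Polynomial.C δ) * Hpoly c m = Polynomial.C (-δ) * Hpoly c m by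
      rw [map_neg], coeff_C_mul, Hpoly_coeff_top]
  have hδ0 : δ ≠ 0 := by
    intro h
    apply h11
    rw [hcoeff, h]
    ring
  -- ### Part 1: the determinant identity
  set A0 : Matrix (Fin (m + 2)) (Fin (m + 2)) ℂ :=
    Matrix.of (fun i j : Fin (m + 2) => c ((i : ℕ) + (j : ℕ))) with hA0def
  have hA0det : Hdet c (m + 2) = A0.det := rfl
  set dd : Fin (m + 2) → ℂ := fun i =>
      if h : (i : ℕ) < m then -lam ⟨(i : ℕ), h⟩ else if (i : ℕ) = m then 1 else 0 with hdd
  set B0 : Matrix (Fin (m + 2)) (Fin (m + 2)) ℂ := A0.updateRow r2 (∑ i, dd i • A0 i) with hB0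
  have hdB0 : B0.det = A0.det := by
    have hv : (r2 : ℕ) = m := by rw [hr2]
    rw [hB0, Matrix.det_updateRow_sum]
    simp [hdd, hv]
  have hB0row : ∀ j : Fin (m + 2), B0 r2 j
      = c (m + (j : ℕ)) - ∑ i : Fin m, lam i * c ((i : ℕ) + (j : ℕ)) := by
    intro j
    rw [hB0, Matrix.updateRow_self]
    have hs : (∑ i, dd i • A0 i) j = ∑ i : Fin (m + 2), dd i * A0 i j := by
      simp [Finset.sum_apply]
    rw [hs, hdd]
    rw [combo_row2 lam (fun i : Fin (m + 2) => A0 i j)]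
    rfl
  set B : Matrix (Fin (m + 2)) (Fin (m + 2)) ℂ :=
    B0.updateCol r2 (fun r => ∑ i, dd i • B0 r i) with hB
  have hdB : B.det = A0.det := by
    have hv : (r2 : ℕ) = m := by rw [hr2]
    rw [hB]
    have := Matrix.det_updateCol_sum B0 r2 dd
    rw [this, hdB0]
    simp [hdd, hv]
  have hBcol : ∀ r : Fin (m + 2), B r r2 = if (r : ℕ) = m + 1 then δ else 0 := by
    intro r
    rw [hB, Matrix.updateCol_self]
    have hs : (∑ i, dd i • B0 r i) = ∑ i : Fin (m + 2), dd i * B0 r i := by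
      simp
    rw [hs, hdd, combo_row2 lam (fun i : Fin (m + 2) => B0 r i)]
    by_cases hr : r = r2
    · subst hr
      have t1 : B0 r2 ⟨m, by omega⟩ = 0 := by rw [hB0row]; exact hg m le_rfl
      have t2 : ∀ i : Fin m, B0 r2 ⟨(i : ℕ), by omega⟩ = 0 := fun i => by
        rw [hB0row]; exact hg (i : ℕ) (le_of_lt i.isLt)
      rw [t1, Finset.sum_congr rfl fun i _ => by rw [t2 i],
        if_neg (show ¬ ((r2 : ℕ) = m + 1) by rw [hr2]; show ¬ (m = m + 1); omega)]
      simp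
    · have hB0r : B0 r = A0 r := Matrix.updateRow_ne hr
      rw [hB0r]
      by_cases hrm : (r : ℕ) = m + 1
      · rw [if_pos hrm]
        have e1 : A0 r ⟨m, by omega⟩ = c (m + (m + 1)) := by
          show c ((r : ℕ) + m) = c (m + (m + 1)); rw [hrm]; congr 1; omega
        have e2 : ∀ i : Fin m, A0 r ⟨(i : ℕ), by omega⟩ = c ((i : ℕ) + (m + 1)) := by
          intro i
          show c ((r : ℕ) + (i : ℕ)) = c ((i : ℕ) + (m + 1)); rw [hrm]; congr 1; omega
        rw [e1, Finset.sum_congr rfl fun i _ => by rw [e2 i]]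
      · rw [if_neg hrm]
        have hrle : (r : ℕ) ≤ m := by
          have h3 := r.isLt
          have h4 : (r : ℕ) ≠ m := fun h => hr (Fin.ext (by rw [h, hr2]))
          omega
        have e1 : A0 r ⟨m, by omega⟩ = c (m + (r : ℕ)) := by
          show c ((r : ℕ) + m) = c (m + (r : ℕ)); congr 1; omega
        have e2 : ∀ i : Fin m, A0 r ⟨(i : ℕ), by omega⟩ = c ((i : ℕ) + (r : ℕ)) := by
          intro i
          show c ((r : ℕ) + (i : ℕ)) = c ((i : ℕ) + (r : ℕ)); congr 1; omega
        rw [e1, Finset.sum_congr rfl fun i _ => by rw [e2 i], key (r : ℕ) hrle, sub_self]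
  have hBrow : ∀ j : Fin (m + 2), j ≠ Fin.last (m + 1) → B r2 j = 0 := by
    intro j hne
    by_cases hj : j = r2
    · subst hj
      rw [hBcol]
      exact if_neg (show ¬ ((r2 : ℕ) = m + 1) by rw [hr2]; show ¬ (m = m + 1); omega)
    · rw [hB, Matrix.updateCol_ne hj, hB0row]
      have hjv : (j : ℕ) ≠ m + 1 := fun h => hne (Fin.ext (by simp [h]))
      exact hg (j : ℕ) (by have := j.isLt; omega)
  have hBpiv : B r2 (Fin.last (m + 1)) = δ := by
    rw [hB, Matrix.updateCol_ne
      (show Fin.last (m + 1) ≠ r2 by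
        intro h; have := congrArg Fin.val h; rw [hr2] at this
        exact absurd this (show ¬ (m + 1 = m) by omega)), hB0row]
    exact hδ.symm
  have hexpB := det_row_single B r2 (Fin.last (m + 1)) hBrow
  set C' : Matrix (Fin (m + 1)) (Fin (m + 1)) ℂ :=
    B.submatrix r2.succAbove (Fin.last (m + 1)).succAbove with hC'
  have hcolpiv : (Fin.last (m + 1)).succAbove (Fin.last m) = r2 := by
    rw [Fin.succAbove_last, hr2]
    exact Fin.ext (by simp)
  have hC'col : ∀ i' : Fin (m + 1), i' ≠ Fin.last m → C' i' (Fin.last m) = 0 := by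
    intro i' hne
    rw [hC', Matrix.submatrix_apply, hcolpiv, hBcol]
    have hv : (i' : ℕ) < m := by
      have h3 := i'.isLt
      have h4 : (i' : ℕ) ≠ m := fun h => hne (Fin.ext (by simp [h]))
      omega
    have : ((r2.succAbove i' : Fin (m + 2)) : ℕ) = (i' : ℕ) := by rw [hsa i', if_pos hv]
    rw [this]
    exact if_neg (by omega)
  have hC'piv : C' (Fin.last m) (Fin.last m) = δ := by
    rw [hC', Matrix.submatrix_apply, hcolpiv, hBcol]
    have : ((r2.succAbove (Fin.last m) : Fin (m + 2)) : ℕ) = m + 1 := by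
      rw [hsa (Fin.last m), if_neg (show ¬ ((Fin.last m : ℕ) < m) by simp)]
      simp
    rw [this, if_pos rfl]
  have hexpC := det_col_single C' (Fin.last m) (Fin.last m) hC'col
  have hfin : C'.submatrix (Fin.last m).succAbove (Fin.last m).succAbove = A2 := by
    refine Matrix.ext fun i j => ?_
    rw [Matrix.submatrix_apply, Fin.succAbove_last, hC', Matrix.submatrix_apply,
      Fin.succAbove_last]
    have hrow' : r2.succAbove i.castSucc = ⟨(i : ℕ), by omega⟩ := by
      refine Fin.ext ?_
      rw [hsa i.castSucc]
      simp [i.isLt]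
    have hcolne : (Fin.castSucc (Fin.castSucc j)) ≠ r2 := by
      intro h
      have := congrArg Fin.val h
      rw [hr2] at this
      simp at this
      omega
    rw [hrow', hB, Matrix.updateCol_ne hcolne]
    have hrowne : (⟨(i : ℕ), by omega⟩ : Fin (m + 2)) ≠ r2 := by
      intro h
      have := congrArg Fin.val h
      rw [hr2] at this
      simp at this
      omega
    rw [hB0, Matrix.updateRow_ne hrowne]
    show c ((i : ℕ) + ((Fin.castSucc (Fin.castSucc j) : Fin (m + 2)) : ℕ)) = c ((i : ℕ) + (j : ℕ))
    simp
  have hsignB : (-1 : ℂ) ^ ((r2 : ℕ) + ((Fin.last (m + 1) : Fin (m + 2)) : ℕ)) = -1 :=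
    Odd.neg_one_pow ⟨m, by show m + (m + 1) = 2 * m + 1; omega⟩
  have hsignC : (-1 : ℂ) ^ (((Fin.last m : Fin (m + 1)) : ℕ) + ((Fin.last m : Fin (m + 1)) : ℕ))
      = 1 := Even.neg_one_pow ⟨m, by show m + m = m + m; rfl⟩
  have hA0final : Hdet c (m + 2) = -(δ ^ 2 * Hdet c m) := by
    rw [hA0det, ← hdB, hexpB, hBpiv, hsignB, hexpC, hC'piv, hfin, hA2det, hsignC]
    ring
  -- ### Assembly
  refine ⟨?_, ?_, ?_⟩
  · rw [hA0final, hcoeff]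
    ring
  · rw [hA0final]
    simp only [ne_eq, neg_eq_zero]
    exact fun h => absurd h (mul_ne_zero (pow_ne_zero 2 hδ0) h2)
  · rw [hcoeff]
    have hq : (-δ * Hdet c m) / Hdet c m = -δ := by field_simp
    rw [hq, map_neg]
    exact hP3
end

section
/- Let c_j = ∑_{ℓ=1}^m λ_ℓ^j for distinct complex numbers λ_1,...,λ_m, and let 𝓗_k(x) be the k-th Hankel polynomial of {c_j} with m > k. Then ∑_{ℓ=1}^m λ_ℓ^j 𝓗_k(λ_ℓ) = 0 for j ∈ {0,...,k-1}, and ∑_{ℓ=1}^m λ_ℓ^k 𝓗_k(λ_ℓ) = H_{k+1}, where H_{k+1} = det[c_{i+j-2}]_{i,j=1}^{k+1}. -/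
open Finset Polynomial

lemma det_updateRow_sum_multi {n : ℕ} {α : Type*} (A : Matrix (Fin n) (Fin n) ℂ)
    (j : Fin n) (t : Finset α) (g : α → Fin n → ℂ) :
    (A.updateRow j (∑ a ∈ t, g a)).det = ∑ a ∈ t, (A.updateRow j (g a)).det := by
  have h : ∀ u : Fin n → ℂ,
      (A.updateRow j u).det = Matrix.detRowAlternating (Function.update A j u) :=
    fun u => rfl
  simp only [h]
  exact Matrix.detRowAlternating.toMultilinearMap.map_update_sum t j g A

/-- Lemma 2.1: for `c_j = ∑_ℓ λ_ℓ^j` with distinct `λ_ℓ`, `m > k`. -/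
theorem sum_pow_mul_hankel_poly_eval (m k : ℕ) (hm : k < m)
    (lam : Fin m → ℂ) (hlam : Function.Injective lam)
    (c : ℕ → ℂ) (hc : ∀ j : ℕ, c j = ∑ ℓ, lam ℓ ^ j) :
    (∀ j : ℕ, j < k → ∑ ℓ, lam ℓ ^ j * (Hpoly c k).eval (lam ℓ) = 0) ∧
    (∑ ℓ, lam ℓ ^ k * (Hpoly c k).eval (lam ℓ) = Hdet c (k + 1)) := by
  classical
  set base : Matrix (Fin (k+1)) (Fin (k+1)) ℂ :=
    Matrix.of (fun i j' : Fin (k+1) => c ((i : ℕ) + (j' : ℕ))) with hbase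
  have heval : ∀ x : ℂ, (Hpoly c k).eval x =
      (base.updateRow (Fin.last k) (fun j' : Fin (k+1) => x ^ (j' : ℕ))).det := by
    intro x
    have h1 : (Hpoly c k).eval x = ((Matrix.of fun i j' : Fin (k+1) =>
        if (i : ℕ) < k then Polynomial.C (c ((i : ℕ) + (j' : ℕ))) else Polynomial.X ^ (j' : ℕ)).map
        (Polynomial.evalRingHom x)).det := by
      rw [Hpoly, show ∀ p : Polynomial ℂ, eval x p = evalRingHom x p from fun _ => rfl,
        RingHom.map_det, RingHom.mapMatrix_apply]
    rw [h1]
    congr 1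
    ext i j'
    by_cases hi : (i : ℕ) < k
    · have hne : i ≠ Fin.last k := by
        intro h; rw [h] at hi; simp [Fin.val_last] at hi
      simp [Matrix.updateRow_ne hne, Matrix.map_apply, hi, hbase]
    · have hi' : i = Fin.last k := by
        have := i.isLt
        apply Fin.ext
        simp [Fin.val_last]; omega
      subst hi'
      simp [Matrix.updateRow_self, Matrix.map_apply, hi]
  have key : ∀ j : ℕ, ∑ ℓ, lam ℓ ^ j * (Hpoly c k).eval (lam ℓ) =
      (base.updateRow (Fin.last k) (fun j' : Fin (k+1) => c (j + (j' : ℕ)))).det := by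
    intro j
    have hrow : (fun j' : Fin (k+1) => c (j + (j' : ℕ))) =
        ∑ ℓ, lam ℓ ^ j • (fun j' : Fin (k+1) => lam ℓ ^ (j' : ℕ)) := by
      funext j'
      simp [hc, pow_add, Finset.sum_apply]
    rw [hrow, det_updateRow_sum_multi]
    refine Finset.sum_congr rfl fun ℓ _ => ?_
    rw [heval, Matrix.det_updateRow_smul]
  constructor
  · intro j hj
    rw [key j]
    refine Matrix.det_zero_of_row_eq (i := ⟨j, by omega⟩) (j := Fin.last k) ?_ ?_
    · intro h
      have := congrArg Fin.val h
      simp [Fin.val_last] at this; omega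
    · funext j'
      rw [Matrix.updateRow_ne (by intro h; have := congrArg Fin.val h; simp [Fin.val_last] at this; omega),
        Matrix.updateRow_self]
      simp [hbase]
  · rw [key k]
    have : (fun j' : Fin (k+1) => c (k + (j' : ℕ))) = base (Fin.last k) := by
      funext j'; simp [hbase, Fin.val_last]
    rw [this, Matrix.updateRow_eq_self]
    rfl
end

section
/- Let x_1,...,x_N be distinct complex numbers, y_1,...,y_N nonzero complex numbers, W(x) = ∏(x - x_j), and τ̃_k = ∑_{j=1}^N x_j^k / (y_j W'(x_j)). Then the Hankel determinant H_N({τ̃}) = det[τ̃_{i+j-2}]_{i,j=1}^N equals (−1)^{N(N−1)/2} / ∏_{j=1}^N y_j. -/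
open Finset Polynomial
open Matrix

/-- `Wd x j = ∏_{i ≠ j} (x j - x i)`, i.e. `W'(x_j)` where `W(x) = ∏ (x - x_i)`. -/
noncomputable def Wd {N : ℕ} (x : Fin N → ℂ) (j : Fin N) : ℂ :=
  ∏ i ∈ Finset.univ.erase j, (x j - x i)

lemma swap_prod {N : ℕ} (f : Fin N → Fin N → ℂ) :
    (∏ j, ∏ i ∈ Iio j, f i j) = ∏ i, ∏ j ∈ Ioi i, f i j := by
  rw [Finset.prod_comm']
  intro a b
  simp [and_comm]

lemma prod_Wd {N : ℕ} (x : Fin N → ℂ) :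
    ∏ j, Wd x j = (-1 : ℂ) ^ (N * (N - 1) / 2) *
      (∏ i, ∏ j ∈ Ioi i, (x j - x i)) ^ 2 := by
  have herase : ∀ j : Fin N,
      Finset.univ.erase j = (Ioi j).disjUnion (Iio j) (disjoint_Ioi_Iio j) := by
    intro j
    rw [Finset.Ioi_disjUnion_Iio]
    ext i; simp [eq_comm]
  have h1 : ∏ j, Wd x j =
      (∏ j, ∏ i ∈ Ioi j, (x j - x i)) * (∏ j, ∏ i ∈ Iio j, (x j - x i)) := by
    rw [← Finset.prod_mul_distrib]
    refine Finset.prod_congr rfl fun j _ => ?_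
    rw [Wd, herase j, Finset.prod_disjUnion]
  have hf2 : (∏ j, ∏ i ∈ Iio j, (x j - x i)) = ∏ i, ∏ j ∈ Ioi i, (x j - x i) :=
    swap_prod (fun a b => x b - x a)
  have hf1 : (∏ j, ∏ i ∈ Ioi j, (x j - x i)) = ∏ j, ∏ i ∈ Iio j, (x i - x j) :=
    (swap_prod (fun a b => x a - x b)).symm
  have hsign : (∏ j, ∏ i ∈ Iio j, (x i - x j)) =
      (-1 : ℂ) ^ (∑ j : Fin N, (j : ℕ)) * ∏ j, ∏ i ∈ Iio j, (x j - x i) := by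
    rw [← Finset.prod_pow_eq_pow_sum, ← Finset.prod_mul_distrib]
    refine Finset.prod_congr rfl fun j _ => ?_
    rw [← Fin.card_Iio j, ← Finset.prod_const, ← Finset.prod_mul_distrib]
    refine Finset.prod_congr rfl fun i _ => ?_
    ring
  have hsum : (∑ j : Fin N, (j : ℕ)) = N * (N - 1) / 2 := by
    rw [Fin.sum_univ_eq_sum_range (fun i => i) N, Finset.sum_range_id]
  rw [h1, hf1, hsign, hsum, hf2, sq]
  ring

theorem Hdet_tauTilde (N : ℕ) (hN : 0 < N) (x : Fin N → ℂ)
    (hx : Function.Injective x) (y : Fin N → ℂ) (hy : ∀ j, y j ≠ 0)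
    (t : ℕ → ℂ) (ht : ∀ k, t k = ∑ j, x j ^ k / (y j * Wd x j)) :
    Hdet t N = (-1 : ℂ) ^ (N * (N - 1) / 2) / ∏ j, y j := by
  classical
  set d : Fin N → ℂ := fun j => (y j * Wd x j)⁻¹ with hd
  set V : Matrix (Fin N) (Fin N) ℂ := Matrix.vandermonde x with hV
  have hM : (Matrix.of fun i j : Fin N => t ((i : ℕ) + (j : ℕ)))
      = Vᵀ * Matrix.diagonal d * V := by
    ext i j
    rw [Matrix.mul_apply]
    simp only [Matrix.mul_diagonal, Matrix.transpose_apply, Matrix.of_apply, hV,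
      Matrix.vandermonde_apply, ht]
    refine Finset.sum_congr rfl fun k _ => ?_
    rw [div_eq_mul_inv, pow_add]
    ring
  have hWd : ∀ j, Wd x j ≠ 0 := by
    intro j
    refine Finset.prod_ne_zero_iff.2 fun i hi => ?_
    rw [Finset.mem_erase] at hi
    exact sub_ne_zero.2 fun h => hi.1 (hx h).symm
  have hVd : V.det ≠ 0 := Matrix.det_vandermonde_ne_zero_iff.2 hx
  have hdet : Hdet t N = V.det ^ 2 * ∏ j, d j := by
    rw [Hdet, hM, Matrix.det_mul, Matrix.det_mul, Matrix.det_transpose,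
      Matrix.det_diagonal, sq]
    ring
  have hprodd : (∏ j, d j) = ((∏ j, y j) * ∏ j, Wd x j)⁻¹ := by
    rw [← Finset.prod_mul_distrib, ← Finset.prod_inv_distrib]
  have hVdet : V.det = ∏ i, ∏ j ∈ Ioi i, (x j - x i) := Matrix.det_vandermonde x
  have hPW : ∏ j, Wd x j = (-1 : ℂ) ^ (N * (N - 1) / 2) * V.det ^ 2 := by
    rw [prod_Wd x, hVdet]
  have hy' : (∏ j, y j) ≠ 0 := Finset.prod_ne_zero_iff.2 fun j _ => hy j
  rw [hdet, hprodd, hPW]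
  have hm1 : ((-1 : ℂ) ^ (N * (N - 1) / 2)) ≠ 0 := by
    simp
  field_simp
  have h2 : ((-1 : ℂ)) ^ (N * (N - 1) / 2 * 2) = 1 := by
    rw [mul_comm, pow_mul]; norm_num
  linear_combination (-1 : ℂ) * h2
end

section
/- Let x_1,...,x_N be distinct, y_1,...,y_N nonzero, W(x)=∏(x−x_j), and τ̃_k = ∑_{j=1}^N x_j^k/(y_j W'(x_j)). Then the N-th Hankel polynomial satisfies 𝓗_N(x;{τ̃}) ≡ ((−1)^{N(N−1)/2} / ∏_{j=1}^N y_j) · ∏_{j=1}^N (x − x_j). -/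
open Finset Polynomial
open Matrix

/-- helper: product over `Ioi i.castSucc` splits off the last element. -/
lemma prod_Ioi_castSucc' {M : Type*} [CommMonoid M] {n : ℕ} (f : Fin (n + 1) → M) (i : Fin n) :
    ∏ j ∈ Ioi i.castSucc, f j = (∏ j ∈ Ioi i, f j.castSucc) * f (Fin.last n) := by
  have h : Ioi i.castSucc = insert (Fin.last n) ((Ioi i).map ⟨Fin.castSucc, Fin.castSucc_injective n⟩) := by
    ext j
    simp only [mem_Ioi, mem_insert, mem_map, Function.Embedding.coeFn_mk]
    constructor
    · intro hj
      rcases Fin.eq_castSucc_or_eq_last j with ⟨k, rfl⟩ | rfl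
      · exact Or.inr ⟨k, by simpa using hj, rfl⟩
      · exact Or.inl rfl
    · rintro (rfl | ⟨k, hk, rfl⟩)
      · exact Fin.castSucc_lt_last i
      · simpa using hk
  rw [h, Finset.prod_insert, Finset.prod_map, mul_comm]
  · rfl
  · simp only [mem_map, Function.Embedding.coeFn_mk]
    rintro ⟨k, -, hk⟩
    exact absurd hk (Fin.castSucc_lt_last k).ne

theorem hankel_poly_N_eq_nodes_poly (N : ℕ) (hN : 0 < N) (x : Fin N → ℂ)
    (hx : Function.Injective x) (y : Fin N → ℂ) (hy : ∀ j, y j ≠ 0)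
    (t : ℕ → ℂ) (ht : ∀ k, t k = ∑ j, x j ^ k / (y j * Wd x j)) :
    Hpoly t N =
      C ((-1 : ℂ) ^ (N * (N - 1) / 2) / ∏ j, y j) * ∏ j, (X - C (x j)) := by
  classical
  set a : Fin N → ℂ := fun j => (y j * Wd x j)⁻¹ with ha
  set A : Matrix (Fin N) (Fin N) ℂ[X] :=
    ((Matrix.diagonal fun j => (C (a j) : ℂ[X])) * Matrix.vandermonde fun j => C (x j))ᵀ with hA
  set B : Matrix (Fin (N + 1)) (Fin (N + 1)) ℂ[X] :=
    (Matrix.fromBlocks A 0 0 (1 : Matrix (Fin 1) (Fin 1) ℂ[X])).submatrix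
      finSumFinEquiv.symm finSumFinEquiv.symm with hB
  set w : Fin (N + 1) → ℂ[X] := fun j => if h : (j : ℕ) < N then C (x ⟨j, h⟩) else X with hw
  set U : Matrix (Fin (N + 1)) (Fin (N + 1)) ℂ[X] := Matrix.vandermonde w with hU
  have hsymm_cast : ∀ k : Fin N, finSumFinEquiv.symm k.castSucc = Sum.inl k := by
    intro k
    rw [Equiv.symm_apply_eq, finSumFinEquiv_apply_left]
    rfl
  have hsymm_last : finSumFinEquiv.symm (Fin.last N) = Sum.inr (0 : Fin 1) := by
    rw [Equiv.symm_apply_eq, finSumFinEquiv_apply_right]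
    ext
    simp
  have hAe : ∀ i l : Fin N, A i l = C (a l) * C (x l) ^ (i : ℕ) := by
    intro i l
    simp only [hA, Matrix.transpose_apply, Matrix.diagonal_mul, Matrix.vandermonde_apply]
    try ring
  have hwc : ∀ k : Fin N, w k.castSucc = C (x k) := by
    intro k
    simp only [hw, Fin.coe_castSucc, k.isLt, dif_pos]
  have hwl : w (Fin.last N) = X := by
    simp [hw]
  have key : (Matrix.of fun i j : Fin (N + 1) =>
      if (i : ℕ) < N then C (t ((i : ℕ) + (j : ℕ))) else X ^ (j : ℕ)) = B * U := by
    funext i j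
    rw [Matrix.mul_apply]
    refine Fin.lastCases ?_ ?_ i
    · rw [Fin.sum_univ_castSucc]
      simp only [hB, Matrix.submatrix_apply, hsymm_last, hsymm_cast]
      simp only [Matrix.fromBlocks_apply₂₁, Matrix.fromBlocks_apply₂₂, Matrix.zero_apply,
        Matrix.one_apply_eq, zero_mul, Finset.sum_const_zero, one_mul, zero_add]
      simp only [hU, Matrix.vandermonde_apply, hwl]
      simp
    · intro i
      have hilt : ((i.castSucc : Fin (N + 1)) : ℕ) < N := by simpa using i.isLt
      simp only [Matrix.of_apply, hilt, if_pos]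
      rw [Fin.sum_univ_castSucc]
      simp only [hB, Matrix.submatrix_apply, hsymm_last, hsymm_cast]
      simp only [Matrix.fromBlocks_apply₁₁, Matrix.fromBlocks_apply₁₂, Matrix.zero_apply,
        zero_mul, add_zero]
      have hterm : ∀ k : Fin N, A i k * U k.castSucc j = C (a k * x k ^ ((i.castSucc : ℕ) + (j : ℕ))) := by
        intro k
        rw [hAe, hU]
        simp only [Matrix.vandermonde_apply, hwc, Fin.coe_castSucc, pow_add, _root_.map_mul,
          map_pow]
        ring
      rw [Finset.sum_congr rfl (fun k _ => hterm k), ← map_sum]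
      refine congrArg C ?_
      rw [ht]
      refine Finset.sum_congr rfl fun k _ => ?_
      simp [ha, div_eq_mul_inv, mul_comm]
  have hdetB : B.det = A.det := by
    rw [hB, Matrix.det_submatrix_equiv_self, Matrix.det_fromBlocks_zero₂₁, Matrix.det_one, mul_one]
  set v : ℂ := ∏ i : Fin N, ∏ j ∈ Ioi i, (x j - x i) with hv
  have hdetA : A.det = C ((∏ j, a j) * v) := by
    rw [hA, Matrix.det_transpose, Matrix.det_mul, Matrix.det_diagonal, Matrix.det_vandermonde]
    simp only [hv, _root_.map_mul, map_prod, map_sub]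
  have hdetU : U.det = C v * ∏ j, (X - C (x j)) := by
    rw [hU, Matrix.det_vandermonde, Fin.prod_univ_castSucc]
    have hlast : ∏ j ∈ Ioi (Fin.last N), (w j - w (Fin.last N)) = 1 := by
      apply Finset.prod_eq_one
      intro j hj
      exact absurd (Finset.mem_Ioi.mp hj) (not_lt.mpr j.le_last)
    rw [hlast, mul_one]
    have hrow : ∀ i : Fin N, ∏ j ∈ Ioi i.castSucc, (w j - w i.castSucc)
        = (∏ j ∈ Ioi i, (C (x j) - C (x i))) * (X - C (x i)) := by
      intro i
      rw [prod_Ioi_castSucc']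
      simp only [hwc, hwl]
    rw [Finset.prod_congr rfl (fun i _ => hrow i), Finset.prod_mul_distrib]
    congr 1
    simp only [hv, map_prod, map_sub]
  have hvne : v ≠ 0 := by
    rw [hv, Finset.prod_ne_zero_iff]
    intro i _
    rw [Finset.prod_ne_zero_iff]
    intro j hj
    exact sub_ne_zero.mpr fun h => (Finset.mem_Ioi.mp hj).ne' (hx h)
  have hcard : ∑ i : Fin N, (Ioi i).card = N * (N - 1) / 2 := by
    calc ∑ i : Fin N, (Ioi i).card
        = ∑ i : Fin N, (N - 1 - (i : ℕ)) := Finset.sum_congr rfl fun i _ => Fin.card_Ioi i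
      _ = ∑ k ∈ Finset.range N, (N - 1 - k) := Fin.sum_univ_eq_sum_range _ N
      _ = ∑ k ∈ Finset.range N, k := Finset.sum_range_reflect (fun k => k) N
      _ = N * (N - 1) / 2 := Finset.sum_range_id N
  have hWdprod : (∏ j, Wd x j) = (-1 : ℂ) ^ (N * (N - 1) / 2) * (v * v) := by
    have h1 : (∏ i, ∏ j ∈ Ioi i, ((x i - x j) * (x j - x i)))
        = ∏ i, ∏ j ∈ Finset.univ.erase i, (x i - x j) := by
      rw [Finset.prod_prod_Ioi_mul_eq_prod_prod_off_diag fun b c => x c - x b]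
      refine Finset.prod_congr rfl fun i _ => Finset.prod_congr ?_ fun j _ => rfl
      ext j
      simp
    have h2 : (∏ j, Wd x j) = ∏ i, ∏ j ∈ Finset.univ.erase i, (x i - x j) :=
      Finset.prod_congr rfl fun i _ => rfl
    have h3 : ∀ i : Fin N, ∏ j ∈ Ioi i, ((x i - x j) * (x j - x i))
        = (-1 : ℂ) ^ (Ioi i).card * ∏ j ∈ Ioi i, ((x j - x i) * (x j - x i)) := by
      intro i
      rw [← Finset.prod_const, ← Finset.prod_mul_distrib]
      exact Finset.prod_congr rfl fun j _ => by ring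
    rw [h2, ← h1]
    calc (∏ i, ∏ j ∈ Ioi i, ((x i - x j) * (x j - x i)))
        = ∏ i, ((-1 : ℂ) ^ (Ioi i).card * ∏ j ∈ Ioi i, ((x j - x i) * (x j - x i))) :=
          Finset.prod_congr rfl fun i _ => h3 i
      _ = ((-1 : ℂ) ^ ∑ i : Fin N, (Ioi i).card) *
            ∏ i, ∏ j ∈ Ioi i, ((x j - x i) * (x j - x i)) := by
          rw [Finset.prod_mul_distrib, Finset.prod_pow_eq_pow_sum]
      _ = (-1 : ℂ) ^ (N * (N - 1) / 2) * (v * v) := by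
          rw [hcard]
          congr 1
          rw [hv, ← Finset.prod_mul_distrib]
          exact Finset.prod_congr rfl fun i _ => by rw [← Finset.prod_mul_distrib]
  have hscalar : (∏ j, a j) * (v * v) = (-1 : ℂ) ^ (N * (N - 1) / 2) / ∏ j, y j := by
    have hprod : (∏ j, a j) = ((∏ j, y j) * ∏ j, Wd x j)⁻¹ := by
      rw [ha, ← Finset.prod_mul_distrib, ← Finset.prod_inv_distrib]
    rw [hprod, hWdprod]
    have hyne : (∏ j, y j) ≠ 0 := Finset.prod_ne_zero_iff.mpr fun j _ => hy j
    have hm1 : ((-1 : ℂ) ^ (N * (N - 1) / 2)) ≠ 0 := pow_ne_zero _ (by norm_num)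
    have hvv : v * v ≠ 0 := mul_ne_zero hvne hvne
    rw [mul_inv, mul_inv, ← inv_pow, inv_neg, inv_one, div_eq_mul_inv]
    field_simp
  rw [Hpoly, key, Matrix.det_mul, hdetB, hdetA, hdetU, ← mul_assoc, ← _root_.map_mul,
    show (∏ j, a j) * v * v = (∏ j, a j) * (v * v) by ring, hscalar]
end

section
/- Let x_1,...,x_N be distinct complex numbers, p(x) = p_0 x^n + ... + p_n a polynomial of degree n < N−1 with p_0 ≠ 0 and simple zeros, such that y_j := p(x_j) ≠ 0 for all j. Define τ̃_k = ∑_{j=1}^N x_j^k/(y_j W'(x_j)) where W(x)=∏(x−x_j). Then 𝓗_n(x;{τ̃}) ≡ ((−1)^{Nn + n(n+1)/2} p_0^{N−n−1} / ∏_{j=1}^N y_j) · p(x). -/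
open Finset Polynomial

/-! Auxiliary lemmas -/

lemma residue_sum_eq_zero {ι : Type*} [Fintype ι] [DecidableEq ι] (z : ι → ℂ)
    (hz : Function.Injective z) (k : ℕ) (hk : k + 2 ≤ Fintype.card ι) :
    ∑ i, z i ^ k * (∏ j ∈ Finset.univ.erase i, (z i - z j))⁻¹ = 0 := by
  have hcard : (Finset.univ : Finset ι).card = Fintype.card ι := rfl
  have hinj : Set.InjOn z (Finset.univ : Finset ι) := hz.injOn
  have hdeg : ((X : ℂ[X]) ^ k).degree < (Finset.univ : Finset ι).card := by
    rw [degree_X_pow, hcard]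
    exact_mod_cast lt_of_lt_of_le (by omega : k < Fintype.card ι) le_rfl
  have hint := Lagrange.eq_interpolate (f := (X : ℂ[X]) ^ k) hinj hdeg
  have hcoeff : ∀ i : ι, (Lagrange.basis Finset.univ z i).coeff (Fintype.card ι - 1)
      = (∏ j ∈ Finset.univ.erase i, (z i - z j))⁻¹ := by
    intro i
    have hb : Lagrange.basis Finset.univ z i =
        C ((∏ j ∈ Finset.univ.erase i, (z i - z j))⁻¹) *
          ∏ j ∈ Finset.univ.erase i, (X - C (z j)) := by
      unfold Lagrange.basis Lagrange.basisDivisor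
      rw [Finset.prod_mul_distrib, ← map_prod, ← Finset.prod_inv_distrib]
    have hmon : (∏ j ∈ Finset.univ.erase i, (X - C (z j))).Monic :=
      monic_prod_of_monic _ _ fun j _ => monic_X_sub_C _
    have hnd : (∏ j ∈ Finset.univ.erase i, (X - C (z j))).natDegree = Fintype.card ι - 1 := by
      rw [natDegree_prod_of_monic _ _ fun j _ => monic_X_sub_C _]
      simp [hcard]
    rw [hb, coeff_C_mul, ← hnd, hmon.coeff_natDegree, mul_one]
  have := congrArg (fun q : ℂ[X] => q.coeff (Fintype.card ι - 1)) hint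
  simp only [Lagrange.interpolate_apply, finset_sum_coeff, coeff_C_mul, eval_pow, eval_X] at this
  rw [coeff_X_pow] at this
  have hk' : ¬ (Fintype.card ι - 1 = k) := by omega
  simp only [hk', if_false] at this
  simp only [hcoeff] at this
  exact this.symm

section aux
variable {α β : Type*} [Fintype α] [Fintype β] [DecidableEq α] [DecidableEq β]
variable {M : Type*} [CommMonoid M]

lemma erase_univ_inl (a : α) :
    (Finset.univ : Finset (α ⊕ β)).erase (Sum.inl a) =
      ((Finset.univ.erase a).disjSum Finset.univ) := by
  ext (b | c) <;> simp

lemma erase_univ_inr (c : β) :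
    (Finset.univ : Finset (α ⊕ β)).erase (Sum.inr c) =
      (Finset.univ.disjSum (Finset.univ.erase c)) := by
  ext (b | d) <;> simp

lemma prod_erase_inl (a : α) (f : α ⊕ β → M) :
    ∏ j ∈ Finset.univ.erase (Sum.inl a), f j =
      (∏ b ∈ Finset.univ.erase a, f (Sum.inl b)) * ∏ c, f (Sum.inr c) := by
  rw [erase_univ_inl, Finset.prod_disjSum]

lemma prod_erase_inr (c : β) (f : α ⊕ β → M) :
    ∏ j ∈ Finset.univ.erase (Sum.inr c), f j =
      (∏ a, f (Sum.inl a)) * ∏ d ∈ Finset.univ.erase c, f (Sum.inr d) := by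
  rw [erase_univ_inr, Finset.prod_disjSum]

end aux

lemma det_vandermonde_cons {R : Type*} [CommRing R] {n : ℕ} (a : R) (w : Fin n → R) :
    (Matrix.vandermonde (Fin.cons a w)).det =
      (∏ i, (w i - a)) * (Matrix.vandermonde w).det := by
  rw [Matrix.det_vandermonde, Matrix.det_vandermonde, Fin.prod_univ_succ]
  congr 1
  · rw [Fin.prod_Ioi_zero]
    simp
  · refine Finset.prod_congr rfl fun i _ => ?_
    rw [Fin.prod_Ioi_succ]
    simp

lemma prod_offdiag {n : ℕ} (r : Fin n → ℂ) :
    ∏ c, ∏ d ∈ Finset.univ.erase c, (r c - r d) =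
      (-1 : ℂ) ^ (n * (n - 1) / 2) * (∏ c, ∏ d ∈ Finset.Ioi c, (r d - r c)) ^ 2 := by
  have herase : ∀ c : Fin n, Finset.univ.erase c = Finset.Ioi c ∪ Finset.Iio c := by
    intro c; ext d
    simp [Finset.mem_erase, Finset.mem_Ioi, Finset.mem_Iio, lt_or_lt_iff_ne, ne_comm, or_comm]
  have hdisj : ∀ c : Fin n, Disjoint (Finset.Ioi c) (Finset.Iio c) := by
    intro c
    exact Finset.disjoint_left.2 fun d hd hd' => absurd (Finset.mem_Iio.1 hd')
      (not_lt.2 (le_of_lt (Finset.mem_Ioi.1 hd)))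
  calc ∏ c, ∏ d ∈ Finset.univ.erase c, (r c - r d)
      = (∏ c, ∏ d ∈ Finset.Ioi c, (r c - r d)) * ∏ c, ∏ d ∈ Finset.Iio c, (r c - r d) := by
        rw [← Finset.prod_mul_distrib]
        refine Finset.prod_congr rfl fun c _ => ?_
        rw [herase c, Finset.prod_union (hdisj c)]
    _ = ((-1 : ℂ) ^ (n * (n - 1) / 2) * ∏ c, ∏ d ∈ Finset.Ioi c, (r d - r c)) *
          ∏ c, ∏ d ∈ Finset.Iio c, (r c - r d) := by
        congr 1
        have : ∀ c : Fin n, ∏ d ∈ Finset.Ioi c, (r c - r d) =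
            (-1 : ℂ) ^ (Finset.Ioi c).card * ∏ d ∈ Finset.Ioi c, (r d - r c) := by
          intro c
          rw [← Finset.prod_const, ← Finset.prod_mul_distrib]
          exact Finset.prod_congr rfl fun d _ => by ring
        rw [Finset.prod_congr rfl fun c _ => this c, Finset.prod_mul_distrib,
          Finset.prod_pow_eq_pow_sum]
        congr 2
        have h1 : ∑ c : Fin n, (Finset.Ioi c).card = ∑ c : Fin n, (n - 1 - (c : ℕ)) :=
          Finset.sum_congr rfl fun c _ => by rw [Fin.card_Ioi]
        rw [h1, Fin.sum_univ_eq_sum_range (fun i => n - 1 - i), ← Finset.sum_range_reflect]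
        have h2 : (∑ j ∈ Finset.range n, j) * 2 = n * (n - 1) := by
          rw [Finset.sum_range_id_mul_two]
        have h3 : ∀ j ∈ Finset.range n, n - 1 - (n - 1 - j) = j := fun j hj => by
          rw [Finset.mem_range] at hj; omega
        rw [Finset.sum_congr rfl h3]
        omega
    _ = (-1 : ℂ) ^ (n * (n - 1) / 2) * (∏ c, ∏ d ∈ Finset.Ioi c, (r d - r c)) ^ 2 := by
        rw [mul_assoc, sq]
        congr 2
        rw [Finset.prod_comm' (t' := Finset.univ) (s' := fun d => Finset.Ioi d)
          (fun c d => by simp [Finset.mem_Iio, Finset.mem_Ioi])]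

lemma const_calc (P Y D : ℂ) (hP : P ≠ 0) (hY : Y ≠ 0) (hD : D ≠ 0) (n N k1 k2 : ℕ)
    (hnN : n + 1 ≤ N) :
    (-1:ℂ)^n * (P⁻¹)^n * (((-1:ℂ)^k1 * (P⁻¹)^N * Y) * ((-1:ℂ)^k2 * D^2))⁻¹ * D^2 * P⁻¹
      = (-1:ℂ)^(n + k1 + k2) * P^(N-n-1) / Y := by
  have hpp : P ^ (N - n - 1) * P ^ (n + 1) = P ^ N := by
    rw [← pow_add]; congr 1; omega
  have hs1 : ∀ m : ℕ, ((-1:ℂ)^m) * ((-1:ℂ)^m) = 1 := fun m => by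
    rw [← pow_add]; exact Even.neg_one_pow ⟨m, rfl⟩
  have hsinv : ∀ m : ℕ, ((-1:ℂ) ^ m)⁻¹ = (-1:ℂ) ^ m := fun m => by
    rw [← inv_pow]; norm_num
  have hT : (((-1:ℂ)^k1 * (P⁻¹)^N * Y) * ((-1:ℂ)^k2 * D^2))⁻¹
      = ((-1:ℂ)^k1 * P^N * Y⁻¹) * ((-1:ℂ)^k2 * (D^2)⁻¹) := by
    simp only [mul_inv, inv_pow, inv_inv, hsinv]
  have hP3 : P ^ (N - n - 1) * P ^ n * P = P ^ N := by
    rw [mul_assoc, ← pow_succ, ← pow_add]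
    congr 1
    omega
  have hPn : P ^ n * (P⁻¹) ^ n = 1 := by rw [← mul_pow, mul_inv_cancel₀ hP, one_pow]
  have hP1 : P * P⁻¹ = 1 := mul_inv_cancel₀ hP
  have hD2 : (D ^ 2)⁻¹ * D ^ 2 = 1 := inv_mul_cancel₀ (pow_ne_zero 2 hD)
  rw [hT, ← hP3, div_eq_mul_inv, pow_add, pow_add]
  linear_combination ((-1:ℂ)^n * (-1:ℂ)^k1 * (-1:ℂ)^k2 * P^(N-n-1) * Y⁻¹ * (P * P⁻¹) *
      ((D^2)⁻¹ * D^2)) * hPn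
    + ((-1:ℂ)^n * (-1:ℂ)^k1 * (-1:ℂ)^k2 * P^(N-n-1) * Y⁻¹ * ((D^2)⁻¹ * D^2)) * hP1
    + ((-1:ℂ)^n * (-1:ℂ)^k1 * (-1:ℂ)^k2 * P^(N-n-1) * Y⁻¹) * hD2


theorem hankel_poly_n_of_redundant_table (N n : ℕ) (hn : n + 1 < N)
    (x : Fin N → ℂ) (hx : Function.Injective x)
    (p : Polynomial ℂ) (hpdeg : p.natDegree = n) (hp0 : p.leadingCoeff ≠ 0)
    (hsimple : p.roots.Nodup)
    (y : Fin N → ℂ) (hy : ∀ j, y j = p.eval (x j)) (hy0 : ∀ j, y j ≠ 0)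
    (t : ℕ → ℂ) (ht : ∀ k, t k = ∑ j, x j ^ k / (y j * Wd x j)) :
    Hpoly t n =
      C ((-1 : ℂ) ^ (N * n + n * (n + 1) / 2) * p.leadingCoeff ^ (N - n - 1) /
          ∏ j, y j) * p := by
  classical
  set p0 := p.leadingCoeff with hp0def
  have hpne : p ≠ 0 := fun h => hp0 (by simp [hp0def, h])
  have hroots_card : Multiset.card p.roots = n := by
    rw [← hpdeg]
    exact (Polynomial.splits_iff_card_roots.mp (IsAlgClosed.splits p))
  set L := p.roots.toList with hLdef
  have hLlen : L.length = n := by rw [hLdef, Multiset.length_toList, hroots_card]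
  set r : Fin n → ℂ := fun i => L.get (Fin.cast hLlen.symm i) with hrdef
  have hLnd : L.Nodup := by
    rw [← Multiset.coe_nodup, hLdef, Multiset.coe_toList]; exact hsimple
  have hr_inj : Function.Injective r := by
    intro i j h
    have h2 := List.nodup_iff_injective_get.mp hLnd h
    exact Fin.ext (by simpa using congrArg Fin.val h2)
  -- multiset products as products over `Fin n`
  have hprod : ∀ (f : ℂ → ℂ[X]), (p.roots.map f).prod = ∏ i : Fin n, f (r i) := by
    intro f
    conv_lhs => rw [← Multiset.coe_toList p.roots]
    rw [← hLdef, Multiset.map_coe, Multiset.prod_coe]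
    conv_lhs => rw [← List.ofFn_get L]
    rw [List.map_ofFn, List.prod_ofFn]
    show ∏ i : Fin L.length, f (L.get i) = ∏ i : Fin n, f (r i)
    exact (Fin.prod_congr' (fun i : Fin L.length => f (L.get i)) hLlen.symm).symm
  have hfact : C p0 * ∏ i, (X - C (r i)) = p := by
    rw [← hprod (fun a => X - C a)]
    exact Polynomial.C_leadingCoeff_mul_prod_multiset_X_sub_C (hroots_card.trans hpdeg.symm)
  have hpr : ∀ i, p.eval (r i) = 0 := by
    intro i
    apply Polynomial.isRoot_of_mem_roots
    rw [← Multiset.mem_toList, ← hLdef]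
    exact List.get_mem L _
  have hyval : ∀ j, y j = p0 * ∏ i, (x j - r i) := by
    intro j
    rw [hy j, ← hfact]
    simp [Polynomial.eval_prod]
  have hxr : ∀ j i, x j - r i ≠ 0 := by
    intro j i h
    apply hy0 j
    rw [hy j, show x j = r i from by linear_combination h, hpr i]
  -- injectivity of combined nodes
  have hz : Function.Injective (Sum.elim x r) := by
    rintro (a | c) (b | d) h <;> simp only [Sum.elim_inl, Sum.elim_inr] at h
    · rw [hx h]
    · exact absurd (sub_eq_zero.mpr h) (hxr a d)
    · exact absurd (sub_eq_zero.mpr h.symm) (hxr b c)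
    · rw [hr_inj h]
  set q : Fin n → ℂ := fun c => (∏ a, (r c - x a)) * ∏ d ∈ Finset.univ.erase c, (r c - r d)
    with hqdef
  set v : Fin n → ℂ := fun c => -(p0⁻¹ * (q c)⁻¹) with hvdef
  have hWd : ∀ a, Wd x a ≠ 0 := by
    intro a
    refine Finset.prod_ne_zero_iff.mpr fun b hb => ?_
    exact sub_ne_zero_of_ne fun h => (Finset.mem_erase.mp hb).1 (hx h).symm
  -- the moment representation of t
  have htk : ∀ k, k + 2 ≤ N + n → t k = ∑ c, v c * r c ^ k := by
    intro k hk
    have h0 := residue_sum_eq_zero (Sum.elim x r) hz k (by simpa using hk)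
    rw [Fintype.sum_sum_type] at h0
    have hL1 : ∀ a : Fin N,
        (∏ j ∈ Finset.univ.erase (Sum.inl a), (x a - Sum.elim x r j))
          = Wd x a * (p0⁻¹ * y a) := by
      intro a
      rw [prod_erase_inl a (fun j => x a - Sum.elim x r j)]
      simp only [Sum.elim_inl, Sum.elim_inr]
      rw [hyval a, ← mul_assoc p0⁻¹, inv_mul_cancel₀ hp0, one_mul]
      rfl
    have hL2 : ∀ c : Fin n,
        (∏ j ∈ Finset.univ.erase (Sum.inr c), (r c - Sum.elim x r j))
          = q c := by
      intro c
      rw [prod_erase_inr c (fun j => r c - Sum.elim x r j)]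
      simp only [Sum.elim_inl, Sum.elim_inr, hqdef]
    simp only [Sum.elim_inl, Sum.elim_inr] at h0
    simp only [hL1, hL2] at h0
    have hsum1 : ∑ a, x a ^ k * (Wd x a * (p0⁻¹ * y a))⁻¹ = p0 * t k := by
      rw [ht k, Finset.mul_sum]
      refine Finset.sum_congr rfl fun a _ => ?_
      have := hWd a
      have := hy0 a
      field_simp
    have hsum2 : ∑ c, r c ^ k * (q c)⁻¹ = -(p0 * ∑ c, v c * r c ^ k) := by
      rw [Finset.mul_sum, ← Finset.sum_neg_distrib]
      refine Finset.sum_congr rfl fun c _ => ?_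
      rw [hvdef]
      simp only
      field_simp
    rw [hsum1, hsum2] at h0
    exact mul_left_cancel₀ hp0 (by linear_combination h0)
  -- matrix decomposition
  set zz : Fin (n + 1) → ℂ[X] := Fin.cons X (fun m => C (r m)) with hzzdef
  set B : Matrix (Fin (n + 1)) (Fin (n + 1)) ℂ[X] := Matrix.of fun i j =>
    Fin.cases (motive := fun _ => ℂ[X])
      (Fin.cases (motive := fun _ => ℂ[X]) 1 (fun _ => 0) j)
      (fun i' => Fin.cases (motive := fun _ => ℂ[X]) 0
        (fun j' => C (v j' * r j' ^ (i' : ℕ))) j) i with hBdef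
  set Mh : Matrix (Fin (n + 1)) (Fin (n + 1)) ℂ[X] := Matrix.of fun i j =>
    if (i : ℕ) < n then C (t ((i : ℕ) + (j : ℕ))) else X ^ (j : ℕ) with hMhdef
  have hHpoly : Hpoly t n = Mh.det := rfl
  set ρ : Equiv.Perm (Fin (n + 1)) := (finRotate (n + 1))⁻¹ with hρdef
  have hρ0 : ρ 0 = Fin.last n := by
    rw [hρdef]
    rw [Equiv.Perm.inv_def, Equiv.symm_apply_eq]
    exact finRotate_last.symm
  have hρs : ∀ i' : Fin n, ρ i'.succ = i'.castSucc := by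
    intro i'
    rw [hρdef, Equiv.Perm.inv_def, Equiv.symm_apply_eq, finRotate_succ_apply]
    exact Fin.ext (by rw [Fin.val_add_one_of_lt (Fin.castSucc_lt_last i')]; simp)
  have hdecomp : Mh.submatrix ρ id = B * Matrix.vandermonde zz := by
    apply Matrix.ext
    intro i j
    rw [Matrix.mul_apply]
    refine Fin.cases ?_ (fun i' => ?_) i
    · rw [Matrix.submatrix_apply, id, hρ0]
      rw [Fin.sum_univ_succ]
      simp only [hBdef, Matrix.of_apply, Fin.cases_zero, Fin.cases_succ,
        Matrix.vandermonde_apply, hzzdef,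
        Fin.cons_zero, Fin.cons_succ, one_mul, zero_mul, Finset.sum_const_zero, add_zero,
        hMhdef]
      rw [if_neg (by simp)]
    · rw [Matrix.submatrix_apply, id, hρs i']
      rw [Fin.sum_univ_succ]
      simp only [hBdef, Matrix.of_apply, Fin.cases_succ, Fin.cases_zero, Matrix.vandermonde_apply,
        hzzdef, Fin.cons_zero, Fin.cons_succ, zero_mul, zero_add, hMhdef]
      rw [if_pos (by simpa using i'.isLt)]
      have : ∀ m : Fin n, C (v m * r m ^ (i' : ℕ)) * C (r m) ^ (j : ℕ)
          = C (v m * r m ^ ((i' : ℕ) + (j : ℕ))) := by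
        intro m
        rw [← map_pow, ← map_mul, pow_add]
        ring_nf
      rw [Finset.sum_congr rfl fun m _ => this m, ← map_sum]
      congr 1
      rw [Fin.coe_castSucc]
      exact htk ((i' : ℕ) + (j : ℕ)) (by have := i'.isLt; have := j.isLt; omega)
  -- determinant of B
  have hdetB : B.det = C ((∏ c, v c) * (Matrix.vandermonde r).det) := by
    rw [Matrix.det_succ_row_zero, Fin.sum_univ_succ]
    have hB00 : B 0 0 = 1 := rfl
    have hB0s : ∀ j' : Fin n, B 0 j'.succ = 0 := fun j' => rfl
    simp only [hB00, hB0s, mul_zero, zero_mul, Finset.sum_const_zero, add_zero,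
      Fin.val_zero, pow_zero, one_mul, mul_one]
    have hsub : B.submatrix Fin.succ (Fin.succAbove 0) =
        (C : ℂ →+* ℂ[X]).mapMatrix ((Matrix.vandermonde r).transpose * Matrix.diagonal v) := by
      apply Matrix.ext
      intro i' j'
      rw [Fin.succAbove_zero, Matrix.submatrix_apply, RingHom.mapMatrix_apply, Matrix.map_apply,
        Matrix.mul_diagonal, Matrix.transpose_apply, Matrix.vandermonde_apply]
      show C (v j' * r j' ^ (i' : ℕ)) = C (r j' ^ (i' : ℕ) * v j')
      rw [mul_comm]
    rw [hsub, ← RingHom.map_det, Matrix.det_mul,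
      Matrix.det_transpose, Matrix.det_diagonal, mul_comm]
  -- determinant of the vandermonde
  have hdetV : (Matrix.vandermonde zz).det =
      (-1 : ℂ[X]) ^ n * (∏ m, (X - C (r m))) * C (Matrix.vandermonde r).det := by
    rw [hzzdef, det_vandermonde_cons]
    have h1 : ∏ i, (C (r i) - X) = (-1 : ℂ[X]) ^ n * ∏ m, (X - C (r m)) := by
      calc ∏ i, (C (r i) - X) = ∏ i, ((-1 : ℂ[X]) * (X - C (r i))) :=
            Finset.prod_congr rfl fun m _ => by ring
        _ = (-1 : ℂ[X]) ^ n * ∏ m, (X - C (r m)) := by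
            rw [Finset.prod_mul_distrib, Finset.prod_const, Finset.card_univ, Fintype.card_fin]
    have h2 : (Matrix.vandermonde fun m => C (r m)).det = C (Matrix.vandermonde r).det := by
      have hmap : (Matrix.vandermonde fun m => C (r m)) =
          (C : ℂ →+* ℂ[X]).mapMatrix (Matrix.vandermonde r) := by
        apply Matrix.ext
        intro i j
        rw [RingHom.mapMatrix_apply, Matrix.map_apply, Matrix.vandermonde_apply,
          Matrix.vandermonde_apply, map_pow]
      rw [hmap]
      exact ((C : ℂ →+* ℂ[X]).map_det _).symm
    rw [h1, h2]
  -- nonvanishing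
  have hVdm : (Matrix.vandermonde r).det ≠ 0 := Matrix.det_vandermonde_ne_zero_iff.mpr hr_inj
  have hY : (∏ j, y j) ≠ 0 := Finset.prod_ne_zero_iff.mpr fun j _ => hy0 j
  -- put determinants together
  have hMhdet : Mh.det = C ((∏ c, v c) * (Matrix.vandermonde r).det ^ 2) *
      ∏ m, (X - C (r m)) := by
    have hpermdet : (Mh.submatrix ρ id).det = Equiv.Perm.sign ρ * Mh.det :=
      Matrix.det_permute ρ Mh
    have hsign : Equiv.Perm.sign ρ = (-1) ^ n := by
      rw [hρdef, map_inv, sign_finRotate]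
      simp [inv_pow]
    rw [hdecomp, Matrix.det_mul, hdetB, hdetV, hsign] at hpermdet
    simp only [Units.val_pow_eq_pow_val, Units.val_neg, Units.val_one, Int.cast_pow,
      Int.cast_neg, Int.cast_one] at hpermdet
    have hnn : (-1 : ℂ[X]) ^ n * (-1 : ℂ[X]) ^ n = 1 := by
      rw [← mul_pow]; norm_num
    have key : Mh.det = (-1 : ℂ[X]) ^ n * (C ((∏ c, v c) * (Matrix.vandermonde r).det) *
        ((-1 : ℂ[X]) ^ n * (∏ m, (X - C (r m))) * C (Matrix.vandermonde r).det)) := by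
      calc Mh.det = (-1 : ℂ[X]) ^ n * ((-1 : ℂ[X]) ^ n * Mh.det) := by
              rw [← mul_assoc, hnn, one_mul]
        _ = _ := by rw [← hpermdet]
    have hCC : C ((∏ c, v c) * (Matrix.vandermonde r).det) * C (Matrix.vandermonde r).det
        = C ((∏ c, v c) * (Matrix.vandermonde r).det ^ 2) := by
      rw [← map_mul, sq, mul_assoc]
    rw [key]
    linear_combination (C ((∏ c, v c) * (Matrix.vandermonde r).det) *
        C (Matrix.vandermonde r).det * ∏ m, (X - C (r m))) * hnn
      + (∏ m, (X - C (r m))) * hCC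
  -- replace the root product by p
  have hrootprod : ∏ m, (X - C (r m)) = C p0⁻¹ * p := by
    rw [← hfact, ← mul_assoc, ← map_mul, inv_mul_cancel₀ hp0, map_one, one_mul]
  -- final scalar computation
  have hA : ∏ c, ∏ a, (r c - x a) = (-1 : ℂ) ^ (n * N) * (p0⁻¹) ^ N * ∏ j, y j := by
    rw [Finset.prod_comm]
    have h1 : ∀ a : Fin N, ∏ c, (r c - x a) = (-1 : ℂ) ^ n * (p0⁻¹ * y a) := by
      intro a
      have hpow : ∏ c, (r c - x a) = (-1 : ℂ) ^ n * ∏ c, (x a - r c) := by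
        calc ∏ c, (r c - x a) = ∏ c, ((-1 : ℂ) * (x a - r c)) :=
              Finset.prod_congr rfl fun c _ => by ring
          _ = (-1 : ℂ) ^ n * ∏ c, (x a - r c) := by
              rw [Finset.prod_mul_distrib, Finset.prod_const, Finset.card_univ,
                Fintype.card_fin]
      rw [hpow, hyval a]
      congr 1
      rw [← mul_assoc p0⁻¹, inv_mul_cancel₀ hp0, one_mul]
    rw [Finset.prod_congr rfl fun a _ => h1 a, Finset.prod_mul_distrib,
      Finset.prod_mul_distrib, Finset.prod_const, Finset.prod_const, Finset.card_univ,
      Fintype.card_fin, ← pow_mul]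
    ring
  have hBoff : ∏ c, ∏ d ∈ Finset.univ.erase c, (r c - r d) =
      (-1 : ℂ) ^ (n * (n - 1) / 2) * (Matrix.vandermonde r).det ^ 2 := by
    rw [prod_offdiag, Matrix.det_vandermonde]
  have hqprod : ∏ c, q c = ((-1 : ℂ) ^ (n * N) * (p0⁻¹) ^ N * ∏ j, y j) *
      ((-1 : ℂ) ^ (n * (n - 1) / 2) * (Matrix.vandermonde r).det ^ 2) := by
    rw [hqdef]
    simp only
    rw [Finset.prod_mul_distrib, hA, hBoff]
  have hvprod : ∏ c, v c = (-1 : ℂ) ^ n * (p0⁻¹) ^ n * (∏ c, q c)⁻¹ := by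
    rw [hvdef]
    simp only
    have : ∀ c : Fin n, -(p0⁻¹ * (q c)⁻¹) = (-1 : ℂ) * (p0⁻¹ * (q c)⁻¹) := fun c => by ring
    rw [Finset.prod_congr rfl fun c _ => this c, Finset.prod_mul_distrib,
      Finset.prod_mul_distrib, Finset.prod_const, Finset.prod_const, Finset.card_univ,
      Fintype.card_fin, ← Finset.prod_inv_distrib]
    ring
  -- exponent arithmetic
  have heven : Even (n * (n - 1)) := by
    rcases n with _ | m
    · simp
    · simpa [Nat.succ_sub_one, mul_comm] using Nat.even_mul_succ_self m
  have hexp : N * n + n * (n + 1) / 2 = n + n * N + n * (n - 1) / 2 := by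
    obtain ⟨k, hk⟩ := heven
    have h1 : n * (n + 1) = n * (n - 1) + 2 * n := by
      rcases n with _ | m
      · simp
      · simp only [Nat.succ_sub_one]
        ring
    rw [mul_comm N n]
    generalize hb : n * (n - 1) = b at hk h1 ⊢
    generalize hc : n * (n + 1) = c at h1 ⊢
    generalize n * N = a
    omega
  -- the scalar constant
  have hconst : (∏ c, v c) * (Matrix.vandermonde r).det ^ 2 * p0⁻¹ =
      (-1 : ℂ) ^ (N * n + n * (n + 1) / 2) * p0 ^ (N - n - 1) / ∏ j, y j := by
    rw [hvprod, hqprod, hexp]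
    exact const_calc p0 (∏ j, y j) (Matrix.vandermonde r).det hp0 hY hVdm n N (n * N)
      (n * (n - 1) / 2) (by omega)
  rw [hHpoly, hMhdet, hrootprod, ← mul_assoc, ← map_mul, hconst]
end

section
/- Let x_1,...,x_N be distinct, p(x) a polynomial of degree n < N−2 with simple zeros and p(x_j) = y_j ≠ 0 for all j, W(x) = ∏(x−x_j), τ̃_k = ∑ x_j^k/(y_j W'(x_j)). Then 𝓗_K(x;{τ̃}) ≡ 0 for every K with n+1 ≤ K ≤ N−2. -/
open Finset Polynomial

/-- The classical identity `∑_j x_j^m / W'(x_j) = 0` for `m ≤ N - 2`. -/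
lemma sigma_zero {N : ℕ} (x : Fin N → ℂ) (hx : Function.Injective x)
    {m : ℕ} (hm : m + 2 ≤ N) : ∑ j, x j ^ m / Wd x j = 0 := by
  classical
  have hinj : Set.InjOn x ↑(Finset.univ : Finset (Fin N)) := fun a _ b _ h => hx h
  have hcard : (Finset.univ : Finset (Fin N)).card = N := by simp
  have hdeg : (X ^ m : ℂ[X]).degree < (Finset.univ : Finset (Fin N)).card := by
    rw [degree_X_pow, hcard]
    exact_mod_cast (by omega : m < N)
  have hinterp : (X ^ m : ℂ[X]) = Lagrange.interpolate Finset.univ x fun j => x j ^ m :=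
    Lagrange.eq_interpolate_of_eval_eq (fun j => x j ^ m) hinj hdeg fun i _ => by simp
  have hco := congrArg (fun q : ℂ[X] => q.coeff (N - 1)) hinterp
  simp only [Lagrange.interpolate_apply, finset_sum_coeff, coeff_C_mul, coeff_X_pow] at hco
  rw [if_neg (by omega : ¬ (N - 1 = m))] at hco
  have hb : ∀ i : Fin N, (Lagrange.basis Finset.univ x i).coeff (N - 1) = (Wd x i)⁻¹ := by
    intro i
    have hdegb : (Lagrange.basis Finset.univ x i).natDegree = N - 1 := by
      rw [Lagrange.natDegree_basis hinj (Finset.mem_univ i), hcard]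
    rw [← hdegb, coeff_natDegree, Lagrange.basis, leadingCoeff_prod, Wd,
      ← Finset.prod_inv_distrib (G := ℂ)]
    refine Finset.prod_congr rfl fun j hj => ?_
    rw [Lagrange.basisDivisor, leadingCoeff_mul, leadingCoeff_C,
      (monic_X_sub_C (x j)).leadingCoeff, mul_one]
  simp_rw [hb] at hco
  simp_rw [div_eq_mul_inv]
  exact hco.symm

theorem hankel_poly_vanish_of_redundant_table (N n : ℕ) (hn : n + 2 < N)
    (x : Fin N → ℂ) (hx : Function.Injective x)
    (p : Polynomial ℂ) (hpdeg : p.natDegree = n) (hp0 : p.leadingCoeff ≠ 0)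
    (hsimple : p.roots.Nodup)
    (y : Fin N → ℂ) (hy : ∀ j, y j = p.eval (x j)) (hy0 : ∀ j, y j ≠ 0)
    (t : ℕ → ℂ) (ht : ∀ k, t k = ∑ j, x j ^ k / (y j * Wd x j)) :
    ∀ K : ℕ, n + 1 ≤ K → K ≤ N - 2 → Hpoly t K = 0 := by
  intro K hK1 hK2
  have hKN : K + 2 ≤ N := by omega
  have hp_ne : p ≠ 0 := leadingCoeff_ne_zero.mp hp0
  -- key summation lemma
  have key : ∀ (i : ℕ) (q : ℂ[X]), q.natDegree ≤ K →
      ∑ j : Fin (K+1), t (i + (j:ℕ)) * q.coeff (j:ℕ)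
        = ∑ l, x l ^ i * q.eval (x l) / (y l * Wd x l) := by
    intro i q hq
    simp_rw [ht, Finset.sum_mul]
    rw [Finset.sum_comm]
    refine Finset.sum_congr rfl fun l _ => ?_
    have hev : q.eval (x l) = ∑ j ∈ Finset.range (K+1), q.coeff j * x l ^ j :=
      eval_eq_sum_range' (Nat.lt_succ_of_le hq) _
    rw [hev, Finset.mul_sum, Finset.sum_div,
      ← Fin.sum_univ_eq_sum_range (fun j => x l ^ i * (q.coeff j * x l ^ j) / (y l * Wd x l))]
    refine Finset.sum_congr rfl fun j _ => ?_
    rw [pow_add, div_mul_eq_mul_div]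
    ring_nf
  have hp_sum : ∀ i : ℕ, i < K →
      ∑ j : Fin (K+1), t (i + (j:ℕ)) * p.coeff (j:ℕ) = 0 := by
    intro i hi
    rw [key i p (by omega)]
    have h1 : ∀ l, x l ^ i * p.eval (x l) / (y l * Wd x l) = x l ^ i / Wd x l := by
      intro l
      rw [← hy l, mul_comm (x l ^ i) (y l), mul_div_mul_left _ _ (hy0 l)]
    simp_rw [h1]
    exact sigma_zero x hx (by omega)
  have hXp_deg : (X * p).natDegree = n + 1 := by
    rw [natDegree_mul X_ne_zero hp_ne, natDegree_X, hpdeg, add_comm]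
  have hxp_sum : ∀ i : ℕ, i < K →
      ∑ j : Fin (K+1), t (i + (j:ℕ)) * (X * p).coeff (j:ℕ) = 0 := by
    intro i hi
    rw [key i (X * p) (by omega)]
    have h1 : ∀ l, x l ^ i * (X * p).eval (x l) / (y l * Wd x l)
        = x l ^ (i+1) / Wd x l := by
      intro l
      rw [eval_mul, eval_X, ← hy l]
      rw [show x l ^ i * (x l * y l) = y l * x l ^ (i+1) by ring,
        mul_div_mul_left _ _ (hy0 l)]
    simp_rw [h1]
    exact sigma_zero x hx (by omega)
  -- the matrix and the kernel vector
  set M : Matrix (Fin (K+1)) (Fin (K+1)) ℂ[X] :=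
    Matrix.of (fun i j : Fin (K + 1) =>
      if (i : ℕ) < K then Polynomial.C (t ((i : ℕ) + (j : ℕ))) else Polynomial.X ^ (j : ℕ))
    with hM
  set v : Fin (K+1) → ℂ[X] :=
    fun j => X * C (p.coeff (j:ℕ)) - C ((X * p).coeff (j:ℕ)) with hv
  have hsum_poly : ∀ q : ℂ[X], q.natDegree ≤ K →
      ∑ j : Fin (K+1), X ^ (j:ℕ) * C (q.coeff (j:ℕ)) = q := by
    intro q hq
    rw [Fin.sum_univ_eq_sum_range (fun j => X ^ j * C (q.coeff j))]
    conv_rhs => rw [q.as_sum_range' (K+1) (Nat.lt_succ_of_le hq)]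
    refine Finset.sum_congr rfl fun j _ => ?_
    rw [← C_mul_X_pow_eq_monomial, mul_comm]
  have hMv : M.mulVec v = 0 := by
    funext i
    simp only [Matrix.mulVec, dotProduct, hM, Matrix.of_apply, Pi.zero_apply, hv]
    by_cases hi : (i:ℕ) < K
    · simp only [hi, if_true]
      have e1 : ∀ j : Fin (K+1),
          C (t ((i:ℕ) + (j:ℕ))) * (X * C (p.coeff (j:ℕ)) - C ((X * p).coeff (j:ℕ)))
          = X * C (t ((i:ℕ) + (j:ℕ)) * p.coeff (j:ℕ))
            - C (t ((i:ℕ) + (j:ℕ)) * (X * p).coeff (j:ℕ)) := by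
        intro j; rw [C_mul, C_mul]; ring
      simp_rw [e1]
      rw [Finset.sum_sub_distrib, ← Finset.mul_sum, ← map_sum, ← map_sum,
        hp_sum i hi, hxp_sum i hi]
      simp
    · simp only [hi, if_false]
      have e1 : ∀ j : Fin (K+1),
          X ^ (j:ℕ) * (X * C (p.coeff (j:ℕ)) - C ((X * p).coeff (j:ℕ)))
          = X * (X ^ (j:ℕ) * C (p.coeff (j:ℕ))) - X ^ (j:ℕ) * C ((X * p).coeff (j:ℕ)) := by
        intro j; ring
      simp_rw [e1]
      rw [Finset.sum_sub_distrib, ← Finset.mul_sum, hsum_poly p (by omega),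
        hsum_poly (X * p) (by omega)]
      ring
  -- determinant is zero
  have hdetv : M.det • v = 0 := by
    calc M.det • v = (M.det • (1 : Matrix (Fin (K+1)) (Fin (K+1)) ℂ[X])).mulVec v := by
          rw [Matrix.smul_mulVec, Matrix.one_mulVec]
    _ = (M.adjugate * M).mulVec v := by rw [Matrix.adjugate_mul]
    _ = M.adjugate.mulVec (M.mulVec v) := by rw [← Matrix.mulVec_mulVec]
    _ = 0 := by rw [hMv, Matrix.mulVec_zero]
  have hj0 : (⟨n, by omega⟩ : Fin (K+1)) = (⟨n, by omega⟩ : Fin (K+1)) := rfl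
  set j0 : Fin (K+1) := ⟨n, by omega⟩ with hj0def
  have hv0 : v j0 ≠ 0 := by
    intro h
    have := congrArg (fun q : ℂ[X] => q.coeff 1) h
    simp only [hv, coeff_sub, coeff_zero] at this
    rw [show ((X : ℂ[X]) * C (p.coeff (j0 : ℕ))).coeff 1 = (C (p.coeff (j0 : ℕ))).coeff 0 from coeff_X_mul _ 0, coeff_C_zero,
      coeff_C, if_neg (by norm_num)] at this
    rw [sub_zero] at this
    apply hp0
    rw [Polynomial.leadingCoeff, hpdeg]
    simpa using this
  have hmul : M.det * v j0 = 0 := by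
    have := congrFun hdetv j0
    simpa [smul_eq_mul] using this
  have hdet0 : M.det = 0 := by
    rcases mul_eq_zero.mp hmul with h | h
    · exact h
    · exact absurd h hv0
  exact hdet0
end

section
/- Let x_1,...,x_N be distinct, p(x) of degree n < N−2 with simple zeros, y_j nonzero with y_j = p(x_j) for all j ≠ e and y_e ≠ p(x_e) =: ŷ_e ≠ 0 for exactly one index e, and suppose n < N−2. Define τ_k = ∑_{j=1}^N y_j x_j^k / W'(x_j), W(x) = ∏(x − x_j). Then 𝓗_1(x;{τ}) ≡ ((y_e − ŷ_e)/W'(x_e)) · (x − x_e). -/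
open Finset Polynomial

lemma basis_leadingCoeff {F : Type*} [Field F] {ι : Type*} [DecidableEq ι]
    {s : Finset ι} {v : ι → F} (hvs : Set.InjOn v s) {i : ι} (hi : i ∈ s) :
    (Lagrange.basis s v i).leadingCoeff = Lagrange.nodalWeight s v i := by
  rw [Lagrange.basis, leadingCoeff_prod, Lagrange.nodalWeight]
  refine Finset.prod_congr rfl fun j hj => ?_
  have hij : v i ≠ v j := by
    rcases Finset.mem_erase.mp hj with ⟨hji, hjs⟩
    exact fun h => hji (hvs hjs hi h.symm)
  rw [Lagrange.basisDivisor]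
  rw [leadingCoeff_mul, leadingCoeff_C, leadingCoeff_X_sub_C, mul_one]

lemma sum_eval_div_eq_zero {N : ℕ} (hN : 1 ≤ N) (x : Fin N → ℂ) (hx : Function.Injective x)
    (q : Polynomial ℂ) (hq : q.degree < (N - 1 : ℕ)) :
    ∑ j, q.eval (x j) * (Wd x j)⁻¹ = 0 := by
  have hinj : Set.InjOn x (Finset.univ : Finset (Fin N)) := fun a _ b _ h => hx h
  have hcard : (Finset.univ : Finset (Fin N)).card = N := Finset.card_univ.trans (Fintype.card_fin N)
  have hq' : q.degree < ((Finset.univ : Finset (Fin N)).card : ℕ) := by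
    rw [hcard]; exact hq.trans_le (by exact_mod_cast Nat.cast_le.mpr (Nat.sub_le N 1))
  have hrepr := Lagrange.eq_interpolate hinj hq'
  have hcoeff := congrArg (fun f : Polynomial ℂ => f.coeff (N - 1)) hrepr
  simp only [Lagrange.interpolate_apply, Polynomial.finset_sum_coeff] at hcoeff
  have hzero : q.coeff (N - 1) = 0 := Polynomial.coeff_eq_zero_of_degree_lt hq
  rw [hzero] at hcoeff
  have hterm : ∀ j : Fin N,
      (Polynomial.C (q.eval (x j)) * Lagrange.basis Finset.univ x j).coeff (N - 1)
        = q.eval (x j) * (Wd x j)⁻¹ := by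
    intro j
    have hnd : (Lagrange.basis Finset.univ x j).natDegree = N - 1 := by
      rw [Lagrange.natDegree_basis hinj (Finset.mem_univ j), hcard]
    rw [Polynomial.coeff_C_mul, ← hnd, Polynomial.coeff_natDegree,
      basis_leadingCoeff hinj (Finset.mem_univ j)]
    congr 1
    rw [Lagrange.nodalWeight, Wd, ← Finset.prod_inv_distrib]
  rw [funext hterm] at hcoeff
  exact hcoeff.symm


theorem hankel_poly_one_error_locator (N n : ℕ) (hn : n + 2 < N)
    (x : Fin N → ℂ) (hx : Function.Injective x)
    (p : Polynomial ℂ) (hpdeg : p.natDegree = n) (hp0 : p.leadingCoeff ≠ 0)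
    (hsimple : p.roots.Nodup)
    (e : Fin N) (y : Fin N → ℂ) (hy0 : ∀ j, y j ≠ 0)
    (hy : ∀ j, j ≠ e → y j = p.eval (x j))
    (he : y e ≠ p.eval (x e)) (he0 : p.eval (x e) ≠ 0)
    (t : ℕ → ℂ) (ht : ∀ k, t k = ∑ j, y j * x j ^ k / Wd x j) :
    Hpoly t 1 = C ((y e - p.eval (x e)) / Wd x e) * (X - C (x e)) := by

  -- values of the first two moments
  have hkey : ∀ k, k ≤ 1 → t k = (y e - p.eval (x e)) * x e ^ k * (Wd x e)⁻¹ := by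
    intro k hk
    have hpne : p ≠ 0 := fun h => hp0 (by simp [h])
    have hqne : p * X ^ k ≠ 0 := mul_ne_zero hpne (pow_ne_zero _ X_ne_zero)
    have hdeg : (p * X ^ k).degree < ((N - 1 : ℕ) : WithBot ℕ) := by
      rw [← Polynomial.natDegree_lt_iff_degree_lt hqne,
        natDegree_mul hpne (pow_ne_zero _ X_ne_zero), natDegree_X_pow, hpdeg]
      omega
    have h0 := sum_eval_div_eq_zero (by omega) x hx (p * X ^ k) hdeg
    rw [ht k]
    have hsplit : ∀ j, y j * x j ^ k / Wd x j =
        (p * X ^ k).eval (x j) * (Wd x j)⁻¹ +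
          (if j = e then (y e - p.eval (x e)) * x e ^ k * (Wd x e)⁻¹ else 0) := by
      intro j
      by_cases hj : j = e
      · subst hj
        rw [if_pos rfl]
        simp only [eval_mul, eval_pow, eval_X, div_eq_mul_inv]
        ring
      · rw [hy j hj]
        simp [hj, eval_mul, eval_pow, div_eq_mul_inv]
    rw [Finset.sum_congr rfl (fun j _ => hsplit j), Finset.sum_add_distrib, h0,
      Finset.sum_ite_eq' Finset.univ e, if_pos (Finset.mem_univ e), zero_add]
  have h0 := hkey 0 (by omega)
  have h1 := hkey 1 (by omega)
  have hH : Hpoly t 1 = C (t 0) * X - C (t 1) := by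
    rw [Hpoly, Matrix.det_fin_two]
    norm_num [Matrix.of_apply]
  rw [hH, h0, h1, div_eq_mul_inv]
  push_cast
  simp only [pow_zero, pow_one, map_mul, map_one, mul_one]
  ring
end

section
/- Let x_1,...,x_N be distinct, p(x) = p_0 x^n + ... of degree n with simple zeros, E ≥ 2, n < N − 2E. Suppose y_j ≠ 0 for all j, y_j = p(x_j) for j outside a set {e_1,...,e_E} of distinct indices, and ŷ_{e_s} := p(x_{e_s}) ≠ y_{e_s}, ŷ_{e_s} ≠ 0. Define τ_k = ∑_{j=1}^N y_j x_j^k / W'(x_j). Then 𝓗_E(x;{τ}) ≡ (∏_{s=1}^E (y_{e_s} − ŷ_{e_s}) · ∏_{1≤s<t≤E} (x_{e_t} − x_{e_s})^2 / ∏_{s=1}^E W'(x_{e_s})) · ∏_{s=1}^E (x − x_{e_s}). -/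
open Finset Polynomial

lemma Wd_ne_zero {N : ℕ} (x : Fin N → ℂ) (hx : Function.Injective x) (j : Fin N) :
    Wd x j ≠ 0 := by
  rw [Wd, Finset.prod_ne_zero_iff]
  intro i hi
  exact sub_ne_zero_of_ne fun h => (Finset.mem_erase.mp hi).1 (hx h).symm

lemma coeff_basis_top {N : ℕ} (x : Fin N → ℂ) (j : Fin N) :
    (Lagrange.basis Finset.univ x j).coeff (N - 1) = (Wd x j)⁻¹ := by
  have hb : Lagrange.basis Finset.univ x j =
      C (Wd x j)⁻¹ * ∏ i ∈ Finset.univ.erase j, (X - C (x i)) := by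
    rw [Lagrange.basis, Wd, ← Finset.prod_inv_distrib, map_prod, ← Finset.prod_mul_distrib]
    rfl
  have hP : (∏ i ∈ Finset.univ.erase j, (X - C (x i))).Monic :=
    monic_prod_of_monic _ _ fun i _ => monic_X_sub_C _
  have hdeg : (∏ i ∈ Finset.univ.erase j, (X - C (x i))).natDegree = N - 1 := by
    rw [natDegree_prod_of_monic _ _ fun i _ => monic_X_sub_C _]
    simp [Finset.card_erase_of_mem]
  rw [hb, coeff_C_mul, ← hdeg, hP.coeff_natDegree, mul_one]

lemma sum_eval_div_Wd {N : ℕ} (x : Fin N → ℂ) (hx : Function.Injective x)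
    (q : Polynomial ℂ) (hq : q.degree < (N - 1 : ℕ)) :
    ∑ j, q.eval (x j) / Wd x j = 0 := by
  have hcard : #(Finset.univ : Finset (Fin N)) = N := by simp
  have h1 : q = Lagrange.interpolate Finset.univ x (fun j => q.eval (x j)) := by
    refine Lagrange.eq_interpolate hx.injOn ?_
    rw [hcard]
    exact hq.trans_le (by exact_mod_cast Nat.sub_le N 1)
  have h2 := congrArg (fun f => Polynomial.coeff f (N - 1)) h1
  simp only [coeff_eq_zero_of_degree_lt hq, Lagrange.interpolate_apply, finset_sum_coeff,
    coeff_C_mul, coeff_basis_top] at h2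
  simp_rw [div_eq_mul_inv]
  exact h2.symm

theorem hankel_poly_E_error_locator (N n E : ℕ) (hE : 2 ≤ E) (hn : n < N - 2 * E)
    (x : Fin N → ℂ) (hx : Function.Injective x)
    (p : Polynomial ℂ) (hpdeg : p.natDegree = n) (hp0 : p.leadingCoeff ≠ 0)
    (hsimple : p.roots.Nodup)
    (e : Fin E → Fin N) (he : Function.Injective e)
    (y : Fin N → ℂ) (hy0 : ∀ j, y j ≠ 0)
    (hy : ∀ j, (∀ s, j ≠ e s) → y j = p.eval (x j))
    (herr : ∀ s, p.eval (x (e s)) ≠ y (e s)) (herr0 : ∀ s, p.eval (x (e s)) ≠ 0)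
    (t : ℕ → ℂ) (ht : ∀ k, t k = ∑ j, y j * x j ^ k / Wd x j) :
    Hpoly t E =
      C (((∏ s, (y (e s) - p.eval (x (e s)))) *
            ∏ s, ∏ u ∈ Finset.univ.filter (fun u => s < u),
              (x (e u) - x (e s)) ^ 2) /
          ∏ s, Wd x (e s)) *
        ∏ s, (X - C (x (e s))) := by
  have hp : p ≠ 0 := fun h => hp0 (by simp [h])
  have hN : 2 * E + n + 1 ≤ N := by omega
  set z : Fin E → ℂ := fun s => x (e s) with hz
  set ε : Fin E → ℂ := fun s => y (e s) - p.eval (x (e s)) with hε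
  set lam : Fin E → ℂ := fun s => ε s / Wd x (e s) with hlam
  -- Step 1: the moments
  have htk : ∀ k, k < 2 * E → t k = ∑ s, lam s * z s ^ k := by
    intro k hk
    rw [ht k]
    have hsplit : ∀ j : Fin N, y j * x j ^ k / Wd x j =
        (y j - p.eval (x j)) * x j ^ k / Wd x j + (p * X ^ k).eval (x j) / Wd x j := by
      intro j; simp only [eval_mul, eval_pow, eval_X]; ring
    rw [Finset.sum_congr rfl fun j _ => hsplit j, Finset.sum_add_distrib]
    have hvanish : ∑ j, (p * X ^ k).eval (x j) / Wd x j = 0 := by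
      refine sum_eval_div_Wd x hx _ ?_
      have hd : (p * X ^ k).degree ≤ ((n + k : ℕ) : WithBot ℕ) := by
        rw [degree_mul, degree_X_pow]
        push_cast
        exact add_le_add (degree_le_natDegree.trans (by rw [hpdeg])) le_rfl
      refine hd.trans_lt ?_
      exact_mod_cast (by omega : n + k < N - 1)
    rw [hvanish, add_zero]
    -- restrict to the error positions
    have himg : ∑ j ∈ Finset.univ.image e, (y j - p.eval (x j)) * x j ^ k / Wd x j
        = ∑ s : Fin E, lam s * z s ^ k := by
      rw [Finset.sum_image (fun a _ b _ h => he h)]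
      refine Finset.sum_congr rfl fun s _ => ?_
      simp only [hlam, hε, hz]
      ring
    rw [← himg]
    refine (Finset.sum_subset (Finset.subset_univ _) fun j _ hj => ?_).symm
    have hne : ∀ s, j ≠ e s := fun s hs =>
      hj (Finset.mem_image.mpr ⟨s, Finset.mem_univ s, hs.symm⟩)
    rw [hy j hne, sub_self, zero_mul, zero_div]
  -- Step 2: matrix factorization
  set U : Matrix (Fin (E + 1)) (Fin (E + 1)) (Polynomial ℂ) := Matrix.of fun i s =>
    if (i : ℕ) < E then ((Fin.cons 0 (fun s' : Fin E => C (lam s' * z s' ^ (i : ℕ))) : Fin (E + 1) → Polynomial ℂ) s)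
    else ((Fin.cons 1 (fun _ => 0) : Fin (E + 1) → Polynomial ℂ) s) with hU
  set V : Matrix (Fin (E + 1)) (Fin (E + 1)) (Polynomial ℂ) :=
    Matrix.vandermonde (Fin.cons X (fun s => C (z s))) with hV
  have hM : (Matrix.of fun i j : Fin (E + 1) =>
      if (i : ℕ) < E then C (t ((i : ℕ) + (j : ℕ))) else X ^ (j : ℕ)) = U * V := by
    refine Matrix.ext fun i j => ?_
    rw [Matrix.mul_apply]
    by_cases hi : (i : ℕ) < E
    · simp only [Matrix.of_apply, hi, if_true, hU, hV, Matrix.vandermonde]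
      rw [Fin.sum_univ_succ]
      simp only [Matrix.of_apply, Fin.cons_zero, Fin.cons_succ, zero_mul, zero_add]
      rw [htk ((i : ℕ) + (j : ℕ)) (by have := j.isLt; omega), map_sum]
      refine Finset.sum_congr rfl fun s _ => ?_
      rw [← map_pow, ← map_mul]
      congr 1
      rw [pow_add]; ring
    · simp only [Matrix.of_apply, hi, if_false, hU, hV, Matrix.vandermonde]
      rw [Fin.sum_univ_succ]
      simp [Fin.cons_zero, Fin.cons_succ]
  have hdetU : U.det = (-1 : Polynomial ℂ) ^ E *
      ((∏ s, C (lam s)) * ∏ i : Fin E, ∏ j ∈ Finset.Ioi i, (C (z j) - C (z i))) := by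
    rw [Matrix.det_succ_row U (Fin.last E), Fin.sum_univ_succ]
    have hlast : ∀ s : Fin E, U (Fin.last E) s.succ = 0 := by
      intro s; simp [hU]
    have h0 : U (Fin.last E) 0 = 1 := by simp [hU]
    simp only [hlast, h0, mul_zero, zero_mul, mul_one, Finset.sum_const_zero, add_zero]
    have hsub : U.submatrix (Fin.last E).succAbove (0 : Fin (E + 1)).succAbove =
        Matrix.of (fun i s : Fin E => C (lam s) * ((Matrix.vandermonde fun s => C (z s)).transpose i s)) := by
      ext i s
      simp only [Matrix.submatrix_apply, Fin.succAbove_last, Fin.succAbove_zero, hU,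
        Matrix.of_apply, Fin.coe_castSucc, i.isLt, if_true, Fin.cons_succ,
        Matrix.transpose_apply, Matrix.vandermonde_apply, map_mul, map_pow]
    rw [hsub, Matrix.det_mul_row, Matrix.det_transpose, Matrix.det_vandermonde]
    simp [mul_assoc]
  have hdetV : V.det = (∏ s : Fin E, (C (z s) - X)) *
      ∏ i : Fin E, ∏ j ∈ Finset.Ioi i, (C (z j) - C (z i)) := by
    rw [hV, Matrix.det_vandermonde, Fin.prod_univ_succ]
    congr 1
    · rw [Fin.prod_Ioi_zero]
      simp
    · refine Finset.prod_congr rfl fun i _ => ?_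
      rw [Fin.prod_Ioi_succ]
      simp
  have hsign : (∏ s : Fin E, (C (z s) - X)) =
      (-1 : Polynomial ℂ) ^ E * ∏ s : Fin E, (X - C (z s)) := by
    have h1 : ∀ s : Fin E, C (z s) - X = -1 * (X - C (z s)) := fun s => by ring
    rw [Finset.prod_congr rfl fun s _ => h1 s, Finset.prod_mul_distrib, Finset.prod_const]
    simp
  -- Step 3: assemble
  set Vz : ℂ := ∏ i : Fin E, ∏ j ∈ Finset.Ioi i, (z j - z i) with hVz
  have hCV : (∏ i : Fin E, ∏ j ∈ Finset.Ioi i, (C (z j) - C (z i))) = C Vz := by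
    rw [hVz]; simp only [map_prod, map_sub]
  have hClam : (∏ s, C (lam s)) = C (∏ s, lam s) := by rw [map_prod]
  have hWdprod : (∏ s, Wd x (e s)) ≠ 0 :=
    Finset.prod_ne_zero_iff.mpr fun s _ => Wd_ne_zero x hx (e s)
  have hKonst : (∏ s, lam s) * Vz * Vz =
      ((∏ s, ε s) * ∏ s, ∏ u ∈ Finset.univ.filter (fun u => s < u), (z u - z s) ^ 2) /
        ∏ s, Wd x (e s) := by
    have hfilter : ∀ s : Fin E, Finset.univ.filter (fun u => s < u) = Finset.Ioi s :=
      fun s => by ext u; simp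
    have h2 : (∏ s, ∏ u ∈ Finset.univ.filter (fun u => s < u), (z u - z s) ^ 2) = Vz ^ 2 := by
      rw [hVz]
      simp_rw [hfilter, Finset.prod_pow]
    rw [h2, hlam]
    rw [Finset.prod_div_distrib]
    field_simp
  have h0 : Hpoly t E = Matrix.det (Matrix.of fun i j : Fin (E + 1) =>
      if (i : ℕ) < E then C (t ((i : ℕ) + (j : ℕ))) else X ^ (j : ℕ)) := rfl
  rw [h0, hM, Matrix.det_mul, hdetU, hdetV, hsign, hCV, hClam]
  have hsgn : ((-1 : Polynomial ℂ) ^ E) * ((-1 : Polynomial ℂ) ^ E) = 1 := by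
    rw [← pow_add, ← two_mul, pow_mul]
    simp
  calc (-1 : Polynomial ℂ) ^ E * (C (∏ s, lam s) * C Vz) *
        ((-1 : Polynomial ℂ) ^ E * (∏ s : Fin E, (X - C (z s))) * C Vz)
      = ((-1 : Polynomial ℂ) ^ E * (-1 : Polynomial ℂ) ^ E) *
        ((C (∏ s, lam s) * C Vz * C Vz) * ∏ s : Fin E, (X - C (z s))) := by ring
    _ = (C ((∏ s, lam s) * Vz * Vz)) * ∏ s : Fin E, (X - C (z s)) := by
        rw [hsgn, one_mul, map_mul, map_mul]
    _ = _ := by rw [hKonst]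
end

section
/- Let p(x) = p_0 x^n + ... + p_n and q(x) = q_0 x^m + ... + q_m with p_0 ≠ 0, q_0 ≠ 0, and let x_1,...,x_N with N = m+n+1 be distinct points where p(x_j) ≠ 0 and q(x_j) ≠ 0 for all j. Define τ̃_k = ∑_{j=1}^N (q(x_j)/p(x_j)) · x_j^k / W'(x_j), W(x) = ∏(x − x_j). Then the Hankel determinant H_n({τ̃}) = det[τ̃_{i+j−2}]_{i,j=1}^n equals ((−1)^{mn + n(n+1)/2} p_0 / ∏_{j=1}^N p(x_j)) · Res(p, q), where Res(p,q) is the resultant of p and q. -/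
open Finset Polynomial

/-- The resultant of `p` and `q` over `ℂ`:
`Res(p,q) = p₀^m ∏ q(λ)` over the roots `λ` of `p` counted with multiplicity. -/
noncomputable def Res (p q : Polynomial ℂ) : ℂ :=
  p.leadingCoeff ^ q.natDegree * (p.roots.map fun l => q.eval l).prod

/-! ### Auxiliary lemmas -/

lemma neg_one_pow_congr_aux {a b : ℕ} (h : a % 2 = b % 2) : ((-1 : ℂ)) ^ a = (-1) ^ b := by
  rcases Nat.even_or_odd a with ha | ha
  · have hb : Even b := Nat.even_iff.mpr (by have := Nat.even_iff.mp ha; omega)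
    rw [ha.neg_one_pow, hb.neg_one_pow]
  · have hb : Odd b := Nat.odd_iff.mpr (by have := Nat.odd_iff.mp ha; omega)
    rw [ha.neg_one_pow, hb.neg_one_pow]

lemma det_hankel_aux : ∀ (n : ℕ) (c : ℕ → ℂ), (∀ k < n, c k = 0) → c n = 1 →
    Matrix.det (Matrix.of fun i j : Fin (n+1) => c ((i : ℕ) + (j : ℕ))) =
      (-1 : ℂ) ^ ((n+1) * n / 2) := by
  intro n
  induction n with
  | zero => intro c h0 h1; simp [Matrix.det_fin_one, h1]
  | succ n ih =>
    intro c h0 h1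
    rw [Matrix.det_succ_row_zero]
    rw [Finset.sum_eq_single (Fin.last (n+1))]
    · have hsub : (Matrix.submatrix (Matrix.of fun i j : Fin (n+2) => c ((i : ℕ) + (j : ℕ)))
          Fin.succ (Fin.last (n+1)).succAbove) =
          (Matrix.of fun i j : Fin (n+1) => (fun k => c (k+1)) ((i : ℕ) + (j : ℕ))) := by
        ext i j
        simp only [Matrix.submatrix_apply, Fin.succAbove_last, Matrix.of_apply,
          Fin.val_succ, Fin.coe_castSucc]
        congr 1; omega
      rw [hsub, ih (fun k => c (k+1)) (fun k hk => h0 (k+1) (by omega)) h1]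
      have he : Even ((n+1) * n) := by
        simpa [Nat.mul_comm] using Nat.even_mul_succ_self n
      have harith : (n+2) * (n+1) / 2 = (n+1) * n / 2 + (n+1) := by
        have h2 : (n+2) * (n+1) = (n+1) * n + 2 * (n+1) := by ring
        rcases he with ⟨e, he⟩
        omega
      rw [harith]
      have h1' : c ((((0 : Fin (n+2))) : ℕ) + ((Fin.last (n+1)) : ℕ)) = 1 := by
        simpa using h1
      rw [Matrix.of_apply, h1', pow_add, Fin.val_last, pow_succ]
      ring
    · intro j _ hj
      have hj' : ((0 : Fin (n+2)) : ℕ) + (j : ℕ) < n + 1 := by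
        simpa using Fin.val_lt_last hj
      simp only [Matrix.of_apply, h0 _ hj', mul_zero, zero_mul]
    · simp

lemma det_hankel_aux' (n : ℕ) (hn : 0 < n) (c : ℕ → ℂ) (h0 : ∀ k < n - 1, c k = 0)
    (h1 : c (n - 1) = 1) :
    Matrix.det (Matrix.of fun i j : Fin n => c ((i : ℕ) + (j : ℕ))) =
      (-1 : ℂ) ^ (n * (n - 1) / 2) := by
  obtain ⟨n', rfl⟩ : ∃ n', n = n' + 1 := ⟨n - 1, by omega⟩
  have := det_hankel_aux n' c (by simpa using h0) (by simpa using h1)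
  simpa using this

lemma modByMonic_eq_of_dvd_sub {P u v : Polynomial ℂ} (hP : P.Monic) (h : P ∣ u - v) :
    u %ₘ P = v %ₘ P := by
  obtain ⟨c, hc⟩ := h
  have hu : v %ₘ P + P * (v /ₘ P + c) = u := by
    have hmd := Polynomial.modByMonic_add_div v P
    linear_combination hmd - hc
  exact (Polynomial.div_modByMonic_unique (v /ₘ P + c) (v %ₘ P) hP
    ⟨hu, Polynomial.degree_modByMonic_lt v hP⟩).2

lemma dvd_sub_modByMonic {P : Polynomial ℂ} (u : Polynomial ℂ) (hP : P.Monic) :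
    P ∣ u - u %ₘ P := by
  refine ⟨u /ₘ P, ?_⟩
  have := Polynomial.modByMonic_add_div u P
  linear_combination - this

lemma multiset_prod_map_finset_prod {ι : Type*} (s : Finset ι) (S : Multiset ℂ)
    (f : ι → ℂ → ℂ) :
    (S.map fun l => ∏ j ∈ s, f j l).prod = ∏ j ∈ s, (S.map (f j)).prod := by
  classical
  induction s using Finset.induction_on with
  | empty => simp [Multiset.map_const']
  | insert a s hnotmem ih =>
    simp only [Finset.prod_insert hnotmem, ← ih, ← Multiset.prod_map_mul]

lemma sum_div_Wd {N : ℕ} (x : Fin N → ℂ) (hx : Function.Injective x)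
    (G : Polynomial ℂ) (hdeg : G.degree < (N : ℕ)) :
    ∑ j, G.eval (x j) / Wd x j = G.coeff (N - 1) := by
  classical
  have hinj : Set.InjOn x ↑(univ : Finset (Fin N)) := fun a _ b _ h => hx h
  have hG : G = Lagrange.interpolate univ x (fun j => G.eval (x j)) :=
    Lagrange.eq_interpolate hinj (by simpa using hdeg)
  have hbasis : ∀ j : Fin N, (Lagrange.basis univ x j).coeff (N - 1) = (Wd x j)⁻¹ := by
    intro j
    have hb : Lagrange.basis univ x j =
        C (∏ i ∈ univ.erase j, (x j - x i)⁻¹) * ∏ i ∈ univ.erase j, (X - C (x i)) := by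
      rw [Lagrange.basis]
      rw [show (fun i => Lagrange.basisDivisor (x j) (x i)) =
        fun i => C (x j - x i)⁻¹ * (X - C (x i)) from rfl]
      rw [Finset.prod_mul_distrib, map_prod]
    have hmon : (∏ i ∈ univ.erase j, (X - C (x i))).Monic :=
      monic_prod_of_monic _ _ (fun i _ => monic_X_sub_C _)
    have hnd : (∏ i ∈ univ.erase j, (X - C (x i))).natDegree = N - 1 := by
      rw [Polynomial.natDegree_prod _ _ (fun i _ => X_sub_C_ne_zero _)]
      simp [Finset.card_erase_of_mem]
    rw [hb, coeff_C_mul, ← hnd, hmon.coeff_natDegree, mul_one, Wd,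
      ← Finset.prod_inv_distrib]
  conv_rhs => rw [hG]
  rw [Lagrange.interpolate_apply, Polynomial.finset_sum_coeff]
  refine Finset.sum_congr rfl fun j _ => ?_
  rw [coeff_C_mul, hbasis j, div_eq_mul_inv]

lemma prod_roots_sub (P : Polynomial ℂ) (hP : P.Monic) (μ : ℂ) :
    (P.roots.map (fun l => l - μ)).prod = (-1) ^ P.natDegree * P.eval μ := by
  have hs : P.Splits := IsAlgClosed.splits P
  have hcard : P.roots.card = P.natDegree := (Polynomial.splits_iff_card_roots).mp hs
  have hev : P.eval μ = (P.roots.map (fun l => μ - l)).prod := by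
    conv_lhs => rw [hs.eq_prod_roots_of_monic hP]
    rw [Polynomial.eval_multiset_prod, Multiset.map_map]
    simp
  have hmap : (P.roots.map (fun l => l - μ)) =
      (P.roots.map (fun l => (-1) * (μ - l))) := by
    apply Multiset.map_congr rfl
    intro l _; ring
  rw [hmap, Multiset.prod_map_mul, hev]
  simp [hcard]

lemma det_leftMul_eq_prod (P : Polynomial ℂ) (hP : P.Monic) (hd : 0 < P.natDegree)
    (f : Polynomial ℂ) :
    (Algebra.leftMulMatrix (AdjoinRoot.powerBasis' hP).basis (AdjoinRoot.mk P f)).det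
      = (P.roots.map f.eval).prod := by
  classical
  have hP0 : P ≠ 0 := hP.ne_zero
  haveI : Nontrivial (AdjoinRoot P) := AdjoinRoot.nontrivial P (by
    rw [Polynomial.degree_eq_natDegree hP0]
    exact_mod_cast (by omega : P.natDegree ≠ 0))
  have hs : P.Splits := IsAlgClosed.splits P
  have hcard : P.roots.card = P.natDegree := (Polynomial.splits_iff_card_roots).mp hs
  have hlin : ∀ μ : ℂ,
      (Algebra.leftMulMatrix (AdjoinRoot.powerBasis' hP).basis
        (AdjoinRoot.mk P (X - C μ))).det = (-1) ^ P.natDegree * P.eval μ := by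
    intro μ
    set pb := AdjoinRoot.powerBasis' hP
    set A := Algebra.leftMulMatrix pb.basis pb.gen with hA
    have hchar : A.charpoly = P := by
      rw [hA, _root_.charpoly_leftMulMatrix pb]
      rw [show pb.gen = AdjoinRoot.root P from rfl, AdjoinRoot.minpoly_root hP0,
        hP.leadingCoeff, inv_one, map_one, mul_one]
    have hmk : AdjoinRoot.mk P (X - C μ) = pb.gen - algebraMap ℂ (AdjoinRoot P) μ := by
      rw [map_sub, AdjoinRoot.mk_X, AdjoinRoot.mk_C]
      rfl
    have hM : Algebra.leftMulMatrix pb.basis (AdjoinRoot.mk P (X - C μ)) =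
        A - algebraMap ℂ _ μ := by
      rw [hmk, map_sub, AlgHom.commutes]
    have heval : P.eval μ = (algebraMap ℂ (Matrix (Fin pb.dim) (Fin pb.dim) ℂ) μ - A).det := by
      have h1 : P.eval μ = (A.charpoly).eval μ := by rw [hchar]
      rw [h1, Matrix.charpoly, ← Polynomial.coe_evalRingHom, RingHom.map_det]
      congr 1
      ext i j
      by_cases h : i = j
      · subst h
        simp [Matrix.charmatrix_apply_eq, Matrix.algebraMap_matrix_apply]
      · simp [Matrix.charmatrix_apply_ne _ _ _ h, Matrix.algebraMap_matrix_apply, h]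
    have hdim : pb.dim = P.natDegree := rfl
    rw [hM, show A - algebraMap ℂ (Matrix (Fin pb.dim) (Fin pb.dim) ℂ) μ =
      -(algebraMap ℂ (Matrix (Fin pb.dim) (Fin pb.dim) ℂ) μ - A) from (neg_sub _ _).symm,
      Matrix.det_neg,
      ← heval, Fintype.card_fin, hdim]
  suffices H : ∀ d (f : Polynomial ℂ), f.natDegree ≤ d →
      (Algebra.leftMulMatrix (AdjoinRoot.powerBasis' hP).basis (AdjoinRoot.mk P f)).det
        = (P.roots.map f.eval).prod from H f.natDegree f le_rfl
  intro d
  induction d with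
  | zero =>
    intro f hf
    by_cases hf0 : f = 0
    · subst hf0
      rw [map_zero, map_zero]
      haveI : Nonempty (Fin (AdjoinRoot.powerBasis' hP).dim) := ⟨⟨0, hd⟩⟩
      rw [Matrix.det_zero]
      obtain ⟨l, hl⟩ := Multiset.card_pos_iff_exists_mem.mp (by rw [hcard]; exact hd)
      refine (Multiset.prod_eq_zero ?_).symm
      exact Multiset.mem_map.mpr ⟨l, hl, by simp⟩
    · obtain ⟨c, rfl⟩ := Polynomial.natDegree_eq_zero.mp (Nat.le_zero.mp hf)
      have hmkC : AdjoinRoot.mk P (C c) = algebraMap ℂ (AdjoinRoot P) c := by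
        rw [AdjoinRoot.algebraMap_eq]; rfl
      rw [hmkC, AlgHom.commutes, Algebra.algebraMap_eq_smul_one, Matrix.det_smul,
        Matrix.det_one, mul_one, Fintype.card_fin]
      have : (P.roots.map (fun l => eval l (C c))) = Multiset.replicate P.roots.card c := by
        simp [Multiset.map_const']
      rw [this, Multiset.prod_replicate, hcard]
      rfl
  | succ d ih =>
    intro f hf
    by_cases hdeg0 : f.natDegree = 0
    · exact ih f (by omega)
    have hf0 : f ≠ 0 := fun h => hdeg0 (by simp [h])
    obtain ⟨μ, hμ⟩ := IsAlgClosed.exists_root f (by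
      rw [Polynomial.degree_eq_natDegree hf0]
      exact_mod_cast hdeg0)
    obtain ⟨g, rfl⟩ := (Polynomial.dvd_iff_isRoot).mpr hμ
    have hg0 : g ≠ 0 := fun h => hf0 (by simp [h])
    have hgd : g.natDegree ≤ d := by
      have := Polynomial.natDegree_mul (X_sub_C_ne_zero μ) hg0
      rw [Polynomial.natDegree_X_sub_C] at this
      omega
    rw [map_mul, map_mul, Matrix.det_mul, hlin μ, ih g hgd]
    have hmap : (P.roots.map (fun l => eval l ((X - C μ) * g))) =
        P.roots.map (fun l => (l - μ) * eval l g) := by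
      apply Multiset.map_congr rfl
      intro l _; simp
    rw [hmap, Multiset.prod_map_mul, prod_roots_sub P hP μ]

theorem hankel_det_eq_resultant (n m N : ℕ) (hN : N = m + n + 1)
    (p q : Polynomial ℂ) (hpdeg : p.natDegree = n) (hqdeg : q.natDegree = m)
    (hp0 : p.leadingCoeff ≠ 0) (hq0 : q.leadingCoeff ≠ 0)
    (x : Fin N → ℂ) (hx : Function.Injective x)
    (hpx : ∀ j, p.eval (x j) ≠ 0) (hqx : ∀ j, q.eval (x j) ≠ 0)
    (t : ℕ → ℂ)
    (ht : ∀ k, t k = ∑ j, (q.eval (x j) / p.eval (x j)) * x j ^ k / Wd x j) :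
    Hdet t n =
      (-1 : ℂ) ^ (m * n + n * (n + 1) / 2) * p.leadingCoeff /
          (∏ j, p.eval (x j)) * Res p q := by
  classical
  subst hN
  have hp : p ≠ 0 := leadingCoeff_ne_zero.mp hp0
  rcases Nat.eq_zero_or_pos n with hn0 | hn
  · -- degenerate case n = 0
    subst hn0
    have hHd : Hdet t 0 = 1 := by
      rw [Hdet, Matrix.det_isEmpty]
    have hpC : p = C (p.coeff 0) := Polynomial.eq_C_of_natDegree_eq_zero hpdeg
    have hlc : p.leadingCoeff = p.coeff 0 := by rw [Polynomial.leadingCoeff, hpdeg]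
    have hre : Res p q = p.leadingCoeff ^ m := by
      rw [Res, hqdeg]
      rw [show p.roots = 0 by rw [hpC]; exact Polynomial.roots_C _]
      simp
    have hev : ∀ j, p.eval (x j) = p.leadingCoeff := by
      intro j; conv_lhs => rw [hpC]
      rw [eval_C, hlc]
    rw [hHd, hre]
    rw [Finset.prod_congr rfl (fun j _ => hev j), Finset.prod_const]
    have hcard : #(univ : Finset (Fin (m + 0 + 1))) = m + 1 := by simp
    rw [hcard]
    field_simp
    ring
  · -- main case
    set c0 := p.leadingCoeff with hc0
    set P := p * C c0⁻¹ with hPdef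
    have hPm : P.Monic := monic_mul_leadingCoeff_inv hp
    have hc0i : c0⁻¹ ≠ 0 := inv_ne_zero hp0
    have hPdeg : P.natDegree = n := by
      rw [hPdef, natDegree_mul_C hc0i, hpdeg]
    have hPeval : ∀ z, P.eval z = p.eval z * c0⁻¹ := by intro z; simp [hPdef]
    have hPevalx : ∀ j, P.eval (x j) ≠ 0 := fun j => by
      rw [hPeval]; exact mul_ne_zero (hpx j) hc0i
    have hProots : P.roots = p.roots := by
      rw [hPdef, mul_comm, Polynomial.roots_C_mul _ hc0i]
    set W := Lagrange.nodal (univ : Finset (Fin (m + n + 1))) x with hWdef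
    have hWm : W.Monic := Lagrange.nodal_monic
    have hWdeg : W.natDegree = m + n + 1 := by
      rw [hWdef, Lagrange.natDegree_nodal]; simp
    have hWeval : ∀ z, W.eval z = ∏ j, (z - x j) := fun z => Lagrange.eval_nodal
    have hWx : ∀ j, W.eval (x j) = 0 := fun j => by
      rw [hWeval]
      exact Finset.prod_eq_zero (mem_univ j) (by ring)
    -- coprimality of P and W
    have hcop : IsCoprime P W := by
      rw [← EuclideanDomain.gcd_isUnit_iff]
      by_contra hgu
      have hg0 : EuclideanDomain.gcd P W ≠ 0 := by
        intro h
        exact hWm.ne_zero ((EuclideanDomain.gcd_eq_zero_iff).mp h).2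
      obtain ⟨z, hz⟩ := IsAlgClosed.exists_root (EuclideanDomain.gcd P W) (by
        intro hdeg
        exact hgu (Polynomial.isUnit_iff_degree_eq_zero.mpr hdeg))
      have hdW : (EuclideanDomain.gcd P W) ∣ W := EuclideanDomain.gcd_dvd_right P W
      have hdP : (EuclideanDomain.gcd P W) ∣ P := EuclideanDomain.gcd_dvd_left P W
      obtain ⟨w1, hw1⟩ := hdW
      obtain ⟨w2, hw2⟩ := hdP
      have hWz : W.eval z = 0 := by rw [hw1, eval_mul, hz.eq_zero, zero_mul]
      have hPz : P.eval z = 0 := by rw [hw2, eval_mul, hz.eq_zero, zero_mul]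
      rw [hWeval] at hWz
      obtain ⟨j, _, hj⟩ := Finset.prod_eq_zero_iff.mp hWz
      have hzx : z = x j := by linear_combination hj
      rw [hzx] at hPz
      exact hPevalx j hPz
    obtain ⟨a, b, hab⟩ := hcop
    -- the remainders B k
    set B : ℕ → Polynomial ℂ := fun k => (q * b * X ^ k) %ₘ P with hBdef
    have hPne1 : P ≠ 1 := by
      intro h
      rw [h] at hPdeg
      simp at hPdeg
      omega
    have hBdeg : ∀ k, (B k).natDegree < n := by
      intro k
      simp only [hBdef]
      rw [← hPdeg]
      exact Polynomial.natDegree_modByMonic_lt _ hPm hPne1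
    -- step I : the moments in terms of the coefficients of B k
    have hBt : ∀ k, k + 2 ≤ 2 * n → t k = -(c0⁻¹) * (B k).coeff (n - 1) := by
      intro k hk
      have hdvd1 : P ∣ q * b * X ^ k - B k := dvd_sub_modByMonic _ hPm
      have hdvd : P ∣ q * X ^ k - B k * W := by
        have h1 : q * X ^ k - B k * W
            = (q * X ^ k * a) * P + (q * b * X ^ k - B k) * W := by
          linear_combination (-(q * X ^ k)) * hab
        rw [h1]
        exact dvd_add (Dvd.intro_left _ rfl) (hdvd1.mul_right W)
      obtain ⟨A, hA⟩ := hdvd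
      have hq1 : (q * X ^ k).natDegree ≤ m + k :=
        le_trans natDegree_mul_le (by simp [hqdeg])
      have hAdeg : A.natDegree ≤ m + n := by
        by_cases hA0 : A = 0
        · simp [hA0]
        · have h1 : (P * A).natDegree = n + A.natDegree := by
            rw [Polynomial.natDegree_mul hPm.ne_zero hA0, hPdeg]
          have hq2 : (B k * W).natDegree ≤ (n - 1) + (m + n + 1) :=
            le_trans natDegree_mul_le (by have := hBdeg k; rw [hWdeg]; omega)
          have h2 : (q * X ^ k - B k * W).natDegree ≤ (m + n + 1) + n - 1 := by
            refine le_trans (Polynomial.natDegree_sub_le _ _) ?_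
            rw [max_le_iff]
            constructor <;> omega
          rw [← hA] at h1
          omega
      rw [ht k]
      have hterm : ∀ j, q.eval (x j) / p.eval (x j) * x j ^ k / Wd x j
          = c0⁻¹ * (A.eval (x j) / Wd x j) := by
        intro j
        have he := congrArg (Polynomial.eval (x j)) hA
        simp only [eval_sub, eval_mul, eval_pow, eval_X, hWx j, mul_zero, sub_zero] at he
        rw [hPeval] at he
        have hgoal : q.eval (x j) / p.eval (x j) * x j ^ k = c0⁻¹ * A.eval (x j) := by
          rw [div_mul_eq_mul_div, div_eq_iff (hpx j)]
          linear_combination he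
        rw [div_eq_mul_inv _ (Wd x j), hgoal, div_eq_mul_inv]
        ring
      rw [Finset.sum_congr rfl (fun j _ => hterm j), ← Finset.mul_sum]
      rw [sum_div_Wd x hx A (lt_of_le_of_lt Polynomial.degree_le_natDegree
        (by exact_mod_cast (by omega : A.natDegree < m + n + 1)))]
      -- the top coefficient identity
      have hcoe := congrArg (fun u : Polynomial ℂ => u.coeff (m + 2 * n)) hA
      simp only [Polynomial.coeff_sub] at hcoe
      have hc1 : (q * X ^ k).coeff (m + 2 * n) = 0 :=
        Polynomial.coeff_eq_zero_of_natDegree_lt (lt_of_le_of_lt hq1 (by omega))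
      have hc2 : (B k * W).coeff (m + 2 * n) = (B k).coeff (n - 1) * W.coeff (m + n + 1) := by
        rw [show m + 2 * n = (n - 1) + (m + n + 1) from by omega]
        exact Polynomial.coeff_mul_add_eq_of_natDegree_le (by have := hBdeg k; omega) hWdeg.le
      have hc3 : (P * A).coeff (m + 2 * n) = P.coeff n * A.coeff (m + n) := by
        rw [show m + 2 * n = n + (m + n) from by omega]
        exact Polynomial.coeff_mul_add_eq_of_natDegree_le hPdeg.le hAdeg
      have hWcoeff : W.coeff (m + n + 1) = 1 := by
        have := hWm.coeff_natDegree
        rwa [hWdeg] at this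
      have hPcoeff : P.coeff n = 1 := by
        have := hPm.coeff_natDegree
        rwa [hPdeg] at this
      have hAc : A.coeff (m + n) = -((B k).coeff (n - 1)) := by
        rw [hc1, hc2, hc3, hWcoeff, hPcoeff] at hcoe
        linear_combination -hcoe
      rw [show m + n + 1 - 1 = m + n from by omega, hAc]
      ring
    -- the two matrices
    set T0 : Matrix (Fin n) (Fin n) ℂ :=
      Matrix.of (fun i l : Fin n => ((X ^ ((i : ℕ) + (l : ℕ)) %ₘ P).coeff (n - 1))) with hT0def
    set G : Matrix (Fin n) (Fin n) ℂ :=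
      Matrix.of (fun l j : Fin n => ((q * b * X ^ (j : ℕ)) %ₘ P).coeff (l : ℕ)) with hGdef
    -- Hankel entries factor through T0 * G
    have hB_entry : ∀ i j : Fin n,
        (B ((i : ℕ) + (j : ℕ))).coeff (n - 1) = ∑ l : Fin n, T0 i l * G l j := by
      intro i j
      set R : Polynomial ℂ := (q * b * X ^ (j : ℕ)) %ₘ P with hRdef
      have hRdvd : P ∣ q * b * X ^ (j : ℕ) - R := dvd_sub_modByMonic _ hPm
      have h1 : B ((i : ℕ) + (j : ℕ)) = (X ^ (i : ℕ) * R) %ₘ P := by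
        simp only [hBdef]
        apply _root_.modByMonic_eq_of_dvd_sub hPm
        have h2 : q * b * X ^ ((i : ℕ) + (j : ℕ)) - X ^ (i : ℕ) * R
            = X ^ (i : ℕ) * (q * b * X ^ (j : ℕ) - R) := by
          rw [pow_add]; ring
        rw [h2]
        exact hRdvd.mul_left _
      have hRdeg : R.natDegree < n := hBdeg _
      have hRsum : X ^ (i : ℕ) * R
          = ∑ l : Fin n, C (R.coeff (l : ℕ)) * X ^ ((i : ℕ) + (l : ℕ)) := by
        conv_lhs => rw [Polynomial.as_sum_range' R n hRdeg]
        rw [Finset.mul_sum, ← Fin.sum_univ_eq_sum_range]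
        refine Finset.sum_congr rfl fun l _ => ?_
        rw [← Polynomial.C_mul_X_pow_eq_monomial, pow_add]
        ring
      rw [h1, hRsum]
      have hmod : (∑ l : Fin n, C (R.coeff (l : ℕ)) * X ^ ((i : ℕ) + (l : ℕ))) %ₘ P
          = ∑ l : Fin n, C (R.coeff (l : ℕ)) * (X ^ ((i : ℕ) + (l : ℕ)) %ₘ P) := by
        have hlin : ∀ u : Polynomial ℂ, u %ₘ P = Polynomial.modByMonicHom P u := fun u => rfl
        rw [hlin, map_sum]
        refine Finset.sum_congr rfl fun l _ => ?_
        rw [← hlin, ← Polynomial.smul_eq_C_mul, ← Polynomial.smul_eq_C_mul]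
        rw [hlin, hlin, map_smul]
      rw [hmod, Polynomial.finset_sum_coeff]
      refine Finset.sum_congr rfl fun l _ => ?_
      rw [Polynomial.coeff_C_mul]
      simp only [hT0def, hGdef, hRdef, Matrix.of_apply]
      ring
    -- determinant of T0
    have hdet_T0 : T0.det = (-1 : ℂ) ^ (n * (n - 1) / 2) := by
      refine det_hankel_aux' n hn (fun k => ((X ^ k %ₘ P).coeff (n - 1))) ?_ ?_
      · intro k hkn
        show (X ^ k %ₘ P).coeff (n - 1) = 0
        rw [(Polynomial.modByMonic_eq_self_iff hPm).mpr (by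
          rw [Polynomial.degree_X_pow, Polynomial.degree_eq_natDegree hPm.ne_zero, hPdeg]
          exact_mod_cast (by omega : k < n))]
        rw [Polynomial.coeff_X_pow]
        simp only [if_neg (by omega : ¬ (n - 1 = k))]
      · show (X ^ (n - 1) %ₘ P).coeff (n - 1) = 1
        rw [(Polynomial.modByMonic_eq_self_iff hPm).mpr (by
          rw [Polynomial.degree_X_pow, Polynomial.degree_eq_natDegree hPm.ne_zero, hPdeg]
          exact_mod_cast (by omega : n - 1 < n))]
        rw [Polynomial.coeff_X_pow]
        simp
    -- determinant of G
    have hdet_G : G.det = (P.roots.map (q * b).eval).prod := by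
      set e : Fin n ≃ Fin P.natDegree := finCongr hPdeg.symm with he
      have hecoe : ∀ j : Fin n, ((e j : Fin P.natDegree) : ℕ) = (j : ℕ) := fun j => by
        rw [he, finCongr_apply, Fin.coe_cast]
      have hGsub : G = (Algebra.leftMulMatrix (AdjoinRoot.powerBasis' hPm).basis
          (AdjoinRoot.mk P (q * b))).submatrix e e := by
        ext l j
        erw [Matrix.submatrix_apply, Algebra.leftMulMatrix_eq_repr_mul]
        erw [(AdjoinRoot.powerBasis' hPm).basis_eq_pow]
        have hmul : (AdjoinRoot.mk P) (q * b)
              * (AdjoinRoot.powerBasis' hPm).gen ^ ((e j : Fin P.natDegree) : ℕ)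
            = AdjoinRoot.mk P (q * b * X ^ (j : ℕ)) := by
          rw [hecoe j]
          rw [show (AdjoinRoot.powerBasis' hPm).gen = AdjoinRoot.root P from rfl,
            ← AdjoinRoot.mk_X, ← map_pow, ← map_mul]
        rw [hmul]
        have hrepr : ((AdjoinRoot.powerBasis' hPm).basis.repr
              (AdjoinRoot.mk P (q * b * X ^ (j : ℕ)))) (e l)
            = (AdjoinRoot.modByMonicHom hPm
                (AdjoinRoot.mk P (q * b * X ^ (j : ℕ)))).coeff ((e l : Fin P.natDegree) : ℕ) :=
          rfl
        rw [hrepr, AdjoinRoot.modByMonicHom_mk, hecoe l]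
        simp only [hGdef, Matrix.of_apply]
      rw [hGsub]
      erw [Matrix.det_submatrix_equiv_self e]
      exact det_leftMul_eq_prod P hPm (by omega) (q * b)
    -- evaluate the root products
    have hbWprod : (P.roots.map b.eval).prod * (P.roots.map W.eval).prod = 1 := by
      rw [← Multiset.prod_map_mul]
      have hmap1 : (P.roots.map fun l => b.eval l * W.eval l)
          = P.roots.map fun _ => (1 : ℂ) := by
        refine Multiset.map_congr rfl fun l hl => ?_
        have hPl : P.eval l = 0 := (Polynomial.isRoot_of_mem_roots hl)
        have hev := congrArg (Polynomial.eval l) hab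
        simp only [eval_add, eval_mul, eval_one, hPl, mul_zero, zero_add] at hev
        exact hev
      rw [hmap1]
      simp [Multiset.map_const']
    have hqprod : (P.roots.map (q * b).eval).prod
        = (P.roots.map q.eval).prod * (P.roots.map b.eval).prod := by
      rw [← Multiset.prod_map_mul]
      congr 1
      apply Multiset.map_congr rfl
      intro l _; simp
    have hWprod : (P.roots.map W.eval).prod
        = (-1 : ℂ) ^ (n * (m + n + 1)) * (∏ j, p.eval (x j)) * (c0⁻¹) ^ (m + n + 1) := by
      rw [Multiset.map_congr rfl (fun l _ => hWeval l)]
      rw [multiset_prod_map_finset_prod (univ : Finset (Fin (m + n + 1))) P.roots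
        (fun j l => l - x j)]
      rw [Finset.prod_congr rfl (fun j _ => by
        rw [prod_roots_sub P hPm (x j), hPdeg, hPeval])]
      rw [Finset.prod_mul_distrib, Finset.prod_mul_distrib, Finset.prod_const,
        Finset.prod_const]
      have hcardN : #(univ : Finset (Fin (m + n + 1))) = m + n + 1 := by simp
      rw [hcardN, ← pow_mul]
      ring
    have hWprod_ne : (P.roots.map W.eval).prod ≠ 0 := by
      rw [hWprod]
      exact mul_ne_zero (mul_ne_zero (pow_ne_zero _ (by norm_num))
        (Finset.prod_ne_zero_iff.mpr fun j _ => hpx j)) (pow_ne_zero _ hc0i)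
    have hbprod : (P.roots.map b.eval).prod = ((P.roots.map W.eval).prod)⁻¹ :=
      eq_inv_of_mul_eq_one_left (by rw [mul_comm] at hbWprod ⊢; exact hbWprod)
    -- assemble the determinant
    have hMat : (Matrix.of fun i j : Fin n => t ((i : ℕ) + (j : ℕ)))
        = (-(c0⁻¹)) • (T0 * G) := by
      ext i j
      rw [Matrix.smul_apply, Matrix.of_apply, hBt ((i : ℕ) + (j : ℕ)) (by omega),
        hB_entry i j, Matrix.mul_apply]
      rw [smul_eq_mul]
    have hHdet : Hdet t n = (-(c0⁻¹)) ^ n * (T0.det * G.det) := by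
      rw [Hdet, hMat, Matrix.det_smul, Matrix.det_mul, Fintype.card_fin]
    rw [hHdet, hdet_T0, hdet_G, hqprod, hbprod, hWprod]
    rw [Res, hqdeg, hProots]
    -- final scalar computation
    set Q : ℂ := (p.roots.map q.eval).prod with hQ
    set Rp : ℂ := ∏ j, p.eval (x j) with hRp
    have hRpne : Rp ≠ 0 := Finset.prod_ne_zero_iff.mpr fun j _ => hpx j
    have hinvinv : ((-1 : ℂ) ^ (n * (m + n + 1)) * Rp * (c0⁻¹) ^ (m + n + 1))⁻¹
        = (-1 : ℂ) ^ (n * (m + n + 1)) * Rp⁻¹ * c0 ^ (m + n + 1) := by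
      have hp1 : (((-1 : ℂ) ^ (n * (m + n + 1)))⁻¹) = (-1 : ℂ) ^ (n * (m + n + 1)) := by
        rw [← inv_pow, inv_neg, inv_one]
      rw [mul_inv, mul_inv, hp1, inv_pow, inv_inv]
    rw [hinvinv]
    have hneg : (-(c0⁻¹)) ^ n = (-1 : ℂ) ^ n * (c0⁻¹) ^ n := by
      rw [neg_pow]
    rw [hneg]
    have hsign : (-1 : ℂ) ^ n * (-1 : ℂ) ^ (n * (n - 1) / 2) * (-1 : ℂ) ^ (n * (m + n + 1))
        = (-1 : ℂ) ^ (m * n + n * (n + 1) / 2) := by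
      rw [← pow_add, ← pow_add]
      apply neg_one_pow_congr_aux
      have h1 : n * (m + n + 1) = n * m + n * n + n := by ring
      have hsq : n * n % 2 = n % 2 := by
        rcases Nat.even_or_odd n with hev | hod
        · rw [Nat.even_iff.mp (hev.mul_left n), Nat.even_iff.mp hev]
        · rw [Nat.odd_iff.mp (hod.mul hod), Nat.odd_iff.mp hod]
      have h2 : n * (n + 1) / 2 = n * (n - 1) / 2 + n := by
        have hmm : Even (n * (n - 1)) := by
          rcases Nat.even_or_odd n with hev | hod
          · exact hev.mul_right _
          · have he1 : Even (n - 1) := Nat.even_iff.mpr (by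
              have := Nat.odd_iff.mp hod; omega)
            exact he1.mul_left n
        have h3 : n * (n + 1) = n * (n - 1) + 2 * n := by
          have h5 : n * (n + 1) = n * ((n - 1) + 2) := by congr 1; omega
          rw [h5, Nat.mul_add]
          omega
        rcases hmm with ⟨ee, hee⟩
        omega
      have h4 : m * n % 2 = n * m % 2 := by rw [Nat.mul_comm]
      omega
    have hc0N : (c0 : ℂ) ^ (m + n + 1) = c0 ^ (m + 1) * c0 ^ n := by
      rw [← pow_add]
      congr 1
      omega
    have hcan : (c0⁻¹ : ℂ) ^ n * c0 ^ n = 1 := by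
      rw [← mul_pow, inv_mul_cancel₀ hp0, one_pow]
    rw [hc0N, div_eq_mul_inv]
    linear_combination (Q * Rp⁻¹ * c0 ^ (m + 1) * (c0⁻¹ ^ n * c0 ^ n)) * hsign
      + ((-1:ℂ) ^ (m * n + n * (n + 1) / 2) * Q * Rp⁻¹ * c0 ^ (m + 1)) * hcan
end
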